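/- arXiv:1501.06423 — 3 statements merged into one kernel-verified Lean document; each statement's English description precedes it below -/
import Mathlib

section
/- Let k₁,k₂>0, J_1(z)=k₁/z¹²−k₂/z⁶ for z>0 and +∞ for z≤0, J_2(z):=J_1(2z), J_CB:=J_1+J_2, γ:=(2k₁/k₂)^{1/6}·((1+2^{-12})/(1+2^{-6}))^{1/6}, F(a,b):=J_2(γ+(a+b)/2)+(1/2)J_1(γ+a)+(1/2)J_1(γ+b)−J_CB(γ), and B_γ(r):=(1/2)J_1(γ+r_1)+Σ_{i=1}^∞ F(r_i,r_{i+1}). Then there exists a square-summable real sequence r̄=(r̄_i)_{i≥1}∈ℓ²(ℕ) such that B_γ(r̄) = inf{B_γ(r) : r is a real sequence with r_i→0 as i→∞}; i.e., the infimum over sequences tending to zero is attained by an element of ℓ². -/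
open Filter Finset Set

open scoped ENNReal NNReal

noncomputable section

/-- The Lennard-Jones potential `J₁`, extended by `+∞` on `(-∞,0]`. -/
def LJ1 (k₁ k₂ : ℝ) (z : ℝ) : EReal :=
  if 0 < z then ((k₁ / z ^ 12 - k₂ / z ^ 6 : ℝ) : EReal) else ⊤

/-- The real-valued Lennard-Jones formula. -/
def LJ1r (k₁ k₂ : ℝ) (z : ℝ) : ℝ := k₁ / z ^ 12 - k₂ / z ^ 6

/-- The next-to-nearest neighbour potential `J₂(z) = J₁(2z)`. -/
def LJ2 (k₁ k₂ : ℝ) (z : ℝ) : EReal := LJ1 k₁ k₂ (2 * z)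

/-- The unique minimizer `γ` of `J_CB = J₁ + J₂` for `K = 2`. -/
def gammaNNN (k₁ k₂ : ℝ) : ℝ :=
  (2 * k₁ / k₂) ^ ((1 : ℝ) / 6) *
    ((1 + (2 : ℝ) ^ (-12 : ℤ)) / (1 + (2 : ℝ) ^ (-6 : ℤ))) ^ ((1 : ℝ) / 6)

/-- `J_CB(γ) = J₁(γ) + J₂(γ)` (a real number). -/
def JCBGammaNNN (k₁ k₂ : ℝ) : ℝ :=
  LJ1r k₁ k₂ (gammaNNN k₁ k₂) + LJ1r k₁ k₂ (2 * gammaNNN k₁ k₂)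

/-- `F(a,b) = J₂(γ+(a+b)/2) + ½J₁(γ+a) + ½J₁(γ+b) - J_CB(γ)`. -/
def Fcell (k₁ k₂ : ℝ) (a b : ℝ) : EReal :=
  LJ2 k₁ k₂ (gammaNNN k₁ k₂ + (a + b) / 2) +
    (((1 : ℝ) / 2 : ℝ) : EReal) * LJ1 k₁ k₂ (gammaNNN k₁ k₂ + a) +
    (((1 : ℝ) / 2 : ℝ) : EReal) * LJ1 k₁ k₂ (gammaNNN k₁ k₂ + b) -
    ((JCBGammaNNN k₁ k₂ : ℝ) : EReal)

/-- The boundary-layer functional `B_γ(r) = ½J₁(γ+r₁) + Σ_{i≥1} F(r_i,r_{i+1})`;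
here `r : ℕ → ℝ` with `r i` playing the role of `r_{i+1}`. -/
def Bgam (k₁ k₂ : ℝ) (r : ℕ → ℝ) : EReal :=
  (((1 : ℝ) / 2 : ℝ) : EReal) * LJ1 k₁ k₂ (gammaNNN k₁ k₂ + r 0) +
    ∑' i : ℕ, Fcell k₁ k₂ (r i) (r (i + 1))

namespace BLayer

/-! ### The quadratic profile `Qc` and elementary inequalities -/

/-- Normalized Lennard-Jones profile: `J₁(z) = (k₂/γ⁶) Qc ((γ/z)⁶)`. -/
def Qc (t : ℝ) : ℝ := (2080/4097) * t^2 - t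

lemma Qc_ge_neg_half (t : ℝ) : -(1/2) ≤ Qc t := by
  unfold Qc; nlinarith [sq_nonneg ((4160/4097)*t - 1)]

/-- The main cell inequality, in normalized variables. -/
lemma coreMain {t0 t1 t2 : ℝ} (h0 : 0 ≤ t0) (h1 : 0 ≤ t1) (h2 : 0 ≤ t2)
    (hcon : 128 * t0 ≤ t1 + t2) :
    (1/8) * min 1 ((t1 - 1)^2) ≤ Qc t0 + (1/2) * Qc t1 + (1/2) * Qc t2 + 65/128 := by
  rcases le_or_gt (t1 + t2) 126 with hc | hc
  · have hW : t0 ≤ (t1+t2)/128 := by linarith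
    have hsmall : (2080/4097) * (t0 + (t1+t2)/128) ≤ 1 := by nlinarith
    have hQ0 : Qc ((t1+t2)/128) ≤ Qc t0 := by
      unfold Qc
      nlinarith [mul_nonneg (sub_nonneg.2 hW) (sub_nonneg.2 hsmall)]
    rcases le_total ((t1-1)^2) 1 with hm | hm
    · rw [min_eq_right hm]
      have key : (1/8)*(t1-1)^2 ≤ Qc ((t1+t2)/128) + (1/2)*Qc t1 + (1/2)*Qc t2 + 65/128 := by
        unfold Qc
        nlinarith [sq_nonneg (t1 + t2 - 2), sq_nonneg (t1 - t2), sq_nonneg (2*t1 - 2),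
          sq_nonneg (2*t2 - 2)]
      linarith
    · rw [min_eq_left hm]
      have key : (1/8:ℝ) ≤ Qc ((t1+t2)/128) + (1/2)*Qc t1 + (1/2)*Qc t2 + 65/128 := by
        unfold Qc
        nlinarith [sq_nonneg (t1 + t2 - 2), sq_nonneg (t1 - t2), sq_nonneg (2*t1 - 2),
          sq_nonneg (2*t2 - 2), hm]
      linarith
  · have h3 : (1/8) * min 1 ((t1-1)^2) ≤ 1/8 := by
      have h4 := min_le_left (1:ℝ) ((t1-1)^2)
      have h0' : (0:ℝ) ≤ min 1 ((t1-1)^2) := le_min (by norm_num) (sq_nonneg _)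
      linarith
    have hQ0 : -(1/2:ℝ) ≤ Qc t0 := Qc_ge_neg_half t0
    have hprod : (t1+t2) * 126 ≤ (t1+t2)*(t1+t2) :=
      mul_le_mul_of_nonneg_left hc.le (by linarith)
    have key : (1:ℝ) ≤ (1/2)*Qc t1 + (1/2)*Qc t2 := by
      unfold Qc; nlinarith [sq_nonneg (t1 - t2)]
    linarith

/-- Truncation inequality, big-`b` case. -/
lemma coreT_high {v0 w2 u0 : ℝ} (hv0 : 0 ≤ v0) (hvw : v0 ≤ w2) (hw2 : w2 ≤ 1/64)
    (hu0 : 0 ≤ u0) (hu1 : u0 ≤ 1) :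
    Qc u0 + (1/2) * Qc 1 ≤ Qc v0 + (1/2) * Qc w2 := by
  unfold Qc
  nlinarith [mul_nonneg hu0 (by nlinarith : (0:ℝ) ≤ 1 - (2080/4097)*u0),
    sq_nonneg v0, sq_nonneg w2]

/-- Truncation inequality, very-negative case. -/
lemma coreT_low {v0 w1 u0 : ℝ} (hv0 : 0 ≤ v0) (hw1 : 4096/729 ≤ w1)
    (hu0 : 0 ≤ u0) (hu1 : u0 ≤ 1) :
    Qc u0 + (1/2) * Qc 1 ≤ Qc v0 + (1/2) * Qc w1 := by
  have h1 : (4096/729:ℝ) * w1 ≤ w1 * w1 :=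
    mul_le_mul_of_nonneg_right hw1 (by linarith)
  unfold Qc
  nlinarith [Qc_ge_neg_half v0, mul_nonneg hu0 (by nlinarith : (0:ℝ) ≤ 1 - (2080/4097)*u0),
    sq_nonneg v0]

lemma coreJ_low {w : ℝ} (hw : 4096/729 ≤ w) : Qc 1 ≤ Qc w := by
  unfold Qc
  nlinarith [mul_nonneg (by linarith : (0:ℝ) ≤ w - 1)
    (by linarith : (0:ℝ) ≤ (2080/4097)*(w+1) - 1)]

lemma coreJ_high {w : ℝ} (hw0 : 0 ≤ w) (hw : w ≤ 1/64) : Qc 1 ≤ Qc w := by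
  unfold Qc; nlinarith [sq_nonneg w]

lemma corePos {α : ℝ} (h0 : 0 ≤ α) (h1 : α ≤ 1) : 1 ≤ (1+α)^6 * (1 - (3/4)*α) := by
  have e4 : α^3 ≤ α := by
    calc α^3 ≤ α^1 := pow_le_pow_of_le_one h0 h1 (by norm_num)
    _ = α := pow_one α
  have e1 : α^5 ≤ α^3 := pow_le_pow_of_le_one h0 h1 (by norm_num)
  have e2 : α^6 ≤ α^3 := pow_le_pow_of_le_one h0 h1 (by norm_num)
  have e3 : α^7 ≤ α^3 := pow_le_pow_of_le_one h0 h1 (by norm_num)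
  nlinarith [sq_nonneg α, pow_nonneg h0 3]

lemma coreNeg {α : ℝ} (h0 : -(1/4) ≤ α) (h1 : α ≤ 0) : (1+α)^6 * (1 - (3/4)*α) ≤ 1 := by
  have hb0 : 0 ≤ -α := by linarith
  have hb1 : -α ≤ 1/4 := by linarith
  have h2 : (-α)^2 ≤ (1/4)*(-α) := by nlinarith
  have hp4 : (-α)^4 ≤ (1/4:ℝ)^4 := pow_le_pow_left₀ hb0 hb1 4
  have hp6 : (-α)^6 ≤ (1/4:ℝ)^6 := pow_le_pow_left₀ hb0 hb1 6
  have h5 : (-α)^5 ≤ (1/256)*(-α) := by nlinarith [mul_le_mul_of_nonneg_left hp4 hb0]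
  have h7 : (-α)^7 ≤ (1/4096)*(-α) := by nlinarith [mul_le_mul_of_nonneg_left hp6 hb0]
  have h3 : 0 ≤ (-α)^3 := pow_nonneg hb0 3
  have h6 : 0 ≤ (-α)^6 := pow_nonneg hb0 6
  nlinarith

/-- Quantitative coercivity in normalized variables. -/
lemma coreCoer {α : ℝ} (h0 : -(1/4) ≤ α) (h1 : α ≤ 1) :
    (9/16) * α^2 * ((1+α)^6)^2 ≤ ((1+α)^6 - 1)^2 := by
  have hP : (0:ℝ) < (1+α)^6 := pow_pos (by linarith) 6
  rcases le_or_gt 0 α with hα | hα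
  · have h := corePos hα h1
    have hc : (3/4)*α*(1+α)^6 ≤ (1+α)^6 - 1 := by nlinarith
    have h0c : 0 ≤ (3/4)*α*(1+α)^6 :=
      mul_nonneg (mul_nonneg (by norm_num) hα) hP.le
    nlinarith [mul_self_le_mul_self h0c hc]
  · have h := coreNeg h0 hα.le
    have hc : (3/4)*(-α)*(1+α)^6 ≤ 1 - (1+α)^6 := by nlinarith
    have h0c : 0 ≤ (3/4)*(-α)*(1+α)^6 :=
      mul_nonneg (mul_nonneg (by norm_num) (by linarith)) hP.le
    nlinarith [mul_self_le_mul_self h0c hc]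

/-! ### EReal/ENNReal plumbing -/

/-- Clip an `EReal` to `ℝ≥0∞`. -/
def eNN (x : EReal) : ℝ≥0∞ := if x = ⊤ then ⊤ else ENNReal.ofReal x.toReal

@[simp] lemma eNN_coe (x : ℝ) : eNN (x : EReal) = ENNReal.ofReal x := by
  rw [eNN, if_neg (EReal.coe_ne_top x), EReal.toReal_coe]

@[simp] lemma eNN_top : eNN ⊤ = ⊤ := by rw [eNN, if_pos rfl]

lemma coe_eNN {x : EReal} (hx : 0 ≤ x) : ((eNN x : ℝ≥0∞) : EReal) = x := by
  induction x with
  | bot => exact absurd hx (by simp)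
  | coe r =>
    rw [eNN_coe, EReal.coe_ennreal_ofReal, max_eq_left (EReal.coe_nonneg.1 hx)]
  | top => rw [eNN_top, EReal.coe_ennreal_top]

lemma eNN_coe_ennreal (x : ℝ≥0∞) : eNN ((x : ℝ≥0∞) : EReal) = x := by
  rcases eq_or_ne x ⊤ with rfl | hx
  · rw [EReal.coe_ennreal_top, eNN_top]
  · rw [eNN, if_neg (by simp [EReal.coe_ennreal_eq_top_iff, hx]),
      EReal.toReal_coe_ennreal, ENNReal.ofReal_toReal hx]

lemma eNN_le_eNN {x y : EReal} (hx : 0 ≤ x) (hxy : x ≤ y) : eNN x ≤ eNN y := by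
  rw [← EReal.coe_ennreal_le_coe_ennreal_iff, coe_eNN hx, coe_eNN (hx.trans hxy)]
  exact hxy

/-- Coercion `ℝ≥0∞ → EReal` as an additive monoid hom. -/
def eCoeHom : ℝ≥0∞ →+ EReal :=
  ⟨⟨((↑) : ℝ≥0∞ → EReal), EReal.coe_ennreal_zero⟩, EReal.coe_ennreal_add⟩

@[simp] lemma eCoeHom_apply (x : ℝ≥0∞) : eCoeHom x = (x : EReal) := rfl

lemma tsum_eNN {f : ℕ → EReal} (hf : ∀ i, 0 ≤ f i) :
    ∑' i, f i = ((∑' i, eNN (f i) : ℝ≥0∞) : EReal) := by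
  have h1 : HasSum (fun i => eNN (f i)) (∑' i, eNN (f i)) := ENNReal.summable.hasSum
  have h2 := h1.map eCoeHom continuous_coe_ennreal_ereal
  have h3 : (⇑eCoeHom ∘ fun i => eNN (f i)) = f := by
    funext i
    simp only [Function.comp_apply, eCoeHom_apply]
    exact coe_eNN (hf i)
  rw [h3] at h2
  simpa using h2.tsum_eq

lemma tsum_le_tsum_eNN {f g : ℕ → EReal} (hf : ∀ i, 0 ≤ f i) (hfg : ∀ i, f i ≤ g i) :
    ∑' i, f i ≤ ∑' i, g i := by
  rw [tsum_eNN hf, tsum_eNN (fun i => (hf i).trans (hfg i))]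
  exact EReal.coe_ennreal_le_coe_ennreal_iff.2
    (ENNReal.tsum_le_tsum fun i => eNN_le_eNN (hf i) (hfg i))

lemma ereal_decomp {X : EReal} {c : ℝ} (h : (c : EReal) ≤ X) :
    X = (c : EReal) + ((eNN (X - (c : EReal)) : ℝ≥0∞) : EReal) := by
  induction X with
  | bot => exact absurd (le_bot_iff.1 h) (EReal.coe_ne_bot c)
  | coe v =>
    have hcv : c ≤ v := EReal.coe_le_coe_iff.1 h
    rw [← EReal.coe_sub, eNN_coe, EReal.coe_ennreal_ofReal, max_eq_left (by linarith),
      ← EReal.coe_add]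
    norm_num
  | top =>
    rw [EReal.top_sub_coe, eNN_top, EReal.coe_ennreal_top, EReal.coe_add_top]

/-! ### Structure of `LJ1`, `Fcell`, `Bgam` -/

variable {k₁ k₂ : ℝ}

lemma gamma_pos (hk₁ : 0 < k₁) (hk₂ : 0 < k₂) : 0 < gammaNNN k₁ k₂ := by
  unfold gammaNNN
  have h1 : (0:ℝ) < 2 * k₁ / k₂ := by positivity
  have h2 : (0:ℝ) < (1 + (2 : ℝ) ^ (-12 : ℤ)) / (1 + (2 : ℝ) ^ (-6 : ℤ)) := by positivity
  exact mul_pos (Real.rpow_pos_of_pos h1 _) (Real.rpow_pos_of_pos h2 _)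

lemma k1_eq (hk₁ : 0 < k₁) (hk₂ : 0 < k₂) :
    k₁ = 2080/4097 * k₂ * (gammaNNN k₁ k₂)^6 := by
  have hB : ((1 + (2 : ℝ) ^ (-12 : ℤ)) / (1 + (2 : ℝ) ^ (-6 : ℤ))) = 4097/4160 := by
    norm_num
  have h6 : (gammaNNN k₁ k₂)^6 = (2*k₁/k₂) * (4097/4160) := by
    unfold gammaNNN
    rw [hB, mul_pow, ← Real.rpow_natCast ((2*k₁/k₂) ^ ((1:ℝ)/6)) 6,
      ← Real.rpow_natCast (((4097:ℝ)/4160) ^ ((1:ℝ)/6)) 6,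
      ← Real.rpow_mul (by positivity), ← Real.rpow_mul (by norm_num)]
    norm_num
  have hk₂' : k₂ ≠ 0 := ne_of_gt hk₂
  field_simp at h6
  linarith

lemma LJ1r_eq (hk₁ : 0 < k₁) (hk₂ : 0 < k₂) {z : ℝ} (hz : 0 < z) :
    LJ1r k₁ k₂ z = k₂ / (gammaNNN k₁ k₂)^6 * Qc ((gammaNNN k₁ k₂)^6 / z^6) := by
  have hγ : 0 < gammaNNN k₁ k₂ := gamma_pos hk₁ hk₂
  set g : ℝ := gammaNNN k₁ k₂ with hg
  have hk : k₁ = 2080/4097 * k₂ * g^6 := by rw [hg]; exact k1_eq hk₁ hk₂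
  have hz6 : z^6 ≠ 0 := by positivity
  have hg6 : g^6 ≠ 0 := by positivity
  rw [LJ1r, Qc, hk]
  field_simp

lemma JCB_eq (hk₁ : 0 < k₁) (hk₂ : 0 < k₂) :
    JCBGammaNNN k₁ k₂ = k₂ / (gammaNNN k₁ k₂)^6 * (-(65/128)) := by
  have hγ : 0 < gammaNNN k₁ k₂ := gamma_pos hk₁ hk₂
  have hγ6 : (gammaNNN k₁ k₂)^6 ≠ 0 := by positivity
  rw [JCBGammaNNN, LJ1r_eq hk₁ hk₂ hγ,
    LJ1r_eq hk₁ hk₂ (by linarith : (0:ℝ) < 2 * gammaNNN k₁ k₂)]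
  have e1 : (gammaNNN k₁ k₂)^6 / (gammaNNN k₁ k₂)^6 = 1 := div_self hγ6
  have e2 : (gammaNNN k₁ k₂)^6 / (2 * gammaNNN k₁ k₂)^6 = 1/64 := by
    rw [mul_pow, div_eq_iff (by positivity)]
    ring
  rw [e1, e2, Qc, Qc]
  ring

/-- The real-valued cell energy. -/
def Freal (k₁ k₂ a b : ℝ) : ℝ :=
  LJ1r k₁ k₂ (2 * (gammaNNN k₁ k₂ + (a + b) / 2)) + 1/2 * LJ1r k₁ k₂ (gammaNNN k₁ k₂ + a)
    + 1/2 * LJ1r k₁ k₂ (gammaNNN k₁ k₂ + b) - JCBGammaNNN k₁ k₂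

lemma Freal_eq (hk₁ : 0 < k₁) (hk₂ : 0 < k₂) {a b : ℝ}
    (ha : 0 < gammaNNN k₁ k₂ + a) (hb : 0 < gammaNNN k₁ k₂ + b) :
    Freal k₁ k₂ a b = k₂ / (gammaNNN k₁ k₂)^6 *
      (Qc ((gammaNNN k₁ k₂)^6 / ((gammaNNN k₁ k₂ + a) + (gammaNNN k₁ k₂ + b))^6)
        + 1/2 * Qc ((gammaNNN k₁ k₂)^6 / (gammaNNN k₁ k₂ + a)^6)
        + 1/2 * Qc ((gammaNNN k₁ k₂)^6 / (gammaNNN k₁ k₂ + b)^6) + 65/128) := by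
  have e : 2 * (gammaNNN k₁ k₂ + (a + b) / 2)
      = (gammaNNN k₁ k₂ + a) + (gammaNNN k₁ k₂ + b) := by ring
  rw [Freal, e, LJ1r_eq hk₁ hk₂ (by linarith), LJ1r_eq hk₁ hk₂ ha, LJ1r_eq hk₁ hk₂ hb,
    JCB_eq hk₁ hk₂]
  ring

lemma Freal_ge (hk₁ : 0 < k₁) (hk₂ : 0 < k₂) {a b : ℝ}
    (ha : 0 < gammaNNN k₁ k₂ + a) (hb : 0 < gammaNNN k₁ k₂ + b) :
    k₂ / (gammaNNN k₁ k₂)^6 *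
      ((1/8) * min 1 (((gammaNNN k₁ k₂)^6 / (gammaNNN k₁ k₂ + a)^6 - 1)^2))
      ≤ Freal k₁ k₂ a b := by
  have hγ : 0 < gammaNNN k₁ k₂ := gamma_pos hk₁ hk₂
  set γ : ℝ := gammaNNN k₁ k₂
  set x : ℝ := γ + a with hx
  set y : ℝ := γ + b with hy
  have hx0 : 0 < x := ha
  have hy0 : 0 < y := hb
  have hxy : 0 < x + y := by linarith
  have key : 128 * ((x^3*y^3) * (x^3*y^3)) ≤ (x+y)^6 * (x^6+y^6) := by
    have h2 : 4*(x*y) ≤ (x+y)^2 := by nlinarith [sq_nonneg (x-y)]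
    have h2' : (4*(x*y))^3 ≤ ((x+y)^2)^3 := pow_le_pow_left₀ (by positivity) h2 3
    have h3 : 2*(x^3*y^3) ≤ x^6+y^6 := by nlinarith [sq_nonneg (x^3-y^3)]
    nlinarith [mul_le_mul h2' h3 (by positivity) (by positivity)]
  have hcon : 128 * (γ^6/(x+y)^6) ≤ γ^6/x^6 + γ^6/y^6 := by
    have e1 : γ^6/x^6 + γ^6/y^6 = γ^6 * (x^6+y^6) / (x^6*y^6) := by
      field_simp
      ring
    rw [e1, show 128 * (γ^6/(x+y)^6) = 128*γ^6/(x+y)^6 from by ring,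
      div_le_div_iff₀ (by positivity) (by positivity)]
    nlinarith [mul_le_mul_of_nonneg_left key (by positivity : (0:ℝ) ≤ γ^6)]
  have hmain := coreMain (t0 := γ^6/(x+y)^6) (t1 := γ^6/x^6) (t2 := γ^6/y^6)
    (by positivity) (by positivity) (by positivity) hcon
  rw [Freal_eq hk₁ hk₂ ha hb]
  have hc : (0:ℝ) ≤ k₂/γ^6 := by positivity
  exact mul_le_mul_of_nonneg_left hmain hc

/-! Basic structure lemmas for `Fcell`. -/

lemma LJ1_ne_bot (z : ℝ) : LJ1 k₁ k₂ z ≠ ⊥ := by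
  rw [LJ1]
  split
  · exact EReal.coe_ne_bot _
  · simp

lemma halfLJ1_ne_bot (z : ℝ) : (((1:ℝ)/2 : ℝ) : EReal) * LJ1 k₁ k₂ z ≠ ⊥ := by
  rw [LJ1]
  split
  · rw [← EReal.coe_mul]; exact EReal.coe_ne_bot _
  · rw [EReal.coe_mul_top_of_pos (by norm_num)]; simp

lemma LJ2_ne_bot (z : ℝ) : LJ2 k₁ k₂ z ≠ ⊥ := LJ1_ne_bot _

lemma Fcell_top_left {a : ℝ} (ha : gammaNNN k₁ k₂ + a ≤ 0) (b : ℝ) : Fcell k₁ k₂ a b = ⊤ := by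
  rw [Fcell]
  rw [show LJ1 k₁ k₂ (gammaNNN k₁ k₂ + a) = ⊤ from by rw [LJ1, if_neg (not_lt.2 ha)]]
  rw [EReal.coe_mul_top_of_pos (by norm_num), EReal.add_top_of_ne_bot (LJ2_ne_bot _),
    EReal.top_add_of_ne_bot (halfLJ1_ne_bot _), EReal.top_sub_coe]

lemma Fcell_top_right {b : ℝ} (hb : gammaNNN k₁ k₂ + b ≤ 0) (a : ℝ) : Fcell k₁ k₂ a b = ⊤ := by
  rw [Fcell]
  rw [show LJ1 k₁ k₂ (gammaNNN k₁ k₂ + b) = ⊤ from by rw [LJ1, if_neg (not_lt.2 hb)]]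
  have h1 : LJ2 k₁ k₂ (gammaNNN k₁ k₂ + (a + b) / 2) +
      (((1:ℝ)/2 : ℝ) : EReal) * LJ1 k₁ k₂ (gammaNNN k₁ k₂ + a) ≠ ⊥ := by
    rw [Ne, EReal.add_eq_bot_iff]
    push_neg
    exact ⟨LJ1_ne_bot _, halfLJ1_ne_bot _⟩
  rw [EReal.coe_mul_top_of_pos (by norm_num), EReal.add_top_of_ne_bot h1, EReal.top_sub_coe]

lemma Fcell_coe (hk₁ : 0 < k₁) (hk₂ : 0 < k₂) {a b : ℝ}
    (ha : 0 < gammaNNN k₁ k₂ + a) (hb : 0 < gammaNNN k₁ k₂ + b) :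
    Fcell k₁ k₂ a b = ((Freal k₁ k₂ a b : ℝ) : EReal) := by
  have hab : 0 < 2 * (gammaNNN k₁ k₂ + (a + b) / 2) := by linarith
  rw [Fcell, LJ2, LJ1, LJ1, LJ1, if_pos hab, if_pos ha, if_pos hb,
    ← EReal.coe_mul, ← EReal.coe_mul, ← EReal.coe_add, ← EReal.coe_add, ← EReal.coe_sub]
  rfl

lemma Fcell_symm (k₁ k₂ a b : ℝ) : Fcell k₁ k₂ a b = Fcell k₁ k₂ b a := by
  rw [Fcell, Fcell, add_comm b a, add_right_comm]

lemma Fcell_nonneg (hk₁ : 0 < k₁) (hk₂ : 0 < k₂) (a b : ℝ) :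
    (0 : EReal) ≤ Fcell k₁ k₂ a b := by
  rcases le_or_gt (gammaNNN k₁ k₂ + a) 0 with ha | ha
  · rw [Fcell_top_left ha]; exact le_top
  rcases le_or_gt (gammaNNN k₁ k₂ + b) 0 with hb | hb
  · rw [Fcell_top_right hb]; exact le_top
  rw [Fcell_coe hk₁ hk₂ ha hb]
  refine EReal.coe_nonneg.2 (le_trans ?_ (Freal_ge hk₁ hk₂ ha hb))
  have h0 : (0:ℝ) ≤ min 1 (((gammaNNN k₁ k₂)^6 / (gammaNNN k₁ k₂ + a)^6 - 1)^2) :=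
    le_min (by norm_num) (sq_nonneg _)
  have hγ : 0 < gammaNNN k₁ k₂ := gamma_pos hk₁ hk₂
  positivity

/-- Coercivity: each cell controls the square of its first variable. -/
lemma Fcell_coer (hk₁ : 0 < k₁) (hk₂ : 0 < k₂) {a : ℝ}
    (ha1 : -(gammaNNN k₁ k₂/4) ≤ a) (ha2 : a ≤ gammaNNN k₁ k₂) (b : ℝ) :
    ((9/128 * (k₂ / (gammaNNN k₁ k₂)^8) * a^2 : ℝ) : EReal) ≤ Fcell k₁ k₂ a b := by
  have hγ : 0 < gammaNNN k₁ k₂ := gamma_pos hk₁ hk₂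
  set γ : ℝ := gammaNNN k₁ k₂
  have ha : 0 < γ + a := by linarith
  rcases le_or_gt (γ + b) 0 with hb | hb
  · rw [Fcell_top_right hb]; exact le_top
  rw [Fcell_coe hk₁ hk₂ ha hb]
  apply EReal.coe_le_coe_iff.2
  refine le_trans ?_ (Freal_ge hk₁ hk₂ ha hb)
  set α : ℝ := a / γ with hα
  have hα1 : -(1/4) ≤ α := by
    rw [hα, le_div_iff₀ hγ]
    nlinarith
  have hα2 : α ≤ 1 := by
    rw [hα, div_le_one hγ]
    linarith
  have hγa : γ + a = γ * (1 + α) := by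
    rw [hα]
    field_simp
  have hP : (0:ℝ) < (1+α)^6 := pow_pos (by linarith) 6
  have ht1 : γ^6 / (γ + a)^6 = 1 / (1+α)^6 := by
    rw [hγa, mul_pow, div_eq_div_iff (by positivity) (by positivity)]
    ring
  have hsq : (9/16) * α^2 ≤ (γ^6 / (γ + a)^6 - 1)^2 := by
    rw [ht1]
    have hcc := coreCoer hα1 hα2
    have e : 1 / (1+α)^6 - 1 = (1 - (1+α)^6) / (1+α)^6 := by
      rw [div_sub_one hP.ne']
    rw [e, div_pow (1 - (1+α)^6) ((1+α)^6) 2, le_div_iff₀ (pow_pos hP 2)]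
    nlinarith [hcc]
  have hone : (9/16) * α^2 ≤ 1 := by nlinarith [sq_nonneg (α-1), sq_nonneg (α+1)]
  have hmin : (9/16) * α^2 ≤ min 1 ((γ^6 / (γ + a)^6 - 1)^2) := le_min hone hsq
  have e2 : (9:ℝ)/128 * (k₂/γ^8) * a^2 = k₂/γ^6 * ((1/8) * ((9/16) * α^2)) := by
    rw [hα]
    field_simp
    ring
  rw [e2]
  apply mul_le_mul_of_nonneg_left _ (by positivity)
  have := min_le_left (1:ℝ) ((γ^6 / (γ + a)^6 - 1)^2)
  linarith [hmin]

/-! ### Truncation -/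

/-- Truncation to the window `(-γ/4, γ)`. -/
def Tr (g x : ℝ) : ℝ := if -(g/4) < x ∧ x < g then x else 0

lemma Tr_mem {g : ℝ} (hg : 0 ≤ g) (x : ℝ) : -(g/4) ≤ Tr g x ∧ Tr g x ≤ g := by
  rw [Tr]
  split_ifs with h
  · exact ⟨h.1.le, h.2.le⟩
  · constructor
    · linarith
    · linarith

lemma Freal_trunc_right (hk₁ : 0 < k₁) (hk₂ : 0 < k₂) {a b : ℝ}
    (ha : 0 < gammaNNN k₁ k₂ + a) (hb : 0 < gammaNNN k₁ k₂ + b)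
    (hout : ¬(-(gammaNNN k₁ k₂/4) < b ∧ b < gammaNNN k₁ k₂)) :
    Freal k₁ k₂ a 0 ≤ Freal k₁ k₂ a b := by
  have hγ : 0 < gammaNNN k₁ k₂ := gamma_pos hk₁ hk₂
  set γ : ℝ := gammaNNN k₁ k₂
  have hγ6 : (0:ℝ) < γ^6 := by positivity
  have h0 : 0 < γ + (0:ℝ) := by linarith
  rw [Freal_eq hk₁ hk₂ ha hb, Freal_eq hk₁ hk₂ ha h0]
  have e0 : γ^6/(γ + (0:ℝ))^6 = 1 := by
    rw [add_zero]
    exact div_self (ne_of_gt hγ6)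
  rw [e0]
  have hu1 : γ^6/((γ+a) + (γ+0))^6 ≤ 1 := by
    rw [div_le_one (by positivity)]
    apply pow_le_pow_left₀ hγ.le (by linarith)
  have hu0 : (0:ℝ) ≤ γ^6/((γ+a) + (γ+0))^6 := by positivity
  have hv0 : (0:ℝ) ≤ γ^6/((γ+a) + (γ+b))^6 := by positivity
  have hcore : Qc (γ^6/((γ+a) + (γ+0))^6) + 1/2 * Qc 1
      ≤ Qc (γ^6/((γ+a) + (γ+b))^6) + 1/2 * Qc (γ^6/(γ+b)^6) := by
    rw [not_and_or, not_lt, not_lt] at hout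
    rcases hout with hlow | hhigh
    · have hw1 : (4096:ℝ)/729 ≤ γ^6/(γ+b)^6 := by
        rw [le_div_iff₀ (by positivity)]
        have h6 : (γ+b)^6 ≤ (3/4*γ)^6 := pow_le_pow_left₀ hb.le (by linarith) 6
        nlinarith [h6]
      exact coreT_low hv0 hw1 hu0 hu1
    · have hvw : γ^6/((γ+a) + (γ+b))^6 ≤ γ^6/(γ+b)^6 :=
        div_le_div_of_nonneg_left (by positivity) (by positivity)
          (pow_le_pow_left₀ hb.le (by linarith) 6)
      have hw2 : γ^6/(γ+b)^6 ≤ 1/64 := by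
        rw [div_le_div_iff₀ (by positivity) (by norm_num)]
        have h6 : (2*γ)^6 ≤ (γ+b)^6 := pow_le_pow_left₀ (by linarith) (by linarith) 6
        nlinarith [h6]
      exact coreT_high hv0 hvw hw2 hu0 hu1
  have hc : (0:ℝ) ≤ k₂/γ^6 := by positivity
  nlinarith [mul_le_mul_of_nonneg_left hcore hc]

lemma Fcell_trunc_right (hk₁ : 0 < k₁) (hk₂ : 0 < k₂) {b : ℝ}
    (hout : ¬(-(gammaNNN k₁ k₂/4) < b ∧ b < gammaNNN k₁ k₂)) (a : ℝ) :
    Fcell k₁ k₂ a 0 ≤ Fcell k₁ k₂ a b := by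
  have hγ : 0 < gammaNNN k₁ k₂ := gamma_pos hk₁ hk₂
  rcases le_or_gt (gammaNNN k₁ k₂ + b) 0 with hb | hb
  · rw [Fcell_top_right hb]; exact le_top
  rcases le_or_gt (gammaNNN k₁ k₂ + a) 0 with ha | ha
  · rw [Fcell_top_left ha, Fcell_top_left ha]
  · rw [Fcell_coe hk₁ hk₂ ha hb,
      Fcell_coe hk₁ hk₂ ha (by linarith : 0 < gammaNNN k₁ k₂ + (0:ℝ))]
    exact EReal.coe_le_coe_iff.2 (Freal_trunc_right hk₁ hk₂ ha hb hout)

lemma Fcell_trunc_left (hk₁ : 0 < k₁) (hk₂ : 0 < k₂) {a : ℝ}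
    (hout : ¬(-(gammaNNN k₁ k₂/4) < a ∧ a < gammaNNN k₁ k₂)) (b : ℝ) :
    Fcell k₁ k₂ 0 b ≤ Fcell k₁ k₂ a b := by
  rw [Fcell_symm k₁ k₂ 0 b, Fcell_symm k₁ k₂ a b]
  exact Fcell_trunc_right hk₁ hk₂ hout b

lemma Fcell_trunc (hk₁ : 0 < k₁) (hk₂ : 0 < k₂) (a b : ℝ) :
    Fcell k₁ k₂ (Tr (gammaNNN k₁ k₂) a) (Tr (gammaNNN k₁ k₂) b) ≤ Fcell k₁ k₂ a b := by
  by_cases ha : -(gammaNNN k₁ k₂/4) < a ∧ a < gammaNNN k₁ k₂ <;>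
    by_cases hb : -(gammaNNN k₁ k₂/4) < b ∧ b < gammaNNN k₁ k₂
  · rw [Tr, if_pos ha, Tr, if_pos hb]
  · rw [Tr, if_pos ha, Tr, if_neg hb]
    exact Fcell_trunc_right hk₁ hk₂ hb a
  · rw [Tr, if_neg ha, Tr, if_pos hb]
    exact Fcell_trunc_left hk₁ hk₂ ha b
  · rw [Tr, if_neg ha, Tr, if_neg hb]
    calc Fcell k₁ k₂ 0 0 ≤ Fcell k₁ k₂ a 0 := Fcell_trunc_left hk₁ hk₂ ha 0
      _ ≤ Fcell k₁ k₂ a b := Fcell_trunc_right hk₁ hk₂ hb a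

lemma halfLJ1_trunc (hk₁ : 0 < k₁) (hk₂ : 0 < k₂) {c : ℝ}
    (hout : ¬(-(gammaNNN k₁ k₂/4) < c ∧ c < gammaNNN k₁ k₂)) :
    (((1:ℝ)/2 : ℝ) : EReal) * LJ1 k₁ k₂ (gammaNNN k₁ k₂ + 0)
      ≤ (((1:ℝ)/2 : ℝ) : EReal) * LJ1 k₁ k₂ (gammaNNN k₁ k₂ + c) := by
  have hγ : 0 < gammaNNN k₁ k₂ := gamma_pos hk₁ hk₂
  set γ : ℝ := gammaNNN k₁ k₂
  have hγ6 : (0:ℝ) < γ^6 := by positivity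
  rcases le_or_gt (γ + c) 0 with hc | hc
  · rw [show LJ1 k₁ k₂ (γ + c) = ⊤ from by rw [LJ1, if_neg (not_lt.2 hc)],
      EReal.coe_mul_top_of_pos (by norm_num)]
    exact le_top
  · rw [LJ1, LJ1, if_pos (by linarith : 0 < γ + (0:ℝ)), if_pos hc,
      ← EReal.coe_mul, ← EReal.coe_mul]
    apply EReal.coe_le_coe_iff.2
    have h1 : (k₁ / (γ+0) ^ 12 - k₂ / (γ+0) ^ 6 : ℝ) = LJ1r k₁ k₂ (γ+0) := rfl
    have h2 : (k₁ / (γ+c) ^ 12 - k₂ / (γ+c) ^ 6 : ℝ) = LJ1r k₁ k₂ (γ+c) := rfl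
    rw [h1, h2, LJ1r_eq hk₁ hk₂ (by linarith : 0 < γ + (0:ℝ)), LJ1r_eq hk₁ hk₂ hc]
    have e0 : γ^6/(γ + (0:ℝ))^6 = 1 := by
      rw [add_zero]; exact div_self (ne_of_gt hγ6)
    rw [e0]
    have hcore : Qc 1 ≤ Qc (γ^6/(γ+c)^6) := by
      rw [not_and_or, not_lt, not_lt] at hout
      rcases hout with hlow | hhigh
      · apply coreJ_low
        rw [le_div_iff₀ (by positivity)]
        have h6 : (γ+c)^6 ≤ (3/4*γ)^6 := pow_le_pow_left₀ hc.le (by linarith) 6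
        nlinarith [h6]
      · apply coreJ_high (by positivity)
        rw [div_le_div_iff₀ (by positivity) (by norm_num)]
        have h6 : (2*γ)^6 ≤ (γ+c)^6 := pow_le_pow_left₀ (by linarith) (by linarith) 6
        nlinarith [h6]
    have hcpos : (0:ℝ) ≤ k₂/γ^6 := by positivity
    nlinarith [mul_le_mul_of_nonneg_left hcore hcpos]

lemma Bgam_trunc (hk₁ : 0 < k₁) (hk₂ : 0 < k₂) (r : ℕ → ℝ) :
    Bgam k₁ k₂ (fun i => Tr (gammaNNN k₁ k₂) (r i)) ≤ Bgam k₁ k₂ r := by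
  rw [Bgam, Bgam]
  apply add_le_add
  · by_cases h : -(gammaNNN k₁ k₂/4) < r 0 ∧ r 0 < gammaNNN k₁ k₂
    · rw [show Tr (gammaNNN k₁ k₂) (r 0) = r 0 from by rw [Tr, if_pos h]]
    · rw [show Tr (gammaNNN k₁ k₂) (r 0) = 0 from by rw [Tr, if_neg h]]
      exact halfLJ1_trunc hk₁ hk₂ h
  · exact tsum_le_tsum_eNN (fun i => Fcell_nonneg hk₁ hk₂ _ _)
      (fun i => Fcell_trunc hk₁ hk₂ (r i) (r (i+1)))

/-! ### Decomposition of `Bgam` into a constant plus an `ℝ≥0∞` part -/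

/-- Uniform lower bound for `½ J₁`. -/
def Lb (k₁ k₂ : ℝ) : ℝ := -(k₂^2/(8*k₁))

lemma halfLJ1_ge (hk₁ : 0 < k₁) (hk₂ : 0 < k₂) (z : ℝ) :
    ((Lb k₁ k₂ : ℝ) : EReal) ≤ (((1:ℝ)/2 : ℝ) : EReal) * LJ1 k₁ k₂ z := by
  rw [LJ1]
  split
  · rename_i hz
    rw [← EReal.coe_mul]
    apply EReal.coe_le_coe_iff.2
    have hz6 : (0:ℝ) < z^6 := by positivity
    have hz12 : (0:ℝ) < z^12 := by positivity
    have e : k₁/z^12 - k₂/z^6 + 2*(k₂^2/(8*k₁)) = (k₁/z^6 - k₂/2)^2 / k₁ := by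
      field_simp
      ring
    have h2 : (0:ℝ) ≤ (k₁/z^6 - k₂/2)^2 / k₁ := by positivity
    rw [Lb]
    nlinarith [e, h2]
  · rw [EReal.coe_mul_top_of_pos (by norm_num)]
    exact le_top

def h0E (k₁ k₂ : ℝ) (r : ℕ → ℝ) : ℝ≥0∞ :=
  eNN ((((1:ℝ)/2 : ℝ) : EReal) * LJ1 k₁ k₂ (gammaNNN k₁ k₂ + r 0) - ((Lb k₁ k₂ : ℝ) : EReal))

def gE (k₁ k₂ : ℝ) (r : ℕ → ℝ) (i : ℕ) : ℝ≥0∞ :=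
  (if i = 0 then h0E k₁ k₂ r else 0) + eNN (Fcell k₁ k₂ (r i) (r (i + 1)))

lemma Bgam_decomp (hk₁ : 0 < k₁) (hk₂ : 0 < k₂) (r : ℕ → ℝ) :
    Bgam k₁ k₂ r = ((Lb k₁ k₂ : ℝ) : EReal) + ((∑' i, gE k₁ k₂ r i : ℝ≥0∞) : EReal) := by
  have hsplit : (∑' i, gE k₁ k₂ r i)
      = h0E k₁ k₂ r + ∑' i, eNN (Fcell k₁ k₂ (r i) (r (i+1))) := by
    unfold gE
    rw [ENNReal.tsum_add]
    congr 1
    exact tsum_ite_eq 0 (fun _ => h0E k₁ k₂ r)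
  rw [Bgam, tsum_eNN (fun i => Fcell_nonneg hk₁ hk₂ _ _), hsplit, EReal.coe_ennreal_add]
  rw [ereal_decomp (halfLJ1_ge hk₁ hk₂ (gammaNNN k₁ k₂ + r 0))]
  rw [add_assoc]
  rfl

lemma Bgam_ge (hk₁ : 0 < k₁) (hk₂ : 0 < k₂) (r : ℕ → ℝ) :
    ((Lb k₁ k₂ : ℝ) : EReal) ≤ Bgam k₁ k₂ r := by
  rw [Bgam_decomp hk₁ hk₂ r]
  exact le_add_of_nonneg_right (EReal.coe_ennreal_nonneg _)

lemma h0E_eq (hk₁ : 0 < k₁) (hk₂ : 0 < k₂) {r : ℕ → ℝ} (h : 0 < gammaNNN k₁ k₂ + r 0) :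
    h0E k₁ k₂ r = ENNReal.ofReal (1/2 * LJ1r k₁ k₂ (gammaNNN k₁ k₂ + r 0) - Lb k₁ k₂) := by
  rw [h0E, LJ1, if_pos h, ← EReal.coe_mul, ← EReal.coe_sub, eNN_coe]
  rfl

end BLayer

/-- the infimum of `B_γ` over sequences tending to `0` is attained by a
square-summable sequence `r̄ ∈ ℓ²(ℕ)`. -/
theorem boundary_layer_minimizer_exists (k₁ k₂ : ℝ) (hk₁ : 0 < k₁) (hk₂ : 0 < k₂) :
    ∃ rbar : ℕ → ℝ, Memℓp rbar 2 ∧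
      Bgam k₁ k₂ rbar = sInf {y : EReal | ∃ r : ℕ → ℝ,
        Filter.Tendsto r Filter.atTop (nhds 0) ∧ y = Bgam k₁ k₂ r} := by
  classical
  have hγ : 0 < gammaNNN k₁ k₂ := BLayer.gamma_pos hk₁ hk₂
  set γ : ℝ := gammaNNN k₁ k₂ with hγdef
  set SS : Set EReal := {y : EReal | ∃ r : ℕ → ℝ,
      Filter.Tendsto r Filter.atTop (nhds 0) ∧ y = Bgam k₁ k₂ r} with hSS
  set m : EReal := sInf SS with hmdef
  -- the zero sequence is admissible and has finite energy
  have hB0mem : Bgam k₁ k₂ (fun _ => 0) ∈ SS := ⟨(fun _ => 0), tendsto_const_nhds, rfl⟩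
  have hF00 : Fcell k₁ k₂ 0 0 = ((BLayer.Freal k₁ k₂ 0 0 : ℝ) : EReal) :=
    BLayer.Fcell_coe hk₁ hk₂ (by linarith) (by linarith)
  have hFr00 : BLayer.Freal k₁ k₂ 0 0 = 0 := by
    rw [BLayer.Freal]
    rw [show 2 * (gammaNNN k₁ k₂ + ((0:ℝ) + 0)/2) = 2 * gammaNNN k₁ k₂ from by ring, add_zero]
    rw [JCBGammaNNN]
    ring
  have htsum0 : (∑' (i:ℕ), Fcell k₁ k₂ ((fun _ => (0:ℝ)) i) ((fun _ => (0:ℝ)) (i+1)))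
      = (0 : EReal) := by
    rw [tsum_congr (fun i => show Fcell k₁ k₂ 0 0 = (0:EReal) from by
      rw [hF00, hFr00, EReal.coe_zero])]
    exact tsum_zero
  have hB0ne : Bgam k₁ k₂ (fun _ => 0) ≠ ⊤ := by
    rw [Bgam, htsum0, add_zero, LJ1, if_pos (show (0:ℝ) < γ + (fun _ => (0:ℝ)) 0 by
      simpa using hγ), ← EReal.coe_mul]
    exact EReal.coe_ne_top _
  -- basic facts about the infimum
  have hmle : m ≤ Bgam k₁ k₂ (fun _ => 0) := sInf_le hB0mem
  have hmtop : m ≠ ⊤ := ne_top_of_le_ne_top hB0ne hmle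
  have hmge : ((BLayer.Lb k₁ k₂ : ℝ) : EReal) ≤ m := by
    apply le_sInf
    rintro y ⟨r, -, rfl⟩
    exact BLayer.Bgam_ge hk₁ hk₂ r
  have hmbot : m ≠ ⊥ := by
    intro h
    rw [h, le_bot_iff] at hmge
    exact EReal.coe_ne_bot _ hmge
  set mr : ℝ := m.toReal with hmrdef
  have hmr : (mr : EReal) = m := EReal.coe_toReal hmtop hmbot
  have hLbmr : BLayer.Lb k₁ k₂ ≤ mr := EReal.coe_le_coe_iff.1 (by rw [hmr]; exact hmge)
  -- a minimizing sequence, truncated into the window [-γ/4, γ]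
  have hex : ∀ n : ℕ, ∃ r : ℕ → ℝ, Tendsto r atTop (nhds 0) ∧
      Bgam k₁ k₂ r < ((mr + 1/((n:ℝ)+1) : ℝ) : EReal) := by
    intro n
    have hlt : m < ((mr + 1/((n:ℝ)+1) : ℝ) : EReal) := by
      rw [← hmr]
      apply EReal.coe_lt_coe_iff.2
      have h1 : (0:ℝ) < 1/((n:ℝ)+1) := by positivity
      linarith
    obtain ⟨y, hyS, hy⟩ := sInf_lt_iff.1 hlt
    obtain ⟨r, hr1, rfl⟩ := hyS
    exact ⟨r, hr1, hy⟩
  choose r0 hr0a hr0b using hex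
  set s : ℕ → ℕ → ℝ := fun n i => BLayer.Tr γ (r0 n i) with hsdef
  have hsmem : ∀ n i, -(γ/4) ≤ s n i ∧ s n i ≤ γ := fun n i => BLayer.Tr_mem hγ.le _
  have hslt : ∀ n, Bgam k₁ k₂ (s n) ≤ ((mr + 1/((n:ℝ)+1) : ℝ) : EReal) :=
    fun n => le_trans (BLayer.Bgam_trunc hk₁ hk₂ (r0 n)) (hr0b n).le
  -- compactness: extract a pointwise convergent subsequence
  have hseq : IsSeqCompact (univ : Set (ℕ → (Icc (-(γ/4)) γ))) := isCompact_univ.isSeqCompact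
  set u : ℕ → (ℕ → (Icc (-(γ/4)) γ)) := fun n i => ⟨s n i, (hsmem n i).1, (hsmem n i).2⟩
    with hudef
  obtain ⟨U, -, φ, hφ, hUt⟩ := hseq (fun n => mem_univ (u n))
  set rbar : ℕ → ℝ := fun i => (U i : ℝ) with hrbardef
  have hrmem : ∀ i, -(γ/4) ≤ rbar i ∧ rbar i ≤ γ := fun i => ⟨(U i).2.1, (U i).2.2⟩
  have hconv : ∀ i, Tendsto (fun n => s (φ n) i) atTop (nhds (rbar i)) := by
    intro i
    have h1 : Tendsto (fun n => (u ∘ φ) n i) atTop (nhds (U i)) := tendsto_pi_nhds.1 hUt i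
    exact (continuous_subtype_val.tendsto (U i)).comp h1
  have hrpos : ∀ i, 0 < γ + rbar i := fun i => by have := (hrmem i).1; linarith
  have hspos : ∀ n i, 0 < γ + s n i := fun n i => by have := (hsmem n i).1; linarith
  -- continuity of the real cell energy along the subsequence
  have hLJcont : ∀ z : ℝ, z ≠ 0 → ContinuousAt (LJ1r k₁ k₂) z := by
    intro z hz
    unfold LJ1r
    exact (continuousAt_const.div ((continuous_pow 12).continuousAt)
        (pow_ne_zero 12 hz)).sub
      (continuousAt_const.div ((continuous_pow 6).continuousAt) (pow_ne_zero 6 hz))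
  have hFrealtend : ∀ i : ℕ,
      Tendsto (fun n => BLayer.Freal k₁ k₂ (s (φ n) i) (s (φ n) (i+1))) atTop
        (nhds (BLayer.Freal k₁ k₂ (rbar i) (rbar (i+1)))) := by
    intro i
    have hA := hconv i
    have hB := hconv (i+1)
    have harg1 : Tendsto (fun n => 2*(γ + (s (φ n) i + s (φ n) (i+1))/2)) atTop
        (nhds (2*(γ + (rbar i + rbar (i+1))/2))) :=
      (tendsto_const_nhds.add ((hA.add hB).div_const 2)).const_mul 2
    have hg2 : (0:ℝ) < 2*(γ + (rbar i + rbar (i+1))/2) := by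
      have := (hrmem i).1; have := (hrmem (i+1)).1; linarith
    have h1 := ((hLJcont _ (ne_of_gt hg2)).tendsto).comp harg1
    have h2 := ((hLJcont _ (ne_of_gt (hrpos i))).tendsto).comp
      (tendsto_const_nhds.add hA : Tendsto (fun n => γ + s (φ n) i) atTop (nhds (γ + rbar i)))
    have h3 := ((hLJcont _ (ne_of_gt (hrpos (i+1)))).tendsto).comp
      (tendsto_const_nhds.add hB :
        Tendsto (fun n => γ + s (φ n) (i+1)) atTop (nhds (γ + rbar (i+1))))
    unfold BLayer.Freal
    exact ((h1.add (h2.const_mul (1/2))).add (h3.const_mul (1/2))).sub tendsto_const_nhds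
  -- convergence of the ℝ≥0∞ cell energies
  have heF : ∀ (a b : ℝ), 0 < γ + a → 0 < γ + b →
      BLayer.eNN (Fcell k₁ k₂ a b) = ENNReal.ofReal (BLayer.Freal k₁ k₂ a b) :=
    fun a b ha hb => by rw [BLayer.Fcell_coe hk₁ hk₂ ha hb, BLayer.eNN_coe]
  have hgtend : ∀ i, Tendsto (fun n => BLayer.gE k₁ k₂ (s (φ n)) i) atTop
      (nhds (BLayer.gE k₁ k₂ rbar i)) := by
    intro i
    unfold BLayer.gE
    apply Tendsto.add
    · rcases eq_or_ne i 0 with rfl | hi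
      · simp only [if_pos rfl]
        rw [BLayer.h0E_eq hk₁ hk₂ (hrpos 0)]
        have harg : Tendsto (fun n => 1/2 * LJ1r k₁ k₂ (γ + s (φ n) 0) - BLayer.Lb k₁ k₂)
            atTop (nhds (1/2 * LJ1r k₁ k₂ (γ + rbar 0) - BLayer.Lb k₁ k₂)) := by
          have h2 := ((hLJcont _ (ne_of_gt (hrpos 0))).tendsto).comp
            (tendsto_const_nhds.add (hconv 0) :
              Tendsto (fun n => γ + s (φ n) 0) atTop (nhds (γ + rbar 0)))
          exact (h2.const_mul (1/2)).sub tendsto_const_nhds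
        have h4 := (ENNReal.continuous_ofReal.tendsto _).comp harg
        refine h4.congr fun n => ?_
        exact (BLayer.h0E_eq hk₁ hk₂ (hspos (φ n) 0)).symm
      · simp only [if_neg hi]
        exact tendsto_const_nhds
    · rw [heF _ _ (hrpos i) (hrpos (i+1))]
      have h4 := (ENNReal.continuous_ofReal.tendsto _).comp (hFrealtend i)
      refine h4.congr fun n => ?_
      exact (heF _ _ (hspos (φ n) i) (hspos (φ n) (i+1))).symm
  -- Fatou
  have hFatou : ∑' i, BLayer.gE k₁ k₂ rbar i ≤
      liminf (fun n => ∑' i, BLayer.gE k₁ k₂ (s (φ n)) i) atTop := by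
    have h1 : ∀ i, BLayer.gE k₁ k₂ rbar i
        = liminf (fun n => BLayer.gE k₁ k₂ (s (φ n)) i) atTop :=
      fun i => ((hgtend i).liminf_eq).symm
    calc ∑' i, BLayer.gE k₁ k₂ rbar i
        = ∑' i, liminf (fun n => BLayer.gE k₁ k₂ (s (φ n)) i) atTop := tsum_congr h1
      _ = ∫⁻ i, liminf (fun n => BLayer.gE k₁ k₂ (s (φ n)) i) atTop
            ∂(MeasureTheory.Measure.count) := (MeasureTheory.lintegral_count _).symm
      _ ≤ liminf (fun n => ∫⁻ i, BLayer.gE k₁ k₂ (s (φ n)) i ∂(MeasureTheory.Measure.count))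
            atTop := MeasureTheory.lintegral_liminf_le (fun n => measurable_from_top)
      _ = liminf (fun n => ∑' i, BLayer.gE k₁ k₂ (s (φ n)) i) atTop := by
            congr 1
            funext n
            exact MeasureTheory.lintegral_count _
  -- energy bound on the subsequence
  have hBn : ∀ n, (∑' i, BLayer.gE k₁ k₂ (s (φ n)) i)
      ≤ ENNReal.ofReal (mr + 1/((φ n : ℝ)+1) - BLayer.Lb k₁ k₂) := by
    intro n
    have h1 : ((BLayer.Lb k₁ k₂ : ℝ) : EReal)
        + ((∑' i, BLayer.gE k₁ k₂ (s (φ n)) i : ℝ≥0∞) : EReal)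
        ≤ ((mr + 1/((φ n : ℝ)+1) : ℝ) : EReal) := by
      rw [← BLayer.Bgam_decomp hk₁ hk₂ (s (φ n))]
      exact hslt (φ n)
    have h2 : ((∑' i, BLayer.gE k₁ k₂ (s (φ n)) i : ℝ≥0∞) : EReal)
        ≤ (((mr + 1/((φ n : ℝ)+1) - BLayer.Lb k₁ k₂ : ℝ)) : EReal) := by
      have h3 := EReal.sub_le_sub h1 (le_refl ((BLayer.Lb k₁ k₂ : ℝ) : EReal))
      rw [add_comm, EReal.add_sub_cancel_right, ← EReal.coe_sub] at h3
      exact h3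
    have h4 := BLayer.eNN_le_eNN (EReal.coe_ennreal_nonneg _) h2
    rwa [BLayer.eNN_coe_ennreal, BLayer.eNN_coe] at h4
  have htb : Tendsto (fun n => ENNReal.ofReal (mr + 1/((φ n:ℝ)+1) - BLayer.Lb k₁ k₂)) atTop
      (nhds (ENNReal.ofReal (mr - BLayer.Lb k₁ k₂))) := by
    have h1 : Tendsto (fun n : ℕ => 1/((n:ℝ)+1)) atTop (nhds 0) :=
      tendsto_one_div_add_atTop_nhds_zero_nat
    have h2 : Tendsto (fun n => 1/((φ n : ℝ)+1)) atTop (nhds 0) := h1.comp hφ.tendsto_atTop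
    have h3 : Tendsto (fun n => mr + 1/((φ n:ℝ)+1) - BLayer.Lb k₁ k₂) atTop
        (nhds (mr - BLayer.Lb k₁ k₂)) := by
      have h5 : Tendsto (fun n : ℕ => mr + 1/((φ n:ℝ)+1)) atTop (nhds (mr + 0)) :=
        tendsto_const_nhds.add h2
      rw [add_zero] at h5
      exact h5.sub tendsto_const_nhds
    exact (ENNReal.continuous_ofReal.tendsto _).comp h3
  have hlim2 : liminf (fun n => ∑' i, BLayer.gE k₁ k₂ (s (φ n)) i) atTop
      ≤ ENNReal.ofReal (mr - BLayer.Lb k₁ k₂) := by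
    calc liminf (fun n => ∑' i, BLayer.gE k₁ k₂ (s (φ n)) i) atTop
        ≤ liminf (fun n => ENNReal.ofReal (mr + 1/((φ n:ℝ)+1) - BLayer.Lb k₁ k₂)) atTop :=
          liminf_le_liminf (Eventually.of_forall hBn)
      _ = _ := htb.liminf_eq
  have hsplitr : ∑' i, BLayer.gE k₁ k₂ rbar i ≤ ENNReal.ofReal (mr - BLayer.Lb k₁ k₂) :=
    hFatou.trans hlim2
  -- the limit has minimal energy
  have hBrle : Bgam k₁ k₂ rbar ≤ m := by
    rw [BLayer.Bgam_decomp hk₁ hk₂ rbar, ← hmr]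
    calc ((BLayer.Lb k₁ k₂ : ℝ) : EReal) + ((∑' i, BLayer.gE k₁ k₂ rbar i : ℝ≥0∞) : EReal)
        ≤ ((BLayer.Lb k₁ k₂ : ℝ) : EReal)
          + ((ENNReal.ofReal (mr - BLayer.Lb k₁ k₂) : ℝ≥0∞) : EReal) :=
          add_le_add_right (EReal.coe_ennreal_le_coe_ennreal_iff.2 hsplitr) _
      _ = (mr : EReal) := by
          rw [EReal.coe_ennreal_ofReal,
            max_eq_left (by linarith : (0:ℝ) ≤ mr - BLayer.Lb k₁ k₂), ← EReal.coe_add]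
          norm_num
  -- square-summability of the limit
  have hcoer : ∀ i, ENNReal.ofReal (9/128 * (k₂/γ^8) * (rbar i)^2)
      ≤ BLayer.gE k₁ k₂ rbar i := by
    intro i
    have h1 := BLayer.Fcell_coer hk₁ hk₂ (hrmem i).1 (hrmem i).2 (rbar (i+1))
    have h2 := BLayer.eNN_le_eNN (EReal.coe_nonneg.2 (by positivity)) h1
    rw [BLayer.eNN_coe] at h2
    exact le_trans h2 le_add_self
  have hsumne : (∑' i, ENNReal.ofReal (9/128 * (k₂/γ^8) * (rbar i)^2)) ≠ ⊤ :=
    ne_top_of_le_ne_top ENNReal.ofReal_ne_top ((ENNReal.tsum_le_tsum hcoer).trans hsplitr)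
  have hsummable1 : Summable (fun i => 9/128 * (k₂/γ^8) * (rbar i)^2) := by
    have h1 : Summable (fun i => Real.toNNReal (9/128 * (k₂/γ^8) * (rbar i)^2)) :=
      ENNReal.tsum_coe_ne_top_iff_summable.1 hsumne
    have h2 := NNReal.summable_coe.2 h1
    exact h2.congr fun i => Real.coe_toNNReal _ (by positivity)
  have hsq : Summable (fun i => (rbar i)^2) := by
    have hcpos : (0:ℝ) < 9/128 * (k₂/γ^8) := by positivity
    have h1 := hsummable1.mul_left (9/128 * (k₂/γ^8))⁻¹
    refine h1.congr fun i => ?_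
    field_simp
  have hmem2 : Memℓp rbar 2 := by
    apply memℓp_gen
    have h2 : ∀ i : ℕ, ‖rbar i‖ ^ (2:ℝ≥0∞).toReal = (rbar i)^2 := fun i => by
      rw [show ((2:ℝ≥0∞)).toReal = ((2:ℕ):ℝ) from by norm_num, Real.rpow_natCast,
        Real.norm_eq_abs, sq_abs]
    exact hsq.congr fun i => (h2 i).symm
  have htz : Tendsto rbar atTop (nhds 0) := by
    have h1 : Tendsto (fun i => (rbar i)^2) atTop (nhds 0) := hsq.tendsto_atTop_zero
    have h3 : Tendsto (fun i => Real.sqrt ((rbar i)^2)) atTop (nhds (Real.sqrt 0)) :=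
      (Real.continuous_sqrt.tendsto _).comp h1
    rw [Real.sqrt_zero] at h3
    have h2 : Tendsto (fun i => |rbar i|) atTop (nhds 0) :=
      h3.congr fun i => Real.sqrt_sq_eq_abs _
    have h4 : Tendsto (fun i => -|rbar i|) atTop (nhds 0) := by
      simpa using h2.neg
    exact tendsto_of_tendsto_of_tendsto_of_le_of_le h4 h2
      (fun i => neg_abs_le _) (fun i => le_abs_self _)
  exact ⟨rbar, hmem2, le_antisymm hBrle (sInf_le ⟨rbar, htz, rfl⟩)⟩
end
end

section
/- Let k₁,k₂>0, J_1(z)=k₁/z¹²−k₂/z⁶ for z>0 and +∞ for z≤0, J_2(z):=J_1(2z), J_CB:=J_1+J_2, γ:=(2k₁/k₂)^{1/6}·((1+2^{-12})/(1+2^{-6}))^{1/6}, F(a,b):=J_2(γ+(a+b)/2)+(1/2)J_1(γ+a)+(1/2)J_1(γ+b)−J_CB(γ), and B_γ(r):=(1/2)J_1(γ+r_1)+Σ_{i=1}^∞ F(r_i,r_{i+1}). Suppose r∈ℓ²(ℕ) satisfies B_γ(r)=inf{B_γ(s) : s a real sequence with s_i→0}. Then γ+r_i>0 for all i≥1, and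 r satisfies the Euler–Lagrange equations: J_1'(γ+r_1)+(1/2)J_2'(γ+(r_1+r_2)/2)=0, and for every i≥2: (1/2)J_2'(γ+(r_{i−1}+r_i)/2)+J_1'(γ+r_i)+(1/2)J_2'(γ+(r_i+r_{i+1})/2)=0. -/
open Filter Finset Set

noncomputable section

/-- The real-valued next-to-nearest neighbour potential `J₂(z) = J₁(2z)` on `(0,∞)`. -/
def LJ2r (k₁ k₂ : ℝ) (z : ℝ) : ℝ := LJ1r k₁ k₂ (2 * z)

/-! ### Auxiliary definitions -/

/-- The derivative of the real Lennard-Jones formula. -/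
def d1LJ (k₁ k₂ : ℝ) (z : ℝ) : ℝ := -12 * k₁ / z ^ 13 + 6 * k₂ / z ^ 7

/-- The real-valued cell energy. -/
def FrReal (k₁ k₂ : ℝ) (a b : ℝ) : ℝ :=
  LJ2r k₁ k₂ (gammaNNN k₁ k₂ + (a + b) / 2) + 1 / 2 * LJ1r k₁ k₂ (gammaNNN k₁ k₂ + a) +
    1 / 2 * LJ1r k₁ k₂ (gammaNNN k₁ k₂ + b) - JCBGammaNNN k₁ k₂

/-! ### Basic facts about `γ` -/

lemma gamma_pos {k₁ k₂ : ℝ} (hk₁ : 0 < k₁) (hk₂ : 0 < k₂) : 0 < gammaNNN k₁ k₂ := by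
  have h1 : (0:ℝ) < 2 * k₁ / k₂ := by positivity
  have h2 : (0:ℝ) < (1 + (2 : ℝ) ^ (-12 : ℤ)) / (1 + (2 : ℝ) ^ (-6 : ℤ)) := by positivity
  exact mul_pos (Real.rpow_pos_of_pos h1 _) (Real.rpow_pos_of_pos h2 _)

lemma gamma_pow6 {k₁ k₂ : ℝ} (hk₁ : 0 < k₁) (hk₂ : 0 < k₂) :
    (gammaNNN k₁ k₂) ^ (6:ℕ) =
      2 * k₁ / k₂ * ((1 + (2 : ℝ) ^ (-12 : ℤ)) / (1 + (2 : ℝ) ^ (-6 : ℤ))) := by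
  have h1 : (0:ℝ) < 2 * k₁ / k₂ := by positivity
  have h2 : (0:ℝ) < (1 + (2 : ℝ) ^ (-12 : ℤ)) / (1 + (2 : ℝ) ^ (-6 : ℤ)) := by positivity
  rw [gammaNNN, mul_pow, ← Real.rpow_natCast ((2 * k₁ / k₂) ^ ((1:ℝ)/6)) 6,
    ← Real.rpow_natCast (((1 + (2 : ℝ) ^ (-12 : ℤ)) / (1 + (2 : ℝ) ^ (-6 : ℤ))) ^ ((1:ℝ)/6)) 6,
    ← Real.rpow_mul h1.le, ← Real.rpow_mul h2.le]
  norm_num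

/-- criticality of `γ` for `J_CB`:  `J₁'(γ) + J₂'(γ) = 0`. -/
lemma key_sum {k₁ k₂ : ℝ} (hk₁ : 0 < k₁) (hk₂ : 0 < k₂) :
    d1LJ k₁ k₂ (gammaNNN k₁ k₂) + 2 * d1LJ k₁ k₂ (2 * gammaNNN k₁ k₂) = 0 := by
  have hγ : 0 < gammaNNN k₁ k₂ := gamma_pos hk₁ hk₂
  have h6 := gamma_pow6 hk₁ hk₂
  have hne : gammaNNN k₁ k₂ ≠ 0 := hγ.ne'
  have hk₂' : k₂ ≠ 0 := hk₂.ne'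
  rw [d1LJ, d1LJ]
  set γ := gammaNNN k₁ k₂
  field_simp at h6 ⊢
  norm_num at h6 ⊢
  linear_combination 12 * h6

/-! ### Derivatives -/

lemma hasDerivAt_LJ1r (k₁ k₂ : ℝ) {z : ℝ} (hz : z ≠ 0) :
    HasDerivAt (LJ1r k₁ k₂) (d1LJ k₁ k₂ z) z := by
  have h12 : z ^ 12 ≠ 0 := pow_ne_zero _ hz
  have h6 : z ^ 6 ≠ 0 := pow_ne_zero _ hz
  have h1 : HasDerivAt (fun z : ℝ => k₁ / z ^ 12)
      ((0 * z ^ 12 - k₁ * ((12:ℕ) * z ^ 11)) / (z ^ 12) ^ 2) z :=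
    (hasDerivAt_const z k₁).div (hasDerivAt_pow 12 z) h12
  have h2 : HasDerivAt (fun z : ℝ => k₂ / z ^ 6)
      ((0 * z ^ 6 - k₂ * ((6:ℕ) * z ^ 5)) / (z ^ 6) ^ 2) z :=
    (hasDerivAt_const z k₂).div (hasDerivAt_pow 6 z) h6
  have h3 := h1.sub h2
  have : HasDerivAt (LJ1r k₁ k₂) (d1LJ k₁ k₂ z) z := by
    refine h3.congr_deriv ?_
    rw [d1LJ]
    field_simp
    ring
  exact this

lemma hasDerivAt_LJ2r (k₁ k₂ : ℝ) {z : ℝ} (hz : z ≠ 0) :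
    HasDerivAt (LJ2r k₁ k₂) (2 * d1LJ k₁ k₂ (2 * z)) z := by
  have h2z : (2:ℝ) * z ≠ 0 := by simp [hz]
  have inner : HasDerivAt (fun z : ℝ => 2 * z) 2 z := by
    simpa using (hasDerivAt_id z).const_mul 2
  have := (hasDerivAt_LJ1r k₁ k₂ h2z).comp z inner
  exact this.congr_deriv (mul_comm _ _)

lemma deriv_LJ1r (k₁ k₂ : ℝ) {z : ℝ} (hz : z ≠ 0) :
    deriv (LJ1r k₁ k₂) z = d1LJ k₁ k₂ z := (hasDerivAt_LJ1r k₁ k₂ hz).deriv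

lemma deriv_LJ2r (k₁ k₂ : ℝ) {z : ℝ} (hz : z ≠ 0) :
    deriv (LJ2r k₁ k₂) z = 2 * d1LJ k₁ k₂ (2 * z) := (hasDerivAt_LJ2r k₁ k₂ hz).deriv

/-! ### Quadratic Taylor bound -/

lemma taylor_quad {f f' : ℝ → ℝ} {c δ C : ℝ} (hC : 0 ≤ C)
    (hf : ∀ z ∈ Icc (c - δ) (c + δ), HasDerivAt f (f' z) z)
    (hlip : ∀ z ∈ Icc (c - δ) (c + δ), |f' z - f' c| ≤ C * |z - c|)
    {h : ℝ} (hh : |h| ≤ δ) :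
    |f (c + h) - f c - f' c * h| ≤ C * h ^ 2 := by
  have habs : 0 ≤ |h| := abs_nonneg h
  have hsub : Icc (c - |h|) (c + |h|) ⊆ Icc (c - δ) (c + δ) :=
    Icc_subset_Icc (by linarith) (by linarith)
  set g : ℝ → ℝ := fun x => f x - f' c * x with hg
  have hg' : ∀ x ∈ Icc (c - |h|) (c + |h|),
      HasDerivWithinAt g (f' x - f' c) (Icc (c - |h|) (c + |h|)) x := by
    intro x hx
    have := (hf x (hsub hx)).sub (((hasDerivAt_id x).const_mul (f' c)))
    exact this.hasDerivWithinAt.congr_deriv (by ring)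
  have hbound : ∀ x ∈ Icc (c - |h|) (c + |h|), ‖f' x - f' c‖ ≤ C * |h| := by
    intro x hx
    refine le_trans (hlip x (hsub hx)) (mul_le_mul_of_nonneg_left ?_ hC)
    rw [abs_le]; constructor <;> [linarith [hx.1]; linarith [hx.2]]
  have hmem1 : c ∈ Icc (c - |h|) (c + |h|) := by constructor <;> linarith
  have hmem2 : c + h ∈ Icc (c - |h|) (c + |h|) := by
    constructor <;> [linarith [neg_abs_le h]; linarith [le_abs_self h]]
  have := (convex_Icc (c - |h|) (c + |h|)).norm_image_sub_le_of_norm_hasDerivWithin_le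
    hg' hbound hmem1 hmem2
  have heq : g (c + h) - g c = f (c + h) - f c - f' c * h := by simp [hg]; ring
  rw [heq] at this
  calc |f (c + h) - f c - f' c * h| ≤ C * |h| * ‖c + h - c‖ := this
    _ = C * h ^ 2 := by
        simp only [add_sub_cancel_left, Real.norm_eq_abs]
        rw [mul_assoc, ← abs_mul, abs_of_nonneg (mul_self_nonneg h)]
        ring

/-- Lipschitz bound for `d1LJ` on `Ici m`, `m > 0`. -/
lemma d1LJ_lip {k₁ k₂ m : ℝ} (hk₁ : 0 < k₁) (hk₂ : 0 < k₂) (hm : 0 < m) :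
    ∀ x ∈ Ici m, ∀ y ∈ Ici m,
      |d1LJ k₁ k₂ x - d1LJ k₁ k₂ y|
        ≤ (156 * k₁ / m ^ 14 + 42 * k₂ / m ^ 8) * |x - y| := by
  intro x hx y hy
  set C := 156 * k₁ / m ^ 14 + 42 * k₂ / m ^ 8 with hC
  have hder : ∀ z ∈ Ici m, HasDerivWithinAt (d1LJ k₁ k₂)
      (156 * k₁ / z ^ 14 - 42 * k₂ / z ^ 8) (Ici m) z := by
    intro z hz
    have hzne : z ≠ 0 := (lt_of_lt_of_le hm hz).ne'
    have h13 : z ^ 13 ≠ 0 := pow_ne_zero _ hzne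
    have h7 : z ^ 7 ≠ 0 := pow_ne_zero _ hzne
    have h1 : HasDerivAt (fun z : ℝ => -12 * k₁ / z ^ 13)
        ((0 * z ^ 13 - (-12 * k₁) * ((13:ℕ) * z ^ 12)) / (z ^ 13) ^ 2) z :=
      (hasDerivAt_const z (-12 * k₁)).div (hasDerivAt_pow 13 z) h13
    have h2 : HasDerivAt (fun z : ℝ => 6 * k₂ / z ^ 7)
        ((0 * z ^ 7 - (6 * k₂) * ((7:ℕ) * z ^ 6)) / (z ^ 7) ^ 2) z :=
      (hasDerivAt_const z (6 * k₂)).div (hasDerivAt_pow 7 z) h7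
    have h3 := h1.add h2
    have : HasDerivAt (d1LJ k₁ k₂) (156 * k₁ / z ^ 14 - 42 * k₂ / z ^ 8) z := by
      unfold d1LJ
      refine h3.congr_deriv ?_
      field_simp
      ring
    exact this.hasDerivWithinAt
  have hbnd : ∀ z ∈ Ici m, ‖156 * k₁ / z ^ 14 - 42 * k₂ / z ^ 8‖ ≤ C := by
    intro z hz
    have hzm : m ≤ z := hz
    have hzpos : 0 < z := lt_of_lt_of_le hm hzm
    have h14 : m ^ 14 ≤ z ^ 14 := pow_le_pow_left₀ hm.le hzm _
    have h8 : m ^ 8 ≤ z ^ 8 := pow_le_pow_left₀ hm.le hzm _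
    have b1 : 156 * k₁ / z ^ 14 ≤ 156 * k₁ / m ^ 14 :=
      div_le_div_of_nonneg_left (by positivity) (by positivity) h14
    have b2 : 42 * k₂ / z ^ 8 ≤ 42 * k₂ / m ^ 8 :=
      div_le_div_of_nonneg_left (by positivity) (by positivity) h8
    have c1 : (0:ℝ) ≤ 42 * k₂ / z ^ 8 := by positivity
    have c2 : (0:ℝ) ≤ 42 * k₂ / m ^ 8 := by positivity
    have c3 : (0:ℝ) ≤ 156 * k₁ / z ^ 14 := by positivity
    have c4 : (0:ℝ) ≤ 156 * k₁ / m ^ 14 := by positivity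
    rw [Real.norm_eq_abs, abs_sub_le_iff]
    constructor <;> [linarith; linarith]
  have := (convex_Ici m).norm_image_sub_le_of_norm_hasDerivWithin_le hder hbnd hy hx
  simpa [Real.norm_eq_abs] using this

set_option maxHeartbeats 1600000 in
/-- Quadratic bound for the real cell energy near the origin. -/
lemma Fr_bound {k₁ k₂ : ℝ} (hk₁ : 0 < k₁) (hk₂ : 0 < k₂) :
    ∃ C : ℝ, 0 ≤ C ∧ ∀ a b : ℝ, |a| ≤ gammaNNN k₁ k₂ / 4 → |b| ≤ gammaNNN k₁ k₂ / 4 →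
      |FrReal k₁ k₂ a b| ≤ C * (a ^ 2 + b ^ 2) := by
  set γ := gammaNNN k₁ k₂ with hγdef
  have hγ : 0 < γ := gamma_pos hk₁ hk₂
  set K : ℝ := 156 * k₁ / (γ / 2) ^ 14 + 42 * k₂ / (γ / 2) ^ 8 with hK
  have hK0 : 0 ≤ K := by positivity
  have hK40 : 0 ≤ 4 * K := by positivity
  -- Taylor bound for LJ1r around γ
  have hT1 : ∀ h : ℝ, |h| ≤ γ / 4 →
      |LJ1r k₁ k₂ (γ + h) - LJ1r k₁ k₂ γ - d1LJ k₁ k₂ γ * h| ≤ K * h ^ 2 := by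
    intro h hh
    refine taylor_quad hK0 (f' := d1LJ k₁ k₂) ?_ ?_ hh
    · intro z hz
      have hzpos : 0 < z := by have := hz.1; linarith
      exact hasDerivAt_LJ1r k₁ k₂ hzpos.ne'
    · intro z hz
      have hz1 : z ∈ Ici (γ / 2) := by
        have := hz.1; simp only [Set.mem_Ici]; linarith
      have hγ1 : γ ∈ Ici (γ / 2) := by simp only [Set.mem_Ici]; linarith
      have := d1LJ_lip hk₁ hk₂ (by linarith : (0:ℝ) < γ / 2) z hz1 γ hγ1
      rw [← hK] at this
      exact this
  -- Taylor bound for LJ2r around γ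
  have hT2 : ∀ h : ℝ, |h| ≤ γ / 4 →
      |LJ2r k₁ k₂ (γ + h) - LJ2r k₁ k₂ γ - 2 * d1LJ k₁ k₂ (2 * γ) * h| ≤ 4 * K * h ^ 2 := by
    intro h hh
    refine taylor_quad hK40 (f' := fun z => 2 * d1LJ k₁ k₂ (2 * z)) ?_ ?_ hh
    · intro z hz
      have hzpos : 0 < z := by have := hz.1; linarith
      exact hasDerivAt_LJ2r k₁ k₂ hzpos.ne'
    · intro z hz
      have hz1 : 2 * z ∈ Ici (γ / 2) := by
        have := hz.1; simp only [Set.mem_Ici]; linarith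
      have hγ1 : 2 * γ ∈ Ici (γ / 2) := by simp only [Set.mem_Ici]; linarith
      have hlp := d1LJ_lip hk₁ hk₂ (by linarith : (0:ℝ) < γ / 2) (2 * z) hz1 (2 * γ) hγ1
      rw [← hK] at hlp
      have e1 : |2 * d1LJ k₁ k₂ (2 * z) - 2 * d1LJ k₁ k₂ (2 * γ)|
          = 2 * |d1LJ k₁ k₂ (2 * z) - d1LJ k₁ k₂ (2 * γ)| := by
        rw [show 2 * d1LJ k₁ k₂ (2 * z) - 2 * d1LJ k₁ k₂ (2 * γ)
            = 2 * (d1LJ k₁ k₂ (2 * z) - d1LJ k₁ k₂ (2 * γ)) by ring, abs_mul,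
          abs_of_nonneg (by norm_num : (0:ℝ) ≤ 2)]
      have e2 : |2 * z - 2 * γ| = 2 * |z - γ| := by
        rw [show 2 * z - 2 * γ = 2 * (z - γ) by ring, abs_mul,
          abs_of_nonneg (by norm_num : (0:ℝ) ≤ 2)]
      rw [e1]
      rw [e2] at hlp
      calc 2 * |d1LJ k₁ k₂ (2 * z) - d1LJ k₁ k₂ (2 * γ)| ≤ 2 * (K * (2 * |z - γ|)) := by
            linarith
        _ = 4 * K * |z - γ| := by ring
  refine ⟨4 * K, hK40, fun a b ha hb => ?_⟩
  set m : ℝ := (a + b) / 2 with hm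
  have hmabs : |m| ≤ γ / 4 := by
    have hab : |a + b| ≤ γ / 2 := le_trans (abs_add_le a b) (by linarith)
    rw [hm, abs_div, abs_two]
    linarith
  have hkey := key_sum hk₁ hk₂
  have hdecomp : FrReal k₁ k₂ a b =
      (LJ2r k₁ k₂ (γ + m) - LJ2r k₁ k₂ γ - 2 * d1LJ k₁ k₂ (2 * γ) * m)
      + 1 / 2 * (LJ1r k₁ k₂ (γ + a) - LJ1r k₁ k₂ γ - d1LJ k₁ k₂ γ * a)
      + 1 / 2 * (LJ1r k₁ k₂ (γ + b) - LJ1r k₁ k₂ γ - d1LJ k₁ k₂ γ * b) := by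
    rw [FrReal, JCBGammaNNN, hm]
    have hLJ2γ : LJ2r k₁ k₂ γ = LJ1r k₁ k₂ (2 * γ) := rfl
    rw [← hγdef, ← hLJ2γ]
    linear_combination ((a + b) / 2) * hkey
  rw [hdecomp]
  have h1 := hT1 a ha
  have h2 := hT1 b hb
  have h3 := hT2 m hmabs
  have habs := abs_add_le
    (LJ2r k₁ k₂ (γ + m) - LJ2r k₁ k₂ γ - 2 * d1LJ k₁ k₂ (2 * γ) * m
      + 1 / 2 * (LJ1r k₁ k₂ (γ + a) - LJ1r k₁ k₂ γ - d1LJ k₁ k₂ γ * a))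
    (1 / 2 * (LJ1r k₁ k₂ (γ + b) - LJ1r k₁ k₂ γ - d1LJ k₁ k₂ γ * b))
  have habs2 := abs_add_le
    (LJ2r k₁ k₂ (γ + m) - LJ2r k₁ k₂ γ - 2 * d1LJ k₁ k₂ (2 * γ) * m)
    (1 / 2 * (LJ1r k₁ k₂ (γ + a) - LJ1r k₁ k₂ γ - d1LJ k₁ k₂ γ * a))
  have hmul1 : |1 / 2 * (LJ1r k₁ k₂ (γ + a) - LJ1r k₁ k₂ γ - d1LJ k₁ k₂ γ * a)|
      = 1 / 2 * |LJ1r k₁ k₂ (γ + a) - LJ1r k₁ k₂ γ - d1LJ k₁ k₂ γ * a| := by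
    rw [abs_mul]; norm_num
  have hmul2 : |1 / 2 * (LJ1r k₁ k₂ (γ + b) - LJ1r k₁ k₂ γ - d1LJ k₁ k₂ γ * b)|
      = 1 / 2 * |LJ1r k₁ k₂ (γ + b) - LJ1r k₁ k₂ γ - d1LJ k₁ k₂ γ * b| := by
    rw [abs_mul]; norm_num
  have hmsq : m ^ 2 ≤ (a ^ 2 + b ^ 2) / 2 := by rw [hm]; nlinarith [sq_nonneg (a - b)]
  rw [hmul1] at habs2
  rw [hmul2] at habs
  clear_value γ K m
  have haux : 4 * K * m ^ 2 ≤ 2 * (K * a ^ 2) + 2 * (K * b ^ 2) := by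
    nlinarith [mul_le_mul_of_nonneg_left hmsq hK40]
  have hexp : 4 * K * (a ^ 2 + b ^ 2) = 4 * (K * a ^ 2) + 4 * (K * b ^ 2) := by ring
  have p1 : 0 ≤ K * a ^ 2 := mul_nonneg hK0 (sq_nonneg a)
  have p2 : 0 ≤ K * b ^ 2 := mul_nonneg hK0 (sq_nonneg b)
  linarith [habs, habs2, h1, h2, h3, haux, p1, p2, hexp]

/-! ### EReal infrastructure -/

lemma erealHasSum_coe {f : ℕ → ℝ} {a : ℝ} (h : HasSum f a) :
    HasSum (fun n => ((f n : ℝ) : EReal)) ((a : ℝ) : EReal) := by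
  have hmap : (fun A : Finset ℕ => ∑ i ∈ A, ((f i : ℝ) : EReal))
      = fun A : Finset ℕ => (((∑ i ∈ A, f i : ℝ)) : EReal) := by
    funext A
    exact (map_sum (⟨⟨Real.toEReal, EReal.coe_zero⟩, EReal.coe_add⟩ : ℝ →+ EReal) f A).symm
  rw [HasSum, hmap]
  exact (continuous_coe_real_ereal.tendsto a).comp h

lemma ereal_sum_ne_bot {f : ℕ → EReal} (hb : ∀ i, f i ≠ ⊥) (A : Finset ℕ) :
    ∑ i ∈ A, f i ≠ ⊥ := by
  induction A using Finset.induction with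
  | empty => simp
  | insert a s hni ih =>
      rw [Finset.sum_insert hni]
      simp [EReal.add_eq_bot_iff, hb _, ih]

lemma erealHasSum_top {f : ℕ → EReal} (hb : ∀ i, f i ≠ ⊥) {n : ℕ} (hn : f n = ⊤) :
    HasSum f ⊤ := by
  have hev : (fun A : Finset ℕ => ∑ i ∈ A, f i) =ᶠ[atTop] fun _ => (⊤ : EReal) := by
    rw [EventuallyEq, eventually_atTop]
    refine ⟨{n}, fun A hA => ?_⟩
    have hnA : n ∈ A := hA (Finset.mem_singleton_self n)
    rw [← Finset.add_sum_erase A f hnA, hn]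
    exact EReal.top_add_of_ne_bot (ereal_sum_ne_bot hb _)
  exact Filter.Tendsto.congr' hev.symm tendsto_const_nhds

/-! ### EReal versions of the potentials -/

lemma LJ1_pos_eq (k₁ k₂ : ℝ) {z : ℝ} (hz : 0 < z) :
    LJ1 k₁ k₂ z = ((LJ1r k₁ k₂ z : ℝ) : EReal) := if_pos hz

lemma LJ1_nonpos_eq (k₁ k₂ : ℝ) {z : ℝ} (hz : ¬ 0 < z) : LJ1 k₁ k₂ z = ⊤ := if_neg hz

lemma LJ1_ne_bot (k₁ k₂ z : ℝ) : LJ1 k₁ k₂ z ≠ ⊥ := by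
  rw [LJ1]; split
  · exact EReal.coe_ne_bot _
  · exact top_ne_bot

lemma half_LJ1_ne_bot (k₁ k₂ z : ℝ) :
    (((1 : ℝ) / 2 : ℝ) : EReal) * LJ1 k₁ k₂ z ≠ ⊥ := by
  rw [LJ1]; split
  · rw [← EReal.coe_mul]; exact EReal.coe_ne_bot _
  · rw [EReal.coe_mul_top_of_pos (by norm_num : (0:ℝ) < 1/2)]; exact top_ne_bot

lemma LJ2_ne_bot (k₁ k₂ z : ℝ) : LJ2 k₁ k₂ z ≠ ⊥ := LJ1_ne_bot _ _ _

lemma Fcell_ne_bot (k₁ k₂ a b : ℝ) : Fcell k₁ k₂ a b ≠ ⊥ := by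
  rw [Fcell, sub_eq_add_neg, ← EReal.coe_neg]
  simp only [ne_eq, EReal.add_eq_bot_iff]
  push_neg
  exact ⟨⟨⟨LJ2_ne_bot _ _ _, half_LJ1_ne_bot _ _ _⟩, half_LJ1_ne_bot _ _ _⟩, EReal.coe_ne_bot _⟩

lemma Fcell_top_of_nonpos (k₁ k₂ : ℝ) {a : ℝ} (ha : ¬ 0 < gammaNNN k₁ k₂ + a) (b : ℝ) :
    Fcell k₁ k₂ a b = ⊤ := by
  rw [Fcell, LJ1_nonpos_eq k₁ k₂ ha,
    EReal.coe_mul_top_of_pos (by norm_num : (0:ℝ) < 1/2),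
    EReal.add_top_of_ne_bot (LJ2_ne_bot _ _ _),
    EReal.top_add_of_ne_bot (half_LJ1_ne_bot _ _ _), sub_eq_add_neg, ← EReal.coe_neg,
    EReal.top_add_of_ne_bot (EReal.coe_ne_bot _)]

lemma Fcell_coe (k₁ k₂ : ℝ) {a b : ℝ} (ha : 0 < gammaNNN k₁ k₂ + a)
    (hb : 0 < gammaNNN k₁ k₂ + b) :
    Fcell k₁ k₂ a b = ((FrReal k₁ k₂ a b : ℝ) : EReal) := by
  have hm : 0 < 2 * (gammaNNN k₁ k₂ + (a + b) / 2) := by linarith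
  rw [Fcell, LJ2, LJ1_pos_eq k₁ k₂ hm, LJ1_pos_eq k₁ k₂ ha, LJ1_pos_eq k₁ k₂ hb,
    ← EReal.coe_mul, ← EReal.coe_mul, ← EReal.coe_add, ← EReal.coe_add, ← EReal.coe_sub]
  rfl

/-- `B_γ` of a positive summable configuration, as a real number. -/
lemma Bgam_eq (k₁ k₂ : ℝ) (q : ℕ → ℝ) (hq : ∀ k, 0 < gammaNNN k₁ k₂ + q k)
    (hsum : Summable (fun k => FrReal k₁ k₂ (q k) (q (k + 1)))) :
    Bgam k₁ k₂ q = (((1 / 2 * LJ1r k₁ k₂ (gammaNNN k₁ k₂ + q 0)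
      + ∑' k, FrReal k₁ k₂ (q k) (q (k + 1)) : ℝ)) : EReal) := by
  rw [Bgam]
  have h1 : ∑' i, Fcell k₁ k₂ (q i) (q (i + 1))
      = ((∑' k, FrReal k₁ k₂ (q k) (q (k + 1)) : ℝ) : EReal) := by
    rw [tsum_congr (fun i => Fcell_coe k₁ k₂ (hq i) (hq (i + 1)))]
    exact (erealHasSum_coe hsum.hasSum).tsum_eq
  rw [h1, LJ1_pos_eq k₁ k₂ (hq 0), ← EReal.coe_mul, ← EReal.coe_add]

/-- Value of `B_γ` after perturbing a single coordinate. -/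
lemma perturb_eq (k₁ k₂ : ℝ) (r : ℕ → ℝ) (hpos : ∀ k, 0 < gammaNNN k₁ k₂ + r k)
    (hsum : Summable (fun k => FrReal k₁ k₂ (r k) (r (k + 1)))) (m : ℕ) (t : ℝ)
    (ht : |t| < gammaNNN k₁ k₂ + r m) :
    Bgam k₁ k₂ (fun n => if n = m then r n + t else r n) =
      (((1 / 2 * LJ1r k₁ k₂ (gammaNNN k₁ k₂ + (if 0 = m then r 0 + t else r 0))
        + ((∑' k, FrReal k₁ k₂ (r k) (r (k + 1)))
          + ∑ k ∈ ({m - 1, m} : Finset ℕ),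
            (FrReal k₁ k₂ (if k = m then r k + t else r k)
              (if k + 1 = m then r (k + 1) + t else r (k + 1))
              - FrReal k₁ k₂ (r k) (r (k + 1))))) : ℝ) : EReal) := by
  set st : ℕ → ℝ := fun n => if n = m then r n + t else r n with hst
  have hpos' : ∀ k, 0 < gammaNNN k₁ k₂ + st k := by
    intro k
    by_cases hk : k = m
    · subst hk
      simp only [hst, if_pos rfl]
      have := neg_abs_le t
      linarith
    · simp only [hst, if_neg hk]
      exact hpos k
  have hzero : ∀ k ∉ ({m - 1, m} : Finset ℕ),
      FrReal k₁ k₂ (st k) (st (k + 1)) - FrReal k₁ k₂ (r k) (r (k + 1)) = 0 := by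
    intro k hk
    simp only [Finset.mem_insert, Finset.mem_singleton] at hk
    push_neg at hk
    have h1 : k ≠ m := hk.2
    have h2 : k + 1 ≠ m := by
      intro h
      exact hk.1 (by omega)
    simp only [hst, if_neg h1, if_neg h2, sub_self]
  have hsumd : Summable (fun k =>
      FrReal k₁ k₂ (st k) (st (k + 1)) - FrReal k₁ k₂ (r k) (r (k + 1))) :=
    summable_of_ne_finset_zero hzero
  have hsum_t : Summable (fun k => FrReal k₁ k₂ (st k) (st (k + 1))) := by
    refine (hsum.add hsumd).congr fun k => ?_
    ring
  have htsum : (∑' k, FrReal k₁ k₂ (st k) (st (k + 1)))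
      = (∑' k, FrReal k₁ k₂ (r k) (r (k + 1)))
        + ∑ k ∈ ({m - 1, m} : Finset ℕ),
          (FrReal k₁ k₂ (st k) (st (k + 1)) - FrReal k₁ k₂ (r k) (r (k + 1))) := by
    rw [← tsum_eq_sum (L := SummationFilter.unconditional ℕ) hzero, ← Summable.tsum_add hsum hsumd]
    exact tsum_congr fun k => by ring
  have := Bgam_eq k₁ k₂ st hpos' hsum_t
  rw [this, htsum]

/-- every minimizer `r ∈ ℓ²(ℕ)` of `B_γ` (over sequences tending to `0`)
satisfies `γ + r_i > 0` for all `i` and the Euler–Lagrange equations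
`J₁'(γ+r₁) + ½J₂'(γ+(r₁+r₂)/2) = 0` and, for `i ≥ 2`,
`½J₂'(γ+(r_{i-1}+r_i)/2) + J₁'(γ+r_i) + ½J₂'(γ+(r_i+r_{i+1})/2) = 0`.
(Here `r i` plays the role of `r_{i+1}` of the paper.) -/
theorem boundary_layer_euler_lagrange (k₁ k₂ : ℝ) (hk₁ : 0 < k₁) (hk₂ : 0 < k₂)
    (r : ℕ → ℝ) (hr₂ : Memℓp r 2)
    (hmin : Bgam k₁ k₂ r = sInf {y : EReal | ∃ s : ℕ → ℝ,
      Filter.Tendsto s Filter.atTop (nhds 0) ∧ y = Bgam k₁ k₂ s}) :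
    (∀ i : ℕ, 0 < gammaNNN k₁ k₂ + r i) ∧
    deriv (LJ1r k₁ k₂) (gammaNNN k₁ k₂ + r 0) +
        1 / 2 * deriv (LJ2r k₁ k₂) (gammaNNN k₁ k₂ + (r 0 + r 1) / 2) = 0 ∧
    (∀ i : ℕ,
      1 / 2 * deriv (LJ2r k₁ k₂) (gammaNNN k₁ k₂ + (r i + r (i + 1)) / 2) +
        deriv (LJ1r k₁ k₂) (gammaNNN k₁ k₂ + r (i + 1)) +
        1 / 2 * deriv (LJ2r k₁ k₂) (gammaNNN k₁ k₂ + (r (i + 1) + r (i + 2)) / 2) = 0) := by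
  have hγ : 0 < gammaNNN k₁ k₂ := gamma_pos hk₁ hk₂
  -- the zero sequence has finite energy
  have hF00 : FrReal k₁ k₂ 0 0 = 0 := by
    simp only [FrReal, JCBGammaNNN, LJ2r]
    norm_num
    ring
  have hsum0 : Summable (fun _ : ℕ => FrReal k₁ k₂ 0 0) := by
    rw [hF00]; exact summable_zero
  have hB0 : Bgam k₁ k₂ (fun _ => 0) ≠ ⊤ := by
    rw [Bgam_eq k₁ k₂ (fun _ => 0) (fun k => by simpa using hγ) hsum0]
    exact EReal.coe_ne_top _
  have hmem0 : Bgam k₁ k₂ (fun _ => 0) ∈ {y : EReal | ∃ s : ℕ → ℝ,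
      Filter.Tendsto s Filter.atTop (nhds 0) ∧ y = Bgam k₁ k₂ s} :=
    ⟨fun _ => 0, tendsto_const_nhds, rfl⟩
  have hrne : Bgam k₁ k₂ r ≠ ⊤ := by
    rw [hmin]
    intro h
    have hle := sInf_le hmem0
    rw [h, top_le_iff] at hle
    exact hB0 hle
  -- positivity
  have hpos : ∀ i, 0 < gammaNNN k₁ k₂ + r i := by
    intro i
    by_contra hcon
    apply hrne
    rw [Bgam]
    have h1 : Fcell k₁ k₂ (r i) (r (i + 1)) = ⊤ := Fcell_top_of_nonpos k₁ k₂ hcon _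
    have h2 : (∑' i, Fcell k₁ k₂ (r i) (r (i + 1))) = ⊤ :=
      (erealHasSum_top (f := fun n => Fcell k₁ k₂ (r n) (r (n + 1)))
        (fun n => Fcell_ne_bot k₁ k₂ _ _) (n := i) h1).tsum_eq
    rw [h2]
    exact EReal.add_top_of_ne_bot (half_LJ1_ne_bot k₁ k₂ _)
  -- summability of the real cell energies
  have hsq : Summable (fun i => (r i) ^ 2) := by
    have h := hr₂.summable (p := 2) (by simp : (0:ℝ) < ENNReal.toReal 2)
    refine h.congr fun i => ?_
    rw [show (ENNReal.toReal 2) = ((2 : ℕ) : ℝ) by simp, Real.rpow_natCast,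
      Real.norm_eq_abs, sq_abs]
  have habs0 : Tendsto (fun i => |r i|) atTop (nhds 0) := by
    have h1 : Tendsto (fun i => (r i) ^ 2) atTop (nhds 0) := hsq.tendsto_atTop_zero
    have h2 := (Real.continuous_sqrt.tendsto' 0 0 (by simp)).comp h1
    refine h2.congr fun i => ?_
    simp [Real.sqrt_sq_eq_abs]
  have hr0 : Tendsto r atTop (nhds 0) := by
    rw [tendsto_zero_iff_abs_tendsto_zero]; exact habs0
  have hev1 : ∀ᶠ i in atTop, |r i| ≤ gammaNNN k₁ k₂ / 4 :=
    (habs0.eventually_lt_const (by positivity)).mono fun i h => h.le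
  have hev2 : ∀ᶠ i in atTop, |r (i + 1)| ≤ gammaNNN k₁ k₂ / 4 := by
    rw [eventually_atTop] at hev1 ⊢
    obtain ⟨N, hN⟩ := hev1
    exact ⟨N, fun i hi => hN (i + 1) (by omega)⟩
  obtain ⟨C, hC0, hCb⟩ := Fr_bound hk₁ hk₂
  have hsumF : Summable (fun k => FrReal k₁ k₂ (r k) (r (k + 1))) := by
    refine Summable.of_norm_bounded_eventually_nat
      (g := fun k => C * ((r k) ^ 2 + (r (k + 1)) ^ 2))
      (((hsq.add ((summable_nat_add_iff 1).2 hsq))).mul_left C) ?_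
    filter_upwards [hev1, hev2] with k h1 h2
    rw [Real.norm_eq_abs]
    exact hCb _ _ h1 h2
  -- minimality
  have hminle : ∀ s : ℕ → ℝ, Tendsto s atTop (nhds 0) → Bgam k₁ k₂ r ≤ Bgam k₁ k₂ s := by
    intro s hs
    rw [hmin]
    exact sInf_le ⟨s, hs, rfl⟩
  have hst_tendsto : ∀ (m : ℕ) (t : ℝ),
      Tendsto (fun n => if n = m then r n + t else r n) atTop (nhds 0) := by
    intro m t
    refine hr0.congr' ?_
    rw [EventuallyEq, eventually_atTop]
    exact ⟨m + 1, fun n hn => by simp [show n ≠ m by omega]⟩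
  have hBr : Bgam k₁ k₂ r = (((1 / 2 * LJ1r k₁ k₂ (gammaNNN k₁ k₂ + r 0)
      + ∑' k, FrReal k₁ k₂ (r k) (r (k + 1)) : ℝ)) : EReal) := Bgam_eq k₁ k₂ r hpos hsumF
  refine ⟨hpos, ?_, ?_⟩
  · -- first Euler-Lagrange equation (perturbation of coordinate 0)
    set S := ∑' k, FrReal k₁ k₂ (r k) (r (k + 1)) with hS
    set A := gammaNNN k₁ k₂ + (r 0 + r 1) / 2 with hA
    have hApos : 0 < A := by
      have h0 := hpos 0; have h1 := hpos 1; rw [hA]; linarith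
    set c : ℝ := S - FrReal k₁ k₂ (r 0) (r 1)
      + 1 / 2 * LJ1r k₁ k₂ (gammaNNN k₁ k₂ + r 1) - JCBGammaNNN k₁ k₂ with hc
    have hψeq : ∀ t : ℝ, |t| < gammaNNN k₁ k₂ + r 0 →
        Bgam k₁ k₂ (fun n => if n = 0 then r n + t else r n) =
          (((LJ1r k₁ k₂ (gammaNNN k₁ k₂ + r 0 + t) + LJ2r k₁ k₂ (A + t / 2) + c : ℝ)) : EReal) := by
      intro t ht
      rw [perturb_eq k₁ k₂ r hpos hsumF 0 t ht, EReal.coe_eq_coe_iff]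
      have hset : ({0 - 1, 0} : Finset ℕ) = {0} := by decide
      rw [hset, Finset.sum_singleton, hc, hA, ← hS]
      simp only [eq_self_iff_true, if_true, if_neg (Nat.one_ne_zero), Nat.zero_add]
      rw [FrReal, FrReal]
      have e1 : gammaNNN k₁ k₂ + (r 0 + t) = gammaNNN k₁ k₂ + r 0 + t := by ring
      have e2 : gammaNNN k₁ k₂ + (r 0 + t + r 1) / 2
          = gammaNNN k₁ k₂ + (r 0 + r 1) / 2 + t / 2 := by ring
      rw [e1, e2]
      ring
    have hr_eq : (fun n => if n = 0 then r n + 0 else r n) = r := by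
      funext n; split <;> simp
    have hB00 := hψeq 0 (by simpa using hpos 0)
    rw [hr_eq] at hB00
    have hball : ∀ᶠ t : ℝ in nhds 0, |t| < gammaNNN k₁ k₂ + r 0 := by
      have h := continuous_abs.tendsto' (0:ℝ) 0 abs_zero
      exact h.eventually_lt_const (hpos 0)
    have hloc : IsLocalMin (fun t : ℝ =>
        LJ1r k₁ k₂ (gammaNNN k₁ k₂ + r 0 + t) + LJ2r k₁ k₂ (A + t / 2) + c) 0 := by
      filter_upwards [hball] with t ht
      have h1 := hminle _ (hst_tendsto 0 t)
      rw [hψeq t ht, hB00] at h1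
      exact EReal.coe_le_coe_iff.1 h1
    have hd1 : HasDerivAt (fun t : ℝ => LJ1r k₁ k₂ (gammaNNN k₁ k₂ + r 0 + t))
        (d1LJ k₁ k₂ (gammaNNN k₁ k₂ + r 0)) 0 := by
      have inner : HasDerivAt (fun t : ℝ => gammaNNN k₁ k₂ + r 0 + t) 1 0 := by
        simpa using (hasDerivAt_id (0:ℝ)).const_add (gammaNNN k₁ k₂ + r 0)
      have outer := hasDerivAt_LJ1r k₁ k₂
        (show gammaNNN k₁ k₂ + r 0 + 0 ≠ 0 by simpa using (hpos 0).ne')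
      exact (outer.comp 0 inner).congr_deriv (by simp)
    have hd2 : HasDerivAt (fun t : ℝ => LJ2r k₁ k₂ (A + t / 2))
        (2 * d1LJ k₁ k₂ (2 * A) * (1 / 2)) 0 := by
      have inner : HasDerivAt (fun t : ℝ => A + t / 2) (1 / 2) 0 := by
        simpa using ((hasDerivAt_id (0:ℝ)).div_const 2).const_add A
      have outer := hasDerivAt_LJ2r k₁ k₂ (show A + 0 / 2 ≠ 0 by simpa using hApos.ne')
      refine (outer.comp 0 inner).congr_deriv ?_; simp
    have hdψ := (hd1.add hd2).add_const c
    have hz := hloc.deriv_eq_zero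
    replace hz := hdψ.deriv.symm.trans hz
    rw [deriv_LJ1r k₁ k₂ (hpos 0).ne', deriv_LJ2r k₁ k₂ hApos.ne']
    linarith [hz]
  · -- interior Euler-Lagrange equations (perturbation of coordinate i+1)
    intro i
    set S := ∑' k, FrReal k₁ k₂ (r k) (r (k + 1)) with hS
    set A := gammaNNN k₁ k₂ + (r i + r (i + 1)) / 2 with hA
    set B := gammaNNN k₁ k₂ + (r (i + 1) + r (i + 2)) / 2 with hB
    have hApos : 0 < A := by
      have h0 := hpos i; have h1 := hpos (i + 1); rw [hA]; linarith
    have hBpos : 0 < B := by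
      have h0 := hpos (i + 1); have h1 := hpos (i + 2); rw [hB]; linarith
    set c : ℝ := 1 / 2 * LJ1r k₁ k₂ (gammaNNN k₁ k₂ + r 0) + S
      - FrReal k₁ k₂ (r i) (r (i + 1)) - FrReal k₁ k₂ (r (i + 1)) (r (i + 2))
      + 1 / 2 * LJ1r k₁ k₂ (gammaNNN k₁ k₂ + r i)
      + 1 / 2 * LJ1r k₁ k₂ (gammaNNN k₁ k₂ + r (i + 2)) - 2 * JCBGammaNNN k₁ k₂ with hc
    have ht1 : i ≠ i + 1 := by omega
    have ht2 : i + 1 + 1 ≠ i + 1 := by omega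
    have ht3 : (0 : ℕ) ≠ i + 1 := by omega
    have hψeq : ∀ t : ℝ, |t| < gammaNNN k₁ k₂ + r (i + 1) →
        Bgam k₁ k₂ (fun n => if n = i + 1 then r n + t else r n) =
          (((LJ2r k₁ k₂ (A + t / 2) + LJ1r k₁ k₂ (gammaNNN k₁ k₂ + r (i + 1) + t)
            + LJ2r k₁ k₂ (B + t / 2) + c : ℝ)) : EReal) := by
      intro t ht
      rw [perturb_eq k₁ k₂ r hpos hsumF (i + 1) t ht, EReal.coe_eq_coe_iff]
      have hset : ({i + 1 - 1, i + 1} : Finset ℕ) = {i, i + 1} := by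
        rw [Nat.add_sub_cancel]
      rw [hset, Finset.sum_pair ht1, hc, hA, hB, ← hS]
      simp only [eq_self_iff_true, if_true, if_neg ht1, if_neg ht2, if_neg ht3]
      rw [FrReal, FrReal, FrReal, FrReal, show i + 1 + 1 = i + 2 by omega]
      have e1 : gammaNNN k₁ k₂ + (r i + (r (i + 1) + t)) / 2
          = gammaNNN k₁ k₂ + (r i + r (i + 1)) / 2 + t / 2 := by ring
      have e2 : gammaNNN k₁ k₂ + (r (i + 1) + t) = gammaNNN k₁ k₂ + r (i + 1) + t := by ring
      have e3 : gammaNNN k₁ k₂ + (r (i + 1) + t + r (i + 2)) / 2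
          = gammaNNN k₁ k₂ + (r (i + 1) + r (i + 2)) / 2 + t / 2 := by ring
      rw [e1, e2, e3]
      ring
    have hr_eq : (fun n => if n = i + 1 then r n + 0 else r n) = r := by
      funext n; split <;> simp
    have hB00 := hψeq 0 (by simpa using hpos (i + 1))
    rw [hr_eq] at hB00
    have hball : ∀ᶠ t : ℝ in nhds 0, |t| < gammaNNN k₁ k₂ + r (i + 1) := by
      have h := continuous_abs.tendsto' (0:ℝ) 0 abs_zero
      exact h.eventually_lt_const (hpos (i + 1))
    have hloc : IsLocalMin (fun t : ℝ =>
        LJ2r k₁ k₂ (A + t / 2) + LJ1r k₁ k₂ (gammaNNN k₁ k₂ + r (i + 1) + t)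
          + LJ2r k₁ k₂ (B + t / 2) + c) 0 := by
      filter_upwards [hball] with t ht
      have h1 := hminle _ (hst_tendsto (i + 1) t)
      rw [hψeq t ht, hB00] at h1
      exact EReal.coe_le_coe_iff.1 h1
    have hdA : HasDerivAt (fun t : ℝ => LJ2r k₁ k₂ (A + t / 2))
        (2 * d1LJ k₁ k₂ (2 * A) * (1 / 2)) 0 := by
      have inner : HasDerivAt (fun t : ℝ => A + t / 2) (1 / 2) 0 := by
        simpa using ((hasDerivAt_id (0:ℝ)).div_const 2).const_add A
      have outer := hasDerivAt_LJ2r k₁ k₂ (show A + 0 / 2 ≠ 0 by simpa using hApos.ne')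
      refine (outer.comp 0 inner).congr_deriv ?_; simp
    have hdB : HasDerivAt (fun t : ℝ => LJ2r k₁ k₂ (B + t / 2))
        (2 * d1LJ k₁ k₂ (2 * B) * (1 / 2)) 0 := by
      have inner : HasDerivAt (fun t : ℝ => B + t / 2) (1 / 2) 0 := by
        simpa using ((hasDerivAt_id (0:ℝ)).div_const 2).const_add B
      have outer := hasDerivAt_LJ2r k₁ k₂ (show B + 0 / 2 ≠ 0 by simpa using hBpos.ne')
      refine (outer.comp 0 inner).congr_deriv ?_; simp
    have hd1 : HasDerivAt (fun t : ℝ => LJ1r k₁ k₂ (gammaNNN k₁ k₂ + r (i + 1) + t))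
        (d1LJ k₁ k₂ (gammaNNN k₁ k₂ + r (i + 1))) 0 := by
      have inner : HasDerivAt (fun t : ℝ => gammaNNN k₁ k₂ + r (i + 1) + t) 1 0 := by
        simpa using (hasDerivAt_id (0:ℝ)).const_add (gammaNNN k₁ k₂ + r (i + 1))
      have outer := hasDerivAt_LJ1r k₁ k₂
        (show gammaNNN k₁ k₂ + r (i + 1) + 0 ≠ 0 by simpa using (hpos (i + 1)).ne')
      exact (outer.comp 0 inner).congr_deriv (by simp)
    have hdψ := ((hdA.add hd1).add hdB).add_const c
    have hz := hloc.deriv_eq_zero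
    replace hz := hdψ.deriv.symm.trans hz
    rw [deriv_LJ1r k₁ k₂ (hpos (i + 1)).ne', deriv_LJ2r k₁ k₂ hApos.ne',
      deriv_LJ2r k₁ k₂ hBpos.ne']
    linarith [hz]
end
end

section
/- Let k₁,k₂>0, J_1(z)=k₁/z¹²−k₂/z⁶ for z>0 and +∞ for z≤0, J_2(z):=J_1(2z), J_CB:=J_1+J_2, γ:=(2k₁/k₂)^{1/6}·((1+2^{-12})/(1+2^{-6}))^{1/6}, δ₁:=(2k₁/k₂)^{1/6}, z_c²:=(1/2)(13/7)^{1/6}δ₁, F(a,b):=J_2(γ+(a+b)/2)+(1/2)J_1(γ+a)+(1/2)J_1(γ+b)−J_CB(γ), and B_γ(r):=(1/2)J_1(γ+r_1)+Σ_{i=1}^∞ F(r_i,r_{i+1}). Suppose r∈ℓ²(ℕ) satisfies B_γ(r)=inf{B_γ(s) : s a real sequence with s_i→0}. Then the sequence r is nonincreasing and nonnegative, i.e. r_i ≥ r_{i+1} ≥ 0 for all i≥1, and z_c² < γ+r_i ≤ δ₁ for all i≥1. -/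
open Filter Finset Set

noncomputable section

/-- The unique minimizer `δ₁` of `J₁`. -/
def delta1 (k₁ k₂ : ℝ) : ℝ := (2 * k₁ / k₂) ^ ((1 : ℝ) / 6)

/-- The inflection point `z_c² = ½(13/7)^{1/6}·δ₁` of `J₂`. -/
def zc2 (k₁ k₂ : ℝ) : ℝ := 1 / 2 * ((13 : ℝ) / 7) ^ ((1 : ℝ) / 6) * delta1 k₁ k₂

namespace BL

/-- derivative of `LJ1r` -/
def Jd (k₁ k₂ : ℝ) (z : ℝ) : ℝ := 6 * k₂ / z ^ 7 - 12 * k₁ / z ^ 13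

/-- second derivative of `LJ1r` -/
def Jdd (k₁ k₂ : ℝ) (z : ℝ) : ℝ := 156 * k₁ / z ^ 14 - 42 * k₂ / z ^ 8

/-- the inflection point `z_*` of `J₁`; `zc2 = zs/2`. -/
def zs (k₁ k₂ : ℝ) : ℝ := ((13 : ℝ) / 7) ^ ((1 : ℝ) / 6) * delta1 k₁ k₂

section Consts

variable {k₁ k₂ : ℝ} (hk₁ : 0 < k₁) (hk₂ : 0 < k₂)

lemma rpow6 {x : ℝ} (hx : 0 ≤ x) : (x ^ ((1:ℝ)/6)) ^ (6:ℕ) = x := by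
  rw [← Real.rpow_natCast (x ^ ((1:ℝ)/6)) 6, ← Real.rpow_mul hx]
  norm_num

lemma lt_of_pow6_lt {x y : ℝ} (hx : 0 ≤ x) (hy : 0 ≤ y) (h : x ^ (6:ℕ) < y ^ (6:ℕ)) :
    x < y := by
  exact (pow_lt_pow_iff_left₀ hx hy (by norm_num)).mp h

set_option linter.unusedSectionVars false

include hk₁ hk₂

lemma K_pos : 0 < 2 * k₁ / k₂ := by positivity

lemma d1_pos : 0 < delta1 k₁ k₂ := by
  unfold delta1; positivity

lemma d1_pow : (delta1 k₁ k₂) ^ (6:ℕ) = 2 * k₁ / k₂ := by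
  unfold delta1; exact rpow6 (le_of_lt (K_pos hk₁ hk₂))


lemma gam_pos : 0 < gammaNNN k₁ k₂ := by
  unfold gammaNNN; positivity

lemma gam_pow : (gammaNNN k₁ k₂) ^ (6:ℕ) = (2 * k₁ / k₂) * (4097/4160) := by
  unfold gammaNNN
  rw [mul_pow, rpow6 (le_of_lt (K_pos hk₁ hk₂)), rpow6 (by norm_num)]
  norm_num

lemma zs_pos : 0 < zs k₁ k₂ := by
  unfold zs; have := d1_pos hk₁ hk₂; positivity

lemma zs_pow : (zs k₁ k₂) ^ (6:ℕ) = (13/7) * (2 * k₁ / k₂) := by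
  unfold zs
  rw [mul_pow, rpow6 (by norm_num), d1_pow hk₁ hk₂]

lemma gam_lt_d1 : gammaNNN k₁ k₂ < delta1 k₁ k₂ := by
  apply lt_of_pow6_lt (le_of_lt (gam_pos hk₁ hk₂)) (le_of_lt (d1_pos hk₁ hk₂))
  rw [gam_pow hk₁ hk₂, d1_pow hk₁ hk₂]
  have := K_pos hk₁ hk₂; nlinarith

lemma d1_lt_zs : delta1 k₁ k₂ < zs k₁ k₂ := by
  apply lt_of_pow6_lt (le_of_lt (d1_pos hk₁ hk₂)) (le_of_lt (zs_pos hk₁ hk₂))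
  rw [zs_pow hk₁ hk₂, d1_pow hk₁ hk₂]
  have := K_pos hk₁ hk₂; nlinarith

lemma zs_lt_2gam : zs k₁ k₂ < 2 * gammaNNN k₁ k₂ := by
  apply lt_of_pow6_lt (le_of_lt (zs_pos hk₁ hk₂)) (by have := gam_pos hk₁ hk₂; positivity)
  rw [zs_pow hk₁ hk₂, mul_pow, gam_pow hk₁ hk₂]
  have := K_pos hk₁ hk₂; nlinarith

lemma half_zs_lt_gam : zs k₁ k₂ / 2 < gammaNNN k₁ k₂ := by
  have := zs_lt_2gam hk₁ hk₂; linarith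

lemma d1_lt_2gam : delta1 k₁ k₂ < 2 * gammaNNN k₁ k₂ :=
  lt_trans (d1_lt_zs hk₁ hk₂) (zs_lt_2gam hk₁ hk₂)

end Consts

section Deriv

variable {k₁ k₂ : ℝ} (hk₁ : 0 < k₁) (hk₂ : 0 < k₂)

set_option linter.unusedSectionVars false

lemma LJ1r_eq_zpow (z : ℝ) : LJ1r k₁ k₂ z = k₁ * z ^ (-12:ℤ) - k₂ * z ^ (-6:ℤ) := by
  simp [LJ1r, zpow_neg, div_eq_mul_inv, zpow_ofNat]

lemma Jd_eq_zpow (z : ℝ) : Jd k₁ k₂ z = 6 * k₂ * z ^ (-7:ℤ) - 12 * k₁ * z ^ (-13:ℤ) := by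
  simp [Jd, zpow_neg, div_eq_mul_inv, zpow_ofNat]

lemma Jdd_eq_zpow (z : ℝ) : Jdd k₁ k₂ z = 156 * k₁ * z ^ (-14:ℤ) - 42 * k₂ * z ^ (-8:ℤ) := by
  simp [Jdd, zpow_neg, div_eq_mul_inv, zpow_ofNat]

lemma hasDerivAt_LJ1r {z : ℝ} (hz : z ≠ 0) :
    HasDerivAt (LJ1r k₁ k₂) (Jd k₁ k₂ z) z := by
  have h1 := ((hasDerivAt_zpow (-12) z (Or.inl hz)).const_mul k₁).sub
    ((hasDerivAt_zpow (-6) z (Or.inl hz)).const_mul k₂)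
  have : (fun z => k₁ * z ^ (-12:ℤ) - k₂ * z ^ (-6:ℤ)) = LJ1r k₁ k₂ := by
    funext w; rw [LJ1r_eq_zpow]
  rw [show ((fun y => k₁ * y ^ (-12:ℤ)) - fun y => k₂ * y ^ (-6:ℤ)) = LJ1r k₁ k₂ from this] at h1
  refine HasDerivAt.congr_deriv h1 ?_
  rw [Jd_eq_zpow]
  norm_num
  ring

lemma hasDerivAt_Jd {z : ℝ} (hz : z ≠ 0) :
    HasDerivAt (Jd k₁ k₂) (Jdd k₁ k₂ z) z := by
  have h1 := ((hasDerivAt_zpow (-7) z (Or.inl hz)).const_mul (6*k₂)).sub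
    ((hasDerivAt_zpow (-13) z (Or.inl hz)).const_mul (12*k₁))
  have : (fun z => 6 * k₂ * z ^ (-7:ℤ) - 12 * k₁ * z ^ (-13:ℤ)) = Jd k₁ k₂ := by
    funext w; rw [Jd_eq_zpow]
  rw [show ((fun y => 6 * k₂ * y ^ (-7:ℤ)) - fun y => 12 * k₁ * y ^ (-13:ℤ)) = Jd k₁ k₂ from this] at h1
  refine HasDerivAt.congr_deriv h1 ?_
  rw [Jdd_eq_zpow]
  norm_num
  ring

lemma Jd_div (z : ℝ) (hz : 0 < z) :
    Jd k₁ k₂ z = (6 * k₂ * z ^ (6:ℕ) - 12 * k₁) / z ^ (13:ℕ) := by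
  unfold Jd; field_simp

include hk₁ hk₂

lemma Jd_pos {z : ℝ} (hd : delta1 k₁ k₂ < z) : 0 < Jd k₁ k₂ z := by
  have hz : 0 < z := lt_trans (d1_pos hk₁ hk₂) hd
  rw [Jd_div z hz]
  apply div_pos _ (by positivity)
  have h6 : (delta1 k₁ k₂)^(6:ℕ) < z^(6:ℕ) :=
    pow_lt_pow_left₀ hd (le_of_lt (d1_pos hk₁ hk₂)) (by norm_num)
  rw [d1_pow hk₁ hk₂] at h6
  have : 2 * k₁ / k₂ * k₂ < z^(6:ℕ) * k₂ := by
    apply mul_lt_mul_of_pos_right h6 hk₂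
  rw [div_mul_cancel₀] at this
  · nlinarith
  · exact ne_of_gt hk₂

lemma Jd_neg {z : ℝ} (hz : 0 < z) (hd : z < delta1 k₁ k₂) : Jd k₁ k₂ z < 0 := by
  rw [Jd_div z hz]
  apply div_neg_of_neg_of_pos _ (by positivity)
  have h6 : z^(6:ℕ) < (delta1 k₁ k₂)^(6:ℕ) :=
    pow_lt_pow_left₀ hd (le_of_lt hz) (by norm_num)
  rw [d1_pow hk₁ hk₂] at h6
  have : z^(6:ℕ) * k₂ < 2 * k₁ / k₂ * k₂ := mul_lt_mul_of_pos_right h6 hk₂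
  rw [div_mul_cancel₀] at this
  · nlinarith
  · exact ne_of_gt hk₂

lemma Jdd_pos {z : ℝ} (hz : 0 < z) (hd : z < zs k₁ k₂) : 0 < Jdd k₁ k₂ z := by
  have : Jdd k₁ k₂ z = (156 * k₁ - 42 * k₂ * z ^ (6:ℕ)) / z ^ (14:ℕ) := by
    unfold Jdd; field_simp
  rw [this]
  apply div_pos _ (by positivity)
  have h6 : z^(6:ℕ) < (zs k₁ k₂)^(6:ℕ) :=
    pow_lt_pow_left₀ hd (le_of_lt hz) (by norm_num)
  rw [zs_pow hk₁ hk₂] at h6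
  have : z^(6:ℕ) * k₂ < 13 / 7 * (2 * k₁ / k₂) * k₂ := mul_lt_mul_of_pos_right h6 hk₂
  rw [mul_assoc, div_mul_cancel₀] at this
  · nlinarith
  · exact ne_of_gt hk₂

lemma Jdd_neg {z : ℝ} (hd : zs k₁ k₂ < z) : Jdd k₁ k₂ z < 0 := by
  have hz : 0 < z := lt_trans (zs_pos hk₁ hk₂) hd
  have : Jdd k₁ k₂ z = (156 * k₁ - 42 * k₂ * z ^ (6:ℕ)) / z ^ (14:ℕ) := by
    unfold Jdd; field_simp
  rw [this]
  apply div_neg_of_neg_of_pos _ (by positivity)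
  have h6 : (zs k₁ k₂)^(6:ℕ) < z^(6:ℕ) :=
    pow_lt_pow_left₀ hd (le_of_lt (zs_pos hk₁ hk₂)) (by norm_num)
  rw [zs_pow hk₁ hk₂] at h6
  have : 13 / 7 * (2 * k₁ / k₂) * k₂ < z^(6:ℕ) * k₂ := mul_lt_mul_of_pos_right h6 hk₂
  rw [mul_assoc, div_mul_cancel₀] at this
  · nlinarith
  · exact ne_of_gt hk₂

lemma LJ1r_contOn {s : Set ℝ} (hs : ∀ x ∈ s, x ≠ 0) : ContinuousOn (LJ1r k₁ k₂) s :=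
  fun x hx => ((hasDerivAt_LJ1r (k₁ := k₁) (k₂ := k₂) (hs x hx)).continuousAt).continuousWithinAt

lemma Jd_contOn {s : Set ℝ} (hs : ∀ x ∈ s, x ≠ 0) : ContinuousOn (Jd k₁ k₂) s :=
  fun x hx => ((hasDerivAt_Jd (k₁ := k₁) (k₂ := k₂) (hs x hx)).continuousAt).continuousWithinAt

/-- `Jd` is strictly monotone on `(0, zs]`. -/
lemma Jd_strictMonoOn : StrictMonoOn (Jd k₁ k₂) (Ioc 0 (zs k₁ k₂)) := by
  apply strictMonoOn_of_deriv_pos (convex_Ioc _ _)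
  · exact Jd_contOn hk₁ hk₂ (fun x hx => ne_of_gt hx.1)
  · intro x hx
    rw [interior_Ioc] at hx
    rw [(hasDerivAt_Jd (k₁ := k₁) (k₂ := k₂) (ne_of_gt hx.1)).deriv]
    exact Jdd_pos hk₁ hk₂ hx.1 hx.2

/-- `Jd` is strictly antitone on `[zs, ∞)`. -/
lemma Jd_strictAntiOn : StrictAntiOn (Jd k₁ k₂) (Ici (zs k₁ k₂)) := by
  apply strictAntiOn_of_deriv_neg (convex_Ici _)
  · exact Jd_contOn hk₁ hk₂ (fun x hx => ne_of_gt (lt_of_lt_of_le (zs_pos hk₁ hk₂) hx))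
  · intro x hx
    rw [interior_Ici] at hx
    rw [(hasDerivAt_Jd (k₁ := k₁) (k₂ := k₂) (ne_of_gt (lt_trans (zs_pos hk₁ hk₂) hx))).deriv]
    exact Jdd_neg hk₁ hk₂ hx

/-- `J₁` is strictly monotone on `[δ₁, ∞)`. -/
lemma LJ1r_strictMonoOn : StrictMonoOn (LJ1r k₁ k₂) (Ici (delta1 k₁ k₂)) := by
  apply strictMonoOn_of_deriv_pos (convex_Ici _)
  · exact LJ1r_contOn hk₁ hk₂ (fun x hx => ne_of_gt (lt_of_lt_of_le (d1_pos hk₁ hk₂) hx))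
  · intro x hx
    rw [interior_Ici] at hx
    rw [(hasDerivAt_LJ1r (k₁ := k₁) (k₂ := k₂) (ne_of_gt (lt_trans (d1_pos hk₁ hk₂) hx))).deriv]
    exact Jd_pos hk₁ hk₂ hx

end Deriv

section SpecialValues

variable {k₁ k₂ : ℝ} (hk₁ : 0 < k₁) (hk₂ : 0 < k₂)

set_option linter.unusedSectionVars false

include hk₁ hk₂

lemma jcb_comb' (z : ℝ) (hz : 0 < z) :
    Jd k₁ k₂ z + 2 * Jd k₁ k₂ (2 * z)
      = (195/32) * k₂ * (z ^ (6:ℕ) - (gammaNNN k₁ k₂) ^ (6:ℕ)) / z ^ (13:ℕ) := by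
  unfold Jd
  rw [gam_pow hk₁ hk₂]
  field_simp
  ring

lemma jcb_deriv_zero : Jd k₁ k₂ (gammaNNN k₁ k₂) + 2 * Jd k₁ k₂ (2 * gammaNNN k₁ k₂) = 0 := by
  rw [jcb_comb' hk₁ hk₂ _ (gam_pos hk₁ hk₂)]
  simp

lemma jcb_deriv_pos {z : ℝ} (hz : gammaNNN k₁ k₂ < z) :
    0 < Jd k₁ k₂ z + 2 * Jd k₁ k₂ (2 * z) := by
  have hg := gam_pos hk₁ hk₂
  have hz0 : 0 < z := lt_trans hg hz
  rw [jcb_comb' hk₁ hk₂ z hz0]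
  have h6 : (gammaNNN k₁ k₂) ^ (6:ℕ) < z ^ (6:ℕ) := pow_lt_pow_left₀ hz (le_of_lt hg) (by norm_num)
  have : (0:ℝ) < z ^ (13:ℕ) := by positivity
  apply div_pos _ this
  nlinarith

lemma jd_max {z : ℝ} (hz : 0 < z) : Jd k₁ k₂ z ≤ Jd k₁ k₂ (zs k₁ k₂) := by
  rcases le_or_gt z (zs k₁ k₂) with h | h
  · rcases eq_or_lt_of_le h with h' | h'
    · rw [h']
    · exact le_of_lt (Jd_strictMonoOn hk₁ hk₂ ⟨hz, h⟩ ⟨zs_pos hk₁ hk₂, le_refl _⟩ h')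
  · exact le_of_lt (Jd_strictAntiOn hk₁ hk₂ (self_mem_Ici) (le_of_lt h) h)

lemma jd_zs_pos : 0 < Jd k₁ k₂ (zs k₁ k₂) := Jd_pos hk₁ hk₂ (d1_lt_zs hk₁ hk₂)

lemma jd_half_zs : Jd k₁ k₂ (zs k₁ k₂ / 2) + 2 * Jd k₁ k₂ (zs k₁ k₂) < 0 := by
  have hS := zs_pos hk₁ hk₂
  have h6 : k₂ * (zs k₁ k₂) ^ (6:ℕ) = 26 * k₁ / 7 := by
    rw [zs_pow hk₁ hk₂]; field_simp; ring
  have key : Jd k₁ k₂ (zs k₁ k₂ / 2) + 2 * Jd k₁ k₂ (zs k₁ k₂)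
      = (780 * (k₂ * (zs k₁ k₂)^(6:ℕ)) - 98328 * k₁) / (zs k₁ k₂)^(13:ℕ) := by
    unfold Jd; field_simp; ring
  rw [key, h6]
  apply div_neg_of_neg_of_pos _ (by positivity)
  linarith

end SpecialValues

section FourPoint

variable {k₁ k₂ : ℝ} (hk₁ : 0 < k₁) (hk₂ : 0 < k₂)

set_option linter.unusedSectionVars false

include hk₁ hk₂

lemma fourpoint {a b c d : ℝ} (ha : zs k₁ k₂ ≤ a) (h1 : a < b) (h2 : b ≤ c) (h3 : c < d)
    (hsum : a + d = b + c) :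
    LJ1r k₁ k₂ a + LJ1r k₁ k₂ d < LJ1r k₁ k₂ b + LJ1r k₁ k₂ c := by
  have hzs := zs_pos hk₁ hk₂
  have hcont1 : ContinuousOn (LJ1r k₁ k₂) (Icc a b) :=
    LJ1r_contOn hk₁ hk₂ (fun x hx => ne_of_gt (lt_of_lt_of_le hzs (le_trans ha hx.1)))
  have hcont2 : ContinuousOn (LJ1r k₁ k₂) (Icc c d) :=
    LJ1r_contOn hk₁ hk₂ (fun x hx => ne_of_gt (lt_of_lt_of_le hzs
      (le_trans ha (le_trans (le_of_lt h1) (le_trans h2 hx.1)))))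
  obtain ⟨ξ₁, hξ₁, hs1⟩ := exists_hasDerivAt_eq_slope (LJ1r k₁ k₂) (Jd k₁ k₂) h1 hcont1
    (fun x hx => hasDerivAt_LJ1r (ne_of_gt (lt_of_lt_of_le hzs (le_trans ha (le_of_lt hx.1)))))
  obtain ⟨ξ₂, hξ₂, hs2⟩ := exists_hasDerivAt_eq_slope (LJ1r k₁ k₂) (Jd k₁ k₂) h3 hcont2
    (fun x hx => hasDerivAt_LJ1r (ne_of_gt (lt_of_lt_of_le hzs
      (le_trans ha (le_trans (le_of_lt h1) (le_trans h2 (le_of_lt hx.1)))))))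
  have hξ₁zs : ξ₁ ∈ Ici (zs k₁ k₂) := le_trans ha (le_of_lt hξ₁.1)
  have hξ₂zs : ξ₂ ∈ Ici (zs k₁ k₂) :=
    le_trans ha (le_trans (le_of_lt h1) (le_trans h2 (le_of_lt hξ₂.1)))
  have hlt : ξ₁ < ξ₂ := lt_of_lt_of_le hξ₁.2 (le_trans h2 (le_of_lt hξ₂.1))
  have hJd : Jd k₁ k₂ ξ₂ < Jd k₁ k₂ ξ₁ := Jd_strictAntiOn hk₁ hk₂ hξ₁zs hξ₂zs hlt
  rw [hs1] at hJd
  rw [hs2] at hJd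
  have hba : 0 < b - a := by linarith
  have hdc : b - a = d - c := by linarith
  rw [← hdc] at hJd
  have := (div_lt_div_iff_of_pos_right hba).mp hJd
  linarith

lemma midpoint_convex {A B : ℝ} (hA : 0 < A) (hB : 0 < B) (hAz : A ≤ zs k₁ k₂)
    (hBz : B ≤ zs k₁ k₂) :
    LJ1r k₁ k₂ ((A + B)/2) ≤ (LJ1r k₁ k₂ A + LJ1r k₁ k₂ B) / 2 := by
  have main : ∀ x y : ℝ, 0 < x → x < y → y ≤ zs k₁ k₂ →
      LJ1r k₁ k₂ ((x + y)/2) ≤ (LJ1r k₁ k₂ x + LJ1r k₁ k₂ y) / 2 := by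
    intro x y hx hxy hyz
    set m := (x + y)/2 with hm
    have hxm : x < m := by rw [hm]; linarith
    have hmy : m < y := by rw [hm]; linarith
    have hcont1 : ContinuousOn (LJ1r k₁ k₂) (Icc x m) :=
      LJ1r_contOn hk₁ hk₂ (fun w hw => ne_of_gt (lt_of_lt_of_le hx hw.1))
    have hcont2 : ContinuousOn (LJ1r k₁ k₂) (Icc m y) :=
      LJ1r_contOn hk₁ hk₂ (fun w hw => ne_of_gt (lt_of_lt_of_le (lt_trans hx hxm) hw.1))
    obtain ⟨ξ₁, hξ₁, hs1⟩ := exists_hasDerivAt_eq_slope (LJ1r k₁ k₂) (Jd k₁ k₂) hxm hcont1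
      (fun w hw => hasDerivAt_LJ1r (ne_of_gt (lt_trans hx hw.1)))
    obtain ⟨ξ₂, hξ₂, hs2⟩ := exists_hasDerivAt_eq_slope (LJ1r k₁ k₂) (Jd k₁ k₂) hmy hcont2
      (fun w hw => hasDerivAt_LJ1r (ne_of_gt (lt_trans (lt_trans hx hxm) hw.1)))
    have h1m : ξ₁ ∈ Ioc 0 (zs k₁ k₂) :=
      ⟨lt_trans hx hξ₁.1, le_trans (le_of_lt hξ₁.2) (le_trans (le_of_lt hmy) hyz)⟩
    have h2m : ξ₂ ∈ Ioc 0 (zs k₁ k₂) :=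
      ⟨lt_trans (lt_trans hx hxm) hξ₂.1, le_trans (le_of_lt hξ₂.2) hyz⟩
    have hlt : ξ₁ < ξ₂ := lt_trans hξ₁.2 hξ₂.1
    have hJd : Jd k₁ k₂ ξ₁ < Jd k₁ k₂ ξ₂ := Jd_strictMonoOn hk₁ hk₂ h1m h2m hlt
    rw [hs1, hs2] at hJd
    have hmx : 0 < m - x := by linarith
    have heq : m - x = y - m := by rw [hm]; ring
    rw [← heq] at hJd
    have := (div_lt_div_iff_of_pos_right hmx).mp hJd
    linarith
  rcases lt_trichotomy A B with h | h | h
  · exact main A B hA h hBz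
  · subst h
    have : (A + A)/2 = A := by ring
    rw [this]
    linarith
  · have := main B A hB h hAz
    have e : (B + A)/2 = (A + B)/2 := by ring
    rw [e] at this
    linarith

end FourPoint

section JCBMin

variable {k₁ k₂ : ℝ} (hk₁ : 0 < k₁) (hk₂ : 0 < k₂)

set_option linter.unusedSectionVars false

lemma jcb_formula (w : ℝ) (hw : w ≠ 0) :
    LJ1r k₁ k₂ w + LJ1r k₁ k₂ (2 * w)
      = (4097/4096) * k₁ / (w^(6:ℕ))^2 - (65/64) * k₂ / w^(6:ℕ) := by
  unfold LJ1r
  have h12 : w^(12:ℕ) = (w^(6:ℕ))^2 := by ring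
  field_simp
  ring

include hk₁ hk₂

lemma jcb_min {z : ℝ} (hz : 0 < z) :
    JCBGammaNNN k₁ k₂ ≤ LJ1r k₁ k₂ z + LJ1r k₁ k₂ (2 * z) := by
  have hg := gam_pos hk₁ hk₂
  unfold JCBGammaNNN
  rw [jcb_formula (w := gammaNNN k₁ k₂) (ne_of_gt hg), jcb_formula (w := z) (ne_of_gt hz)]
  set u := z ^ (6:ℕ) with hu
  set g := (gammaNNN k₁ k₂) ^ (6:ℕ) with hgdef
  have hu0 : 0 < u := by rw [hu]; positivity
  have hg0 : 0 < g := by rw [hgdef]; positivity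
  have hrel : 65 * k₂ * g = 2 * k₁ * 4097 / 64 := by
    rw [hgdef, gam_pow hk₁ hk₂]; field_simp; ring
  rw [div_sub_div _ _ (by positivity) (ne_of_gt hg0), div_sub_div _ _ (by positivity) (ne_of_gt hu0),
    div_le_div_iff₀ (by positivity) (by positivity)]
  have key : (4097/4096*k₁*u - u^2*(65/64*k₂))*(g^2*g) - (4097/4096*k₁*g - g^2*(65/64*k₂))*(u^2*u)
      = 65/128*k₂*u*g^2*(u-g)^2 := by
    linear_combination (u*g*(u^2-g^2)/128) * hrel
  have hpos : (0:ℝ) ≤ 65/128*k₂*u*g^2*(u-g)^2 := by positivity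
  linarith

end JCBMin

section ERealLemmas

/-- the coercion `ℝ → EReal` as an `AddMonoidHom`. -/
def realHom : ℝ →+ EReal where
  toFun := Real.toEReal
  map_zero' := rfl
  map_add' := EReal.coe_add

lemma ereal_tsum_coe {φ : ℕ → ℝ} (h : Summable φ) :
    ∑' i, ((φ i : ℝ) : EReal) = (((∑' i, φ i : ℝ)) : EReal) := by
  have := (h.hasSum.map realHom continuous_coe_real_ereal)
  exact this.tsum_eq

lemma add_ne_bot' {x y : EReal} (hx : x ≠ ⊥) (hy : y ≠ ⊥) : x + y ≠ ⊥ := by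
  simp [EReal.add_eq_bot_iff, hx, hy]

lemma ereal_finset_sum_ne_bot {T : Finset ℕ} {f : ℕ → EReal} (h : ∀ b ∈ T, f b ≠ ⊥) :
    ∑ b ∈ T, f b ≠ ⊥ := by
  classical
  induction T using Finset.cons_induction with
  | empty => simp
  | cons a T' ha ih =>
    rw [Finset.sum_cons]
    exact add_ne_bot' (h a (Finset.mem_cons_self a T'))
      (ih (fun b hb => h b (Finset.mem_cons_of_mem hb)))

lemma ereal_finset_sum_top {T : Finset ℕ} {f : ℕ → EReal} {j : ℕ} (hj : j ∈ T)
    (htop : f j = ⊤) (h : ∀ b ∈ T, f b ≠ ⊥) : ∑ b ∈ T, f b = ⊤ := by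
  classical
  rw [← Finset.add_sum_erase T f hj, htop]
  exact EReal.top_add_of_ne_bot
    (ereal_finset_sum_ne_bot (fun b hb => h b (Finset.mem_of_mem_erase hb)))

lemma ereal_tsum_top_of_top {f : ℕ → EReal} (h : ∀ j, f j ≠ ⊥) {j : ℕ} (hj : f j = ⊤) :
    ∑' i, f i = ⊤ := by
  classical
  have : HasSum f ⊤ := by
    rw [HasSum]
    apply Tendsto.congr' _ (tendsto_const_nhds)
    rw [Filter.EventuallyEq, SummationFilter.unconditional_filter, Filter.eventually_atTop]
    refine ⟨{j}, fun T hT => ?_⟩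
    exact (ereal_finset_sum_top (hT (Finset.mem_singleton_self j)) hj
      (fun b _ => h b)).symm
  exact this.tsum_eq

lemma ereal_tsum_coe_top {φ : ℕ → ℝ} (N : ℕ) (hN : ∀ j, N ≤ j → 0 ≤ φ j)
    (h : ¬ Summable φ) : ∑' j, ((φ j : ℝ) : EReal) = ⊤ := by
  classical
  have hsh : ¬ Summable (fun n => φ (n + N)) := by
    rw [summable_nat_add_iff]; exact h
  have hT : Tendsto (fun n => ∑ i ∈ Finset.range n, φ (i + N)) atTop atTop :=
    (not_summable_iff_tendsto_nat_atTop_of_nonneg (fun n => hN _ (Nat.le_add_left N n))).mp hsh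
  have : HasSum (fun j => ((φ j : ℝ) : EReal)) ⊤ := by
    rw [HasSum, EReal.tendsto_nhds_top_iff_real]
    intro M
    obtain ⟨n₀, hn₀⟩ := (Filter.tendsto_atTop.mp hT (M - ∑ i ∈ Finset.range N, φ i + 1)) |>.exists
    rw [SummationFilter.unconditional_filter, Filter.eventually_atTop]
    refine ⟨Finset.range (N + n₀), fun T hT' => ?_⟩
    have hsum : ∑ b ∈ T, ((φ b : ℝ) : EReal) = ((∑ b ∈ T, φ b : ℝ) : EReal) := by
      exact (map_sum realHom φ T).symm
    rw [hsum, EReal.coe_lt_coe_iff]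
    have hsplit : ∑ b ∈ T \ Finset.range (N + n₀), φ b
        + ∑ b ∈ Finset.range (N + n₀), φ b = ∑ b ∈ T, φ b :=
      Finset.sum_sdiff hT'
    have hrest : 0 ≤ ∑ b ∈ T \ Finset.range (N + n₀), φ b := by
      apply Finset.sum_nonneg
      intro b hb
      have := (Finset.mem_sdiff.mp hb).2
      rw [Finset.mem_range, not_lt] at this
      exact hN b (le_trans (Nat.le_add_right N n₀) this)
    have hbig : M - ∑ i ∈ Finset.range N, φ i + 1 ≤ ∑ i ∈ Finset.range n₀, φ (i + N) := hn₀
    have hr : ∑ b ∈ Finset.range (N + n₀), φ b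
        = ∑ i ∈ Finset.range N, φ i + ∑ i ∈ Finset.range n₀, φ (N + i) :=
      Finset.sum_range_add φ N n₀
    have : ∑ i ∈ Finset.range n₀, φ (N + i) = ∑ i ∈ Finset.range n₀, φ (i + N) := by
      apply Finset.sum_congr rfl; intro i _; rw [Nat.add_comm]
    linarith
  exact this.tsum_eq

end ERealLemmas

section FrcSection

/-- the real value of `Fcell` when both sites are positive. -/
def Frc (k₁ k₂ : ℝ) (a b : ℝ) : ℝ :=
  LJ1r k₁ k₂ (2 * (gammaNNN k₁ k₂ + (a + b) / 2)) +
    (1/2) * LJ1r k₁ k₂ (gammaNNN k₁ k₂ + a) +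
    (1/2) * LJ1r k₁ k₂ (gammaNNN k₁ k₂ + b) - JCBGammaNNN k₁ k₂

variable {k₁ k₂ : ℝ}

lemma LJ1_coe {z : ℝ} (hz : 0 < z) : LJ1 k₁ k₂ z = ((LJ1r k₁ k₂ z : ℝ) : EReal) := by
  unfold LJ1 LJ1r; rw [if_pos hz]

lemma LJ1_top {z : ℝ} (hz : ¬ (0 < z)) : LJ1 k₁ k₂ z = ⊤ := by
  unfold LJ1; rw [if_neg hz]

lemma LJ1_ne_bot (z : ℝ) : LJ1 k₁ k₂ z ≠ ⊥ := by
  unfold LJ1; split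
  · exact EReal.coe_ne_bot _
  · simp

lemma halfLJ1_ne_bot (z : ℝ) : (((1:ℝ)/2 : ℝ) : EReal) * LJ1 k₁ k₂ z ≠ ⊥ := by
  by_cases hz : 0 < z
  · rw [LJ1_coe hz, ← EReal.coe_mul]; exact EReal.coe_ne_bot _
  · rw [LJ1_top hz, EReal.coe_mul_top_of_pos (by norm_num)]; simp

lemma Fcell_ne_bot (a b : ℝ) : Fcell k₁ k₂ a b ≠ ⊥ := by
  unfold Fcell LJ2
  show _ + (-((JCBGammaNNN k₁ k₂ : ℝ) : EReal)) ≠ ⊥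
  apply add_ne_bot'
  apply add_ne_bot'
  apply add_ne_bot'
  · exact LJ1_ne_bot _
  · exact halfLJ1_ne_bot _
  · exact halfLJ1_ne_bot _
  · simp

lemma Fcell_coe {a b : ℝ} (ha : 0 < gammaNNN k₁ k₂ + a) (hb : 0 < gammaNNN k₁ k₂ + b) :
    Fcell k₁ k₂ a b = ((Frc k₁ k₂ a b : ℝ) : EReal) := by
  have hm : 0 < 2 * (gammaNNN k₁ k₂ + (a + b) / 2) := by linarith
  unfold Fcell LJ2 Frc
  rw [LJ1_coe hm, LJ1_coe ha, LJ1_coe hb, ← EReal.coe_mul, ← EReal.coe_mul,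
    ← EReal.coe_add, ← EReal.coe_add, ← EReal.coe_sub]

lemma Fcell_top {a b : ℝ} (h : ¬ (0 < gammaNNN k₁ k₂ + a) ∨ ¬ (0 < gammaNNN k₁ k₂ + b)) :
    Fcell k₁ k₂ a b = ⊤ := by
  unfold Fcell LJ2
  have htop : (((1:ℝ)/2 : ℝ) : EReal) * LJ1 k₁ k₂ (gammaNNN k₁ k₂ + a) = ⊤
      ∨ (((1:ℝ)/2 : ℝ) : EReal) * LJ1 k₁ k₂ (gammaNNN k₁ k₂ + b) = ⊤ := by
    rcases h with h | h
    · left; rw [LJ1_top h, EReal.coe_mul_top_of_pos (by norm_num)]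
    · right; rw [LJ1_top h, EReal.coe_mul_top_of_pos (by norm_num)]
  show _ + (-((JCBGammaNNN k₁ k₂ : ℝ) : EReal)) = ⊤
  rcases htop with h' | h'
  · rw [h']
    rw [EReal.add_top_of_ne_bot (LJ1_ne_bot _)]
    rw [EReal.top_add_of_ne_bot (halfLJ1_ne_bot _)]
    exact EReal.top_add_of_ne_bot (by simp)
  · rw [h']
    rw [EReal.add_top_of_ne_bot (add_ne_bot' (LJ1_ne_bot _) (halfLJ1_ne_bot _))]
    exact EReal.top_add_of_ne_bot (by simp)

end FrcSection

section Minimizer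

/-- the minimality hypothesis -/
def IsMin (k₁ k₂ : ℝ) (r : ℕ → ℝ) : Prop :=
  Bgam k₁ k₂ r = sInf {y : EReal | ∃ s : ℕ → ℝ,
      Filter.Tendsto s Filter.atTop (nhds 0) ∧ y = Bgam k₁ k₂ s}

variable {k₁ k₂ : ℝ} (hk₁ : 0 < k₁) (hk₂ : 0 < k₂)

set_option linter.unusedSectionVars false

lemma r_tendsto {r : ℕ → ℝ} (hr₂ : Memℓp r 2) : Tendsto r atTop (nhds 0) := by
  have h2 : (0:ℝ) < (2:ENNReal).toReal := by norm_num
  have hs := hr₂.summable h2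
  have h0 : Tendsto (fun i => ‖r i‖ ^ (2:ENNReal).toReal) atTop (nhds 0) :=
    hs.tendsto_atTop_zero
  have h1 : Tendsto (fun i => Real.sqrt (‖r i‖ ^ (2:ENNReal).toReal)) atTop (nhds 0) := by
    have := (Real.continuous_sqrt.tendsto 0).comp h0
    simpa [Function.comp_def] using this
  have heq : (fun i => Real.sqrt (‖r i‖ ^ (2:ENNReal).toReal)) = fun i => |r i| := by
    funext i
    have h22 : (2:ENNReal).toReal = ((2:ℕ):ℝ) := by norm_num
    rw [h22, Real.rpow_natCast, Real.sqrt_sq_eq_abs, abs_norm]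
    exact rfl
  rw [heq] at h1
  exact (tendsto_zero_iff_abs_tendsto_zero r).mpr h1

lemma min_le {r : ℕ → ℝ} (hmin : IsMin k₁ k₂ r) (s : ℕ → ℝ)
    (hs : Tendsto s atTop (nhds 0)) :
    Bgam k₁ k₂ r ≤ Bgam k₁ k₂ s := by
  rw [hmin]
  exact sInf_le ⟨s, hs, rfl⟩

include hk₁ hk₂

lemma Frc_zero : Frc k₁ k₂ 0 0 = 0 := by
  unfold Frc
  rw [show (2 * (gammaNNN k₁ k₂ + ((0:ℝ) + 0) / 2)) = 2 * gammaNNN k₁ k₂ by ring,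
    show (gammaNNN k₁ k₂ + (0:ℝ)) = gammaNNN k₁ k₂ by ring]
  unfold JCBGammaNNN
  ring

lemma Bgam_zero_val : Bgam k₁ k₂ (fun _ => 0)
    = ((1/2 * LJ1r k₁ k₂ (gammaNNN k₁ k₂) : ℝ) : EReal) := by
  unfold Bgam
  have hg : (0:ℝ) < gammaNNN k₁ k₂ + 0 := by
    rw [add_zero]; exact gam_pos hk₁ hk₂
  rw [LJ1_coe hg]
  have h1 : ∀ i:ℕ, Fcell k₁ k₂ ((fun _ => (0:ℝ)) i) ((fun _ => (0:ℝ)) (i+1)) = 0 := by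
    intro i
    rw [Fcell_coe hg hg, Frc_zero hk₁ hk₂]
    exact EReal.coe_zero
  rw [tsum_congr h1, tsum_zero, add_zero, ← EReal.coe_mul]
  norm_num

lemma Br_le_half {r : ℕ → ℝ} (hmin : IsMin k₁ k₂ r) :
    Bgam k₁ k₂ r ≤ ((1/2 * LJ1r k₁ k₂ (gammaNNN k₁ k₂) : ℝ) : EReal) := by
  rw [← Bgam_zero_val hk₁ hk₂]
  exact min_le hmin _ tendsto_const_nhds

lemma rho_pos {r : ℕ → ℝ} (hmin : IsMin k₁ k₂ r) : ∀ j, 0 < gammaNNN k₁ k₂ + r j := by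
  intro j
  by_contra hneg
  have htop : Fcell k₁ k₂ (r j) (r (j+1)) = ⊤ := Fcell_top (Or.inl hneg)
  have hts : ∑' i, Fcell k₁ k₂ (r i) (r (i+1)) = ⊤ :=
    ereal_tsum_top_of_top (fun i => Fcell_ne_bot _ _) htop
  have hB : Bgam k₁ k₂ r = ⊤ := by
    unfold Bgam
    rw [hts]
    exact EReal.add_top_of_ne_bot (halfLJ1_ne_bot _)
  have := Br_le_half hk₁ hk₂ hmin
  rw [hB] at this
  exact (EReal.coe_lt_top _).not_ge this

lemma Frc_nonneg_small {a b : ℝ} (ha1 : 0 < gammaNNN k₁ k₂ + a)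
    (ha2 : gammaNNN k₁ k₂ + a ≤ zs k₁ k₂)
    (hb1 : 0 < gammaNNN k₁ k₂ + b) (hb2 : gammaNNN k₁ k₂ + b ≤ zs k₁ k₂) :
    0 ≤ Frc k₁ k₂ a b := by
  have hm : gammaNNN k₁ k₂ + (a + b)/2
      = ((gammaNNN k₁ k₂ + a) + (gammaNNN k₁ k₂ + b))/2 := by ring
  have hmid := midpoint_convex hk₁ hk₂ ha1 hb1 ha2 hb2
  have hmpos : 0 < gammaNNN k₁ k₂ + (a + b)/2 := by rw [hm]; linarith
  have hjcb := jcb_min hk₁ hk₂ hmpos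
  have hmid' : LJ1r k₁ k₂ (gammaNNN k₁ k₂ + (a+b)/2)
      ≤ (LJ1r k₁ k₂ (gammaNNN k₁ k₂ + a) + LJ1r k₁ k₂ (gammaNNN k₁ k₂ + b))/2 := by
    rw [hm]; exact hmid
  unfold Frc
  linarith

lemma eps_window {r : ℕ → ℝ} (hr₂ : Memℓp r 2) : ∃ N : ℕ, ∀ j, N ≤ j →
    0 < gammaNNN k₁ k₂ + r j ∧ gammaNNN k₁ k₂ + r j ≤ zs k₁ k₂ := by
  have hg := gam_pos hk₁ hk₂
  have hzs := lt_trans (gam_lt_d1 hk₁ hk₂) (d1_lt_zs hk₁ hk₂)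
  have hε : 0 < min (gammaNNN k₁ k₂) (zs k₁ k₂ - gammaNNN k₁ k₂) := by
    apply lt_min hg; linarith
  obtain ⟨N, hN⟩ := Metric.tendsto_atTop.mp (r_tendsto hr₂) _ hε
  refine ⟨N, fun j hj => ?_⟩
  have hd := hN j hj
  rw [Real.dist_eq, sub_zero] at hd
  have h1 := abs_lt.mp (lt_of_lt_of_le hd (min_le_left _ _))
  have h2 := abs_lt.mp (lt_of_lt_of_le hd (min_le_right _ _))
  constructor
  · linarith [h1.1]
  · linarith [h2.2]

lemma Frc_nonneg_window {x : ℕ → ℝ} {N : ℕ}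
    (hw : ∀ j, N ≤ j → 0 < gammaNNN k₁ k₂ + x j ∧ gammaNNN k₁ k₂ + x j ≤ zs k₁ k₂) :
    ∀ j, N ≤ j → 0 ≤ Frc k₁ k₂ (x j) (x (j+1)) := by
  intro j hj
  obtain ⟨h1, h2⟩ := hw j hj
  obtain ⟨h3, h4⟩ := hw (j+1) (le_trans hj (Nat.le_succ j))
  exact Frc_nonneg_small hk₁ hk₂ h1 h2 h3 h4

lemma phi_summable {r : ℕ → ℝ} (hr₂ : Memℓp r 2) (hmin : IsMin k₁ k₂ r) :
    Summable (fun j => Frc k₁ k₂ (r j) (r (j+1))) := by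
  by_contra hns
  obtain ⟨N, hN⟩ := eps_window hk₁ hk₂ hr₂
  have hnn := Frc_nonneg_window hk₁ hk₂ hN
  have htop : ∑' j, ((Frc k₁ k₂ (r j) (r (j+1)) : ℝ) : EReal) = ⊤ :=
    ereal_tsum_coe_top N hnn hns
  have hcongr : ∀ i:ℕ, Fcell k₁ k₂ (r i) (r (i+1))
      = ((Frc k₁ k₂ (r i) (r (i+1)) : ℝ) : EReal) := fun i =>
    Fcell_coe (rho_pos hk₁ hk₂ hmin i) (rho_pos hk₁ hk₂ hmin (i+1))
  have hB : Bgam k₁ k₂ r = ⊤ := by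
    unfold Bgam
    rw [tsum_congr hcongr, htop]
    exact EReal.add_top_of_ne_bot (halfLJ1_ne_bot _)
  have := Br_le_half hk₁ hk₂ hmin
  rw [hB] at this
  exact (EReal.coe_lt_top _).not_ge this

lemma Bgam_repr (x : ℕ → ℝ) (hx : ∀ j, 0 < gammaNNN k₁ k₂ + x j)
    (hsx : Summable (fun j => Frc k₁ k₂ (x j) (x (j+1)))) :
    Bgam k₁ k₂ x = ((1/2 * LJ1r k₁ k₂ (gammaNNN k₁ k₂ + x 0)
      + ∑' j, Frc k₁ k₂ (x j) (x (j+1)) : ℝ) : EReal) := by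
  unfold Bgam
  have hcongr : ∀ i:ℕ, Fcell k₁ k₂ (x i) (x (i+1))
      = ((Frc k₁ k₂ (x i) (x (i+1)) : ℝ) : EReal) := fun i =>
    Fcell_coe (hx i) (hx (i+1))
  rw [tsum_congr hcongr, ereal_tsum_coe hsx, LJ1_coe (hx 0), ← EReal.coe_mul, ← EReal.coe_add]

lemma compare {r : ℕ → ℝ} (hr₂ : Memℓp r 2) (hmin : IsMin k₁ k₂ r)
    (x : ℕ → ℝ) (hxt : Tendsto x atTop (nhds 0))
    (hx : ∀ j, 0 < gammaNNN k₁ k₂ + x j)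
    (hsx : Summable (fun j => Frc k₁ k₂ (x j) (x (j+1)))) :
    1/2 * LJ1r k₁ k₂ (gammaNNN k₁ k₂ + r 0) + ∑' j, Frc k₁ k₂ (r j) (r (j+1))
      ≤ 1/2 * LJ1r k₁ k₂ (gammaNNN k₁ k₂ + x 0) + ∑' j, Frc k₁ k₂ (x j) (x (j+1)) := by
  have h1 := min_le hmin x hxt
  rw [Bgam_repr hk₁ hk₂ r (rho_pos hk₁ hk₂ hmin) (phi_summable hk₁ hk₂ hr₂ hmin),
    Bgam_repr hk₁ hk₂ x hx hsx] at h1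
  exact EReal.coe_le_coe_iff.mp h1


lemma Frc_expand (a b : ℝ) : Frc k₁ k₂ a b
    = LJ1r k₁ k₂ ((gammaNNN k₁ k₂ + a) + (gammaNNN k₁ k₂ + b))
      + 1/2 * LJ1r k₁ k₂ (gammaNNN k₁ k₂ + a) + 1/2 * LJ1r k₁ k₂ (gammaNNN k₁ k₂ + b)
      - JCBGammaNNN k₁ k₂ := by
  unfold Frc
  rw [show 2 * (gammaNNN k₁ k₂ + (a + b) / 2)
    = (gammaNNN k₁ k₂ + a) + (gammaNNN k₁ k₂ + b) by ring]

omit hk₁ hk₂ in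
lemma tsum_update_diff {φ ψ : ℕ → ℝ} (hφ : Summable φ) (T : Finset ℕ)
    (h : ∀ j ∉ T, ψ j = φ j) :
    Summable ψ ∧ ∑' j, ψ j = ∑' j, φ j + ∑ j ∈ T, (ψ j - φ j) := by
  have hδ : ∀ j ∉ T, ψ j - φ j = 0 := fun j hj => by rw [h j hj]; ring
  have hsδ : Summable (fun j => ψ j - φ j) := summable_of_ne_finset_zero hδ
  constructor
  · exact (hφ.add hsδ).congr (fun j => by ring)
  · have h1 : ∑' j, ψ j = ∑' j, (φ j + (ψ j - φ j)) := tsum_congr (fun j => by ring)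
    rw [h1, Summable.tsum_add hφ hsδ, tsum_eq_sum hδ]

/-- single-site perturbation at site 0 -/
lemma P0 {r : ℕ → ℝ} (hr₂ : Memℓp r 2) (hmin : IsMin k₁ k₂ r) (t : ℝ)
    (ht : 0 < gammaNNN k₁ k₂ + t) :
    LJ1r k₁ k₂ (gammaNNN k₁ k₂ + r 0)
      + LJ1r k₁ k₂ ((gammaNNN k₁ k₂ + r 0) + (gammaNNN k₁ k₂ + r 1))
    ≤ LJ1r k₁ k₂ (gammaNNN k₁ k₂ + t)
      + LJ1r k₁ k₂ ((gammaNNN k₁ k₂ + t) + (gammaNNN k₁ k₂ + r 1)) := by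
  classical
  set s : ℕ → ℝ := Function.update r 0 t with hs
  have hs0 : s 0 = t := Function.update_self 0 t r
  have hsne : ∀ j : ℕ, j ≠ 0 → s j = r j := fun j hj => Function.update_of_ne hj t r
  have hst : Tendsto s atTop (nhds 0) := by
    apply (r_tendsto hr₂).congr'
    rw [Filter.EventuallyEq, Filter.eventually_atTop]
    exact ⟨1, fun j hj => (hsne j (by omega)).symm⟩
  have hspos : ∀ j, 0 < gammaNNN k₁ k₂ + s j := by
    intro j
    by_cases hj : j = 0
    · rw [hj, hs0]; exact ht
    · rw [hsne j hj]; exact rho_pos hk₁ hk₂ hmin j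
  have hmod : ∀ j ∉ ({0} : Finset ℕ), Frc k₁ k₂ (s j) (s (j+1)) = Frc k₁ k₂ (r j) (r (j+1)) := by
    intro j hj
    rw [Finset.mem_singleton] at hj
    rw [hsne j hj, hsne (j+1) (by omega)]
  obtain ⟨hsum, htsum⟩ := tsum_update_diff (φ := fun j => Frc k₁ k₂ (r j) (r (j+1)))
    (ψ := fun j => Frc k₁ k₂ (s j) (s (j+1))) (phi_summable hk₁ hk₂ hr₂ hmin) {0} hmod
  have hcomp := compare hk₁ hk₂ hr₂ hmin s hst hspos hsum
  rw [htsum, Finset.sum_singleton] at hcomp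
  have hs1 : s 1 = r 1 := hsne 1 (by omega)
  rw [hs0, hs1] at hcomp
  rw [Frc_expand hk₁ hk₂ t (r 1), Frc_expand hk₁ hk₂ (r 0) (r 1)] at hcomp
  linarith

/-- single-site perturbation at site `i+1` -/
lemma Pmid {r : ℕ → ℝ} (hr₂ : Memℓp r 2) (hmin : IsMin k₁ k₂ r) (i : ℕ) (t : ℝ)
    (ht : 0 < gammaNNN k₁ k₂ + t) :
    LJ1r k₁ k₂ (gammaNNN k₁ k₂ + r (i+1))
      + LJ1r k₁ k₂ ((gammaNNN k₁ k₂ + r i) + (gammaNNN k₁ k₂ + r (i+1)))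
      + LJ1r k₁ k₂ ((gammaNNN k₁ k₂ + r (i+1)) + (gammaNNN k₁ k₂ + r (i+2)))
    ≤ LJ1r k₁ k₂ (gammaNNN k₁ k₂ + t)
      + LJ1r k₁ k₂ ((gammaNNN k₁ k₂ + r i) + (gammaNNN k₁ k₂ + t))
      + LJ1r k₁ k₂ ((gammaNNN k₁ k₂ + t) + (gammaNNN k₁ k₂ + r (i+2))) := by
  classical
  set s : ℕ → ℝ := Function.update r (i+1) t with hs
  have hsi : s (i+1) = t := Function.update_self (i+1) t r
  have hsne : ∀ j : ℕ, j ≠ i+1 → s j = r j := fun j hj => Function.update_of_ne hj t r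
  have hst : Tendsto s atTop (nhds 0) := by
    apply (r_tendsto hr₂).congr'
    rw [Filter.EventuallyEq, Filter.eventually_atTop]
    exact ⟨i+2, fun j hj => (hsne j (by omega)).symm⟩
  have hspos : ∀ j, 0 < gammaNNN k₁ k₂ + s j := by
    intro j
    by_cases hj : j = i+1
    · rw [hj, hsi]; exact ht
    · rw [hsne j hj]; exact rho_pos hk₁ hk₂ hmin j
  have hmod : ∀ j ∉ ({i, i+1} : Finset ℕ),
      Frc k₁ k₂ (s j) (s (j+1)) = Frc k₁ k₂ (r j) (r (j+1)) := by
    intro j hj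
    rw [Finset.mem_insert, Finset.mem_singleton] at hj
    push_neg at hj
    rw [hsne j (by omega), hsne (j+1) (by omega)]
  obtain ⟨hsum, htsum⟩ := tsum_update_diff (φ := fun j => Frc k₁ k₂ (r j) (r (j+1)))
    (ψ := fun j => Frc k₁ k₂ (s j) (s (j+1))) (phi_summable hk₁ hk₂ hr₂ hmin) {i, i+1} hmod
  have hcomp := compare hk₁ hk₂ hr₂ hmin s hst hspos hsum
  rw [htsum, Finset.sum_pair (by omega : i ≠ i+1)] at hcomp
  have hsi0 : s i = r i := hsne i (by omega)
  have hsi2 : s (i+1+1) = r (i+2) := by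
    rw [hsne (i+1+1) (by omega)]
  have hs0 : s 0 = r 0 := hsne 0 (by omega)
  rw [hsi0, hsi, hsi2, hs0] at hcomp
  rw [Frc_expand hk₁ hk₂ (r i) t, Frc_expand hk₁ hk₂ t (r (i+2)),
    Frc_expand hk₁ hk₂ (r i) (r (i+1)), Frc_expand hk₁ hk₂ (r (i+1)) (r (i+2))] at hcomp
  linarith

/-- Euler–Lagrange equation at site 0 -/
lemma EL0 {r : ℕ → ℝ} (hr₂ : Memℓp r 2) (hmin : IsMin k₁ k₂ r) :
    Jd k₁ k₂ (gammaNNN k₁ k₂ + r 0)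
      + Jd k₁ k₂ ((gammaNNN k₁ k₂ + r 0) + (gammaNNN k₁ k₂ + r 1)) = 0 := by
  set g : ℝ → ℝ := fun t => LJ1r k₁ k₂ (gammaNNN k₁ k₂ + t)
    + LJ1r k₁ k₂ ((gammaNNN k₁ k₂ + t) + (gammaNNN k₁ k₂ + r 1)) with hg
  have hopen : IsOpen {t : ℝ | 0 < gammaNNN k₁ k₂ + t} :=
    isOpen_lt continuous_const (continuous_const.add continuous_id)
  have hmem : r 0 ∈ {t : ℝ | 0 < gammaNNN k₁ k₂ + t} := rho_pos hk₁ hk₂ hmin 0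
  have hloc : IsLocalMin g (r 0) := by
    apply IsMinOn.isLocalMin _ (hopen.mem_nhds hmem)
    intro t htm
    exact P0 hk₁ hk₂ hr₂ hmin t htm
  have hin : HasDerivAt (fun t : ℝ => gammaNNN k₁ k₂ + t) 1 (r 0) := by
    simpa using (hasDerivAt_id (r 0)).const_add (gammaNNN k₁ k₂)
  have hin2 : HasDerivAt (fun t : ℝ => (gammaNNN k₁ k₂ + t) + (gammaNNN k₁ k₂ + r 1)) 1 (r 0) := by
    simpa using hin.add_const (gammaNNN k₁ k₂ + r 1)
  have hbpos : (0:ℝ) < (gammaNNN k₁ k₂ + r 0) + (gammaNNN k₁ k₂ + r 1) := by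
    have := rho_pos hk₁ hk₂ hmin 0; have := rho_pos hk₁ hk₂ hmin 1; linarith
  have hd1 : HasDerivAt (fun t : ℝ => LJ1r k₁ k₂ (gammaNNN k₁ k₂ + t))
      (Jd k₁ k₂ (gammaNNN k₁ k₂ + r 0) * 1) (r 0) :=
    (hasDerivAt_LJ1r (ne_of_gt (rho_pos hk₁ hk₂ hmin 0))).comp (r 0) hin
  have hd2 : HasDerivAt
      (fun t : ℝ => LJ1r k₁ k₂ ((gammaNNN k₁ k₂ + t) + (gammaNNN k₁ k₂ + r 1)))
      (Jd k₁ k₂ ((gammaNNN k₁ k₂ + r 0) + (gammaNNN k₁ k₂ + r 1)) * 1) (r 0) :=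
    by have := (hasDerivAt_LJ1r (k₁ := k₁) (k₂ := k₂) (ne_of_gt hbpos)).comp (r 0) hin2; exact this
  have hder : HasDerivAt g
      (Jd k₁ k₂ (gammaNNN k₁ k₂ + r 0) * 1
        + Jd k₁ k₂ ((gammaNNN k₁ k₂ + r 0) + (gammaNNN k₁ k₂ + r 1)) * 1) (r 0) :=
    hd1.add hd2
  have h0 := hloc.deriv_eq_zero
  rw [hder.deriv] at h0
  linarith

/-- Euler–Lagrange equation at site `i+1` -/
lemma ELmid {r : ℕ → ℝ} (hr₂ : Memℓp r 2) (hmin : IsMin k₁ k₂ r) (i : ℕ) :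
    Jd k₁ k₂ (gammaNNN k₁ k₂ + r (i+1))
      + Jd k₁ k₂ ((gammaNNN k₁ k₂ + r i) + (gammaNNN k₁ k₂ + r (i+1)))
      + Jd k₁ k₂ ((gammaNNN k₁ k₂ + r (i+1)) + (gammaNNN k₁ k₂ + r (i+2))) = 0 := by
  set g : ℝ → ℝ := fun t => LJ1r k₁ k₂ (gammaNNN k₁ k₂ + t)
    + LJ1r k₁ k₂ ((gammaNNN k₁ k₂ + r i) + (gammaNNN k₁ k₂ + t))
    + LJ1r k₁ k₂ ((gammaNNN k₁ k₂ + t) + (gammaNNN k₁ k₂ + r (i+2))) with hg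
  have hopen : IsOpen {t : ℝ | 0 < gammaNNN k₁ k₂ + t} :=
    isOpen_lt continuous_const (continuous_const.add continuous_id)
  have hmem : r (i+1) ∈ {t : ℝ | 0 < gammaNNN k₁ k₂ + t} := rho_pos hk₁ hk₂ hmin (i+1)
  have hloc : IsLocalMin g (r (i+1)) := by
    apply IsMinOn.isLocalMin _ (hopen.mem_nhds hmem)
    intro t htm
    exact Pmid hk₁ hk₂ hr₂ hmin i t htm
  have hin : HasDerivAt (fun t : ℝ => gammaNNN k₁ k₂ + t) 1 (r (i+1)) := by
    simpa using (hasDerivAt_id (r (i+1))).const_add (gammaNNN k₁ k₂)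
  have hin2 : HasDerivAt (fun t : ℝ => (gammaNNN k₁ k₂ + r i) + (gammaNNN k₁ k₂ + t)) 1
      (r (i+1)) := by
    simpa using hin.const_add (gammaNNN k₁ k₂ + r i)
  have hin3 : HasDerivAt
      (fun t : ℝ => (gammaNNN k₁ k₂ + t) + (gammaNNN k₁ k₂ + r (i+2))) 1 (r (i+1)) := by
    simpa using hin.add_const (gammaNNN k₁ k₂ + r (i+2))
  have hp0 := rho_pos hk₁ hk₂ hmin i
  have hp1 := rho_pos hk₁ hk₂ hmin (i+1)
  have hp2 := rho_pos hk₁ hk₂ hmin (i+2)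
  have hd1 : HasDerivAt (fun t : ℝ => LJ1r k₁ k₂ (gammaNNN k₁ k₂ + t))
      (Jd k₁ k₂ (gammaNNN k₁ k₂ + r (i+1)) * 1) (r (i+1)) :=
    (hasDerivAt_LJ1r (ne_of_gt hp1)).comp (r (i+1)) hin
  have hd2 : HasDerivAt
      (fun t : ℝ => LJ1r k₁ k₂ ((gammaNNN k₁ k₂ + r i) + (gammaNNN k₁ k₂ + t)))
      (Jd k₁ k₂ ((gammaNNN k₁ k₂ + r i) + (gammaNNN k₁ k₂ + r (i+1))) * 1) (r (i+1)) :=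
    (hasDerivAt_LJ1r (ne_of_gt (by linarith))).comp (r (i+1)) hin2
  have hd3 : HasDerivAt
      (fun t : ℝ => LJ1r k₁ k₂ ((gammaNNN k₁ k₂ + t) + (gammaNNN k₁ k₂ + r (i+2))))
      (Jd k₁ k₂ ((gammaNNN k₁ k₂ + r (i+1)) + (gammaNNN k₁ k₂ + r (i+2))) * 1) (r (i+1)) :=
    (hasDerivAt_LJ1r (ne_of_gt (by linarith))).comp (r (i+1)) hin3
  have hder : HasDerivAt g _ (r (i+1)) := (hd1.add hd2).add hd3
  have h0 := hloc.deriv_eq_zero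
  rw [hder.deriv] at h0
  linarith

/-- insertion at the front -/
lemma InsFront {r : ℕ → ℝ} (hr₂ : Memℓp r 2) (hmin : IsMin k₁ k₂ r) (t : ℝ)
    (ht : 0 < gammaNNN k₁ k₂ + t) :
    JCBGammaNNN k₁ k₂ ≤ LJ1r k₁ k₂ (gammaNNN k₁ k₂ + t)
      + LJ1r k₁ k₂ ((gammaNNN k₁ k₂ + t) + (gammaNNN k₁ k₂ + r 0)) := by
  classical
  set s : ℕ → ℝ := fun j => if j = 0 then t else r (j-1) with hs
  have hs0 : s 0 = t := rfl
  have hss : ∀ j : ℕ, s (j+1) = r j := by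
    intro j; simp only [hs]; rw [if_neg (by omega : ¬(j+1 = 0))]; congr 1
  have hst : Tendsto s atTop (nhds 0) := by
    apply Tendsto.congr' _ ((r_tendsto hr₂).comp (tendsto_sub_atTop_nat 1))
    rw [Filter.EventuallyEq, Filter.eventually_atTop]
    refine ⟨1, fun j hj => ?_⟩
    simp only [hs, Function.comp_apply]
    rw [if_neg (by omega)]
  have hspos : ∀ j, 0 < gammaNNN k₁ k₂ + s j := by
    intro j
    cases j with
    | zero => exact ht
    | succ n => rw [hss n]; exact rho_pos hk₁ hk₂ hmin n
  have hphis : ∀ j : ℕ, Frc k₁ k₂ (s (j+1)) (s (j+1+1)) = Frc k₁ k₂ (r j) (r (j+1)) := by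
    intro j; rw [hss j, hss (j+1)]
  have hφ := phi_summable hk₁ hk₂ hr₂ hmin
  have hsum : Summable (fun j => Frc k₁ k₂ (s j) (s (j+1))) := by
    rw [← summable_nat_add_iff 1]
    exact hφ.congr (fun j => (hphis j).symm)
  have htsum : ∑' j, Frc k₁ k₂ (s j) (s (j+1))
      = Frc k₁ k₂ t (r 0) + ∑' j, Frc k₁ k₂ (r j) (r (j+1)) := by
    rw [Summable.tsum_eq_zero_add hsum, hs0, hss 0]
    exact congrArg (fun z => Frc k₁ k₂ t (r 0) + z) (tsum_congr hphis)
  have hcomp := compare hk₁ hk₂ hr₂ hmin s hst hspos hsum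
  rw [htsum, hs0] at hcomp
  rw [Frc_expand hk₁ hk₂ t (r 0)] at hcomp
  linarith

/-- insertion between sites `i` and `i+1` -/
lemma InsMid {r : ℕ → ℝ} (hr₂ : Memℓp r 2) (hmin : IsMin k₁ k₂ r) (i : ℕ) (t : ℝ)
    (ht : 0 < gammaNNN k₁ k₂ + t) :
    JCBGammaNNN k₁ k₂ + LJ1r k₁ k₂ ((gammaNNN k₁ k₂ + r i) + (gammaNNN k₁ k₂ + r (i+1)))
      ≤ LJ1r k₁ k₂ (gammaNNN k₁ k₂ + t)
        + LJ1r k₁ k₂ ((gammaNNN k₁ k₂ + r i) + (gammaNNN k₁ k₂ + t))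
        + LJ1r k₁ k₂ ((gammaNNN k₁ k₂ + t) + (gammaNNN k₁ k₂ + r (i+1))) := by
  classical
  set s : ℕ → ℝ := fun j => if j < i+1 then r j else if j = i+1 then t else r (j-1) with hs
  have hslt : ∀ j : ℕ, j < i+1 → s j = r j := by
    intro j hj; simp only [hs]; rw [if_pos hj]
  have hsi : s (i+1) = t := by
    simp [hs]
  have hsgt : ∀ j : ℕ, s (j + (i+2)) = r (j + (i+1)) := by
    intro j
    show (if j + (i+2) < i+1 then r (j+(i+2)) else if j+(i+2) = i+1 then t else r (j+(i+2)-1))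
      = r (j+(i+1))
    rw [if_neg (by omega), if_neg (by omega)]
    exact congrArg r (by omega)
  have hst : Tendsto s atTop (nhds 0) := by
    apply Tendsto.congr' _ ((r_tendsto hr₂).comp (tendsto_sub_atTop_nat 1))
    rw [Filter.EventuallyEq, Filter.eventually_atTop]
    refine ⟨i+2, fun j hj => ?_⟩
    simp only [hs, Function.comp_apply]
    rw [if_neg (by omega), if_neg (by omega)]
  have hspos : ∀ j, 0 < gammaNNN k₁ k₂ + s j := by
    intro j
    rcases lt_trichotomy j (i+1) with hj | hj | hj
    · rw [hslt j hj]; exact rho_pos hk₁ hk₂ hmin j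
    · rw [hj, hsi]; exact ht
    · obtain ⟨m, hm⟩ : ∃ m, j = m + (i+2) := ⟨j - (i+2), by omega⟩
      rw [hm, hsgt m]; exact rho_pos hk₁ hk₂ hmin _
  have hφ := phi_summable hk₁ hk₂ hr₂ hmin
  have hφsh : Summable (fun j => Frc k₁ k₂ (r (j + (i+1))) (r (j + (i+1) + 1))) := by
    exact (summable_nat_add_iff (f := fun j => Frc k₁ k₂ (r j) (r (j+1))) (i+1)).mpr hφ
  have hphis : ∀ j : ℕ, Frc k₁ k₂ (s (j + (i+2))) (s (j + (i+2) + 1))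
      = Frc k₁ k₂ (r (j + (i+1))) (r (j + (i+1) + 1)) := by
    intro j
    have h1 : j + (i+2) + 1 = (j+1) + (i+2) := by omega
    rw [h1, hsgt j, hsgt (j+1)]
    congr 2
    omega
  have hsum : Summable (fun j => Frc k₁ k₂ (s j) (s (j+1))) := by
    rw [← summable_nat_add_iff (i+2)]
    exact hφsh.congr (fun j => (hphis j).symm)
  have h1 := Summable.sum_add_tsum_nat_add (f := fun j => Frc k₁ k₂ (s j) (s (j+1))) (i+2) hsum
  have h2 := Summable.sum_add_tsum_nat_add (f := fun j => Frc k₁ k₂ (r j) (r (j+1))) (i+1) hφ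
  have h3 : ∑' j, Frc k₁ k₂ (s (j + (i+2))) (s (j + (i+2) + 1))
      = ∑' j, Frc k₁ k₂ (r (j + (i+1))) (r (j + (i+1) + 1)) := tsum_congr hphis
  have h4 : ∑ j ∈ Finset.range (i+2), Frc k₁ k₂ (s j) (s (j+1))
      = ∑ j ∈ Finset.range i, Frc k₁ k₂ (r j) (r (j+1))
        + Frc k₁ k₂ (r i) t + Frc k₁ k₂ t (r (i+1)) := by
    rw [Finset.sum_range_succ, Finset.sum_range_succ]
    congr 1
    congr 1
    · apply Finset.sum_congr rfl
      intro j hj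
      rw [Finset.mem_range] at hj
      rw [hslt j (by omega), hslt (j+1) (by omega)]
    · rw [hslt i (by omega), hsi]
    · rw [hsi]
      have h'' : i+1+1 = 0 + (i+2) := by omega
      rw [h'', hsgt 0, show (0:ℕ) + (i+1) = i+1 from by omega]
  have h5 : ∑ j ∈ Finset.range (i+1), Frc k₁ k₂ (r j) (r (j+1))
      = ∑ j ∈ Finset.range i, Frc k₁ k₂ (r j) (r (j+1)) + Frc k₁ k₂ (r i) (r (i+1)) :=
    Finset.sum_range_succ _ i
  have hts : ∑' j, Frc k₁ k₂ (s j) (s (j+1))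
      = ∑' j, Frc k₁ k₂ (r j) (r (j+1))
        + (Frc k₁ k₂ (r i) t + Frc k₁ k₂ t (r (i+1)) - Frc k₁ k₂ (r i) (r (i+1))) := by
    rw [← h1, ← h2, h3, h4, h5]
    ring
  have hcomp := compare hk₁ hk₂ hr₂ hmin s hst hspos hsum
  rw [hts] at hcomp
  have hs00 : s 0 = r 0 := hslt 0 (by omega)
  rw [hs00] at hcomp
  rw [Frc_expand hk₁ hk₂ (r i) t, Frc_expand hk₁ hk₂ t (r (i+1)),
    Frc_expand hk₁ hk₂ (r i) (r (i+1))] at hcomp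
  linarith

/-- the bond length `ρ_i + ρ_{i+1}` -/
def bondB (k₁ k₂ : ℝ) (r : ℕ → ℝ) (i : ℕ) : ℝ :=
  (gammaNNN k₁ k₂ + r i) + (gammaNNN k₁ k₂ + r (i+1))

/-- Claim (4): `ρ_i ≤ δ₁`. -/
lemma rho_le_d1 {r : ℕ → ℝ} (hr₂ : Memℓp r 2) (hmin : IsMin k₁ k₂ r) (i : ℕ) :
    gammaNNN k₁ k₂ + r i ≤ delta1 k₁ k₂ := by
  by_contra hgt
  push_neg at hgt
  cases i with
  | zero =>
    have hEL := EL0 hk₁ hk₂ hr₂ hmin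
    have h1 : 0 < Jd k₁ k₂ (gammaNNN k₁ k₂ + r 0) := Jd_pos hk₁ hk₂ hgt
    have hb : delta1 k₁ k₂ < (gammaNNN k₁ k₂ + r 0) + (gammaNNN k₁ k₂ + r 1) := by
      have := rho_pos hk₁ hk₂ hmin 1; linarith
    have h2 : 0 < Jd k₁ k₂ ((gammaNNN k₁ k₂ + r 0) + (gammaNNN k₁ k₂ + r 1)) :=
      Jd_pos hk₁ hk₂ hb
    linarith
  | succ n =>
    have hEL := ELmid hk₁ hk₂ hr₂ hmin n
    have h1 : 0 < Jd k₁ k₂ (gammaNNN k₁ k₂ + r (n+1)) := Jd_pos hk₁ hk₂ hgt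
    have hbl : delta1 k₁ k₂ < (gammaNNN k₁ k₂ + r n) + (gammaNNN k₁ k₂ + r (n+1)) := by
      have := rho_pos hk₁ hk₂ hmin n; linarith
    have hbr : delta1 k₁ k₂ < (gammaNNN k₁ k₂ + r (n+1)) + (gammaNNN k₁ k₂ + r (n+2)) := by
      have := rho_pos hk₁ hk₂ hmin (n+2); linarith
    have h2 := Jd_pos hk₁ hk₂ hbl
    have h3 := Jd_pos hk₁ hk₂ hbr
    linarith

/-- Claim (3): `z_*/2 < ρ_i`. -/
lemma rho_gt_half_zs {r : ℕ → ℝ} (hr₂ : Memℓp r 2) (hmin : IsMin k₁ k₂ r) (i : ℕ) :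
    zs k₁ k₂ / 2 < gammaNNN k₁ k₂ + r i := by
  by_contra hle
  push_neg at hle
  have hzs := zs_pos hk₁ hk₂
  have hρ := rho_pos hk₁ hk₂ hmin i
  have hmono := Jd_strictMonoOn hk₁ hk₂
  have hhalf : Jd k₁ k₂ (gammaNNN k₁ k₂ + r i) ≤ Jd k₁ k₂ (zs k₁ k₂ / 2) := by
    rcases eq_or_lt_of_le hle with h | h
    · rw [h]
    · exact le_of_lt (hmono ⟨hρ, by linarith⟩ ⟨by linarith, by linarith⟩ h)
  have hbig : -2 * Jd k₁ k₂ (zs k₁ k₂) ≤ Jd k₁ k₂ (gammaNNN k₁ k₂ + r i) := by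
    cases i with
    | zero =>
      have hEL := EL0 hk₁ hk₂ hr₂ hmin
      have hb : (0:ℝ) < (gammaNNN k₁ k₂ + r 0) + (gammaNNN k₁ k₂ + r 1) := by
        have := rho_pos hk₁ hk₂ hmin 1; linarith
      have h1 := jd_max hk₁ hk₂ hb
      have h2 := jd_zs_pos hk₁ hk₂
      linarith
    | succ n =>
      have hEL := ELmid hk₁ hk₂ hr₂ hmin n
      have hb1 : (0:ℝ) < (gammaNNN k₁ k₂ + r n) + (gammaNNN k₁ k₂ + r (n+1)) := by
        have := rho_pos hk₁ hk₂ hmin n; linarith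
      have hb2 : (0:ℝ) < (gammaNNN k₁ k₂ + r (n+1)) + (gammaNNN k₁ k₂ + r (n+2)) := by
        have := rho_pos hk₁ hk₂ hmin (n+2); linarith
      have h1 := jd_max hk₁ hk₂ hb1
      have h2 := jd_max hk₁ hk₂ hb2
      linarith
  have := jd_half_zs hk₁ hk₂
  linarith

/-- Claim (2), base case: `γ ≤ ρ₀`. -/
lemma rho0_ge_gam {r : ℕ → ℝ} (hr₂ : Memℓp r 2) (hmin : IsMin k₁ k₂ r) :
    gammaNNN k₁ k₂ ≤ gammaNNN k₁ k₂ + r 0 := by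
  by_contra hlt
  push_neg at hlt
  have hg := gam_pos hk₁ hk₂
  have hIns := InsFront hk₁ hk₂ hr₂ hmin 0 (by linarith)
  rw [add_zero] at hIns
  unfold JCBGammaNNN at hIns
  have hkey : LJ1r k₁ k₂ (2 * gammaNNN k₁ k₂)
      ≤ LJ1r k₁ k₂ (gammaNNN k₁ k₂ + (gammaNNN k₁ k₂ + r 0)) := by linarith
  have h3 := rho_gt_half_zs hk₁ hk₂ hr₂ hmin 0
  have hhz := half_zs_lt_gam hk₁ hk₂
  have hd1zs := d1_lt_zs hk₁ hk₂
  have harg : delta1 k₁ k₂ ≤ gammaNNN k₁ k₂ + (gammaNNN k₁ k₂ + r 0) := by linarith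
  have harg2 : delta1 k₁ k₂ ≤ 2 * gammaNNN k₁ k₂ := le_of_lt (d1_lt_2gam hk₁ hk₂)
  have hlt2 : gammaNNN k₁ k₂ + (gammaNNN k₁ k₂ + r 0) < 2 * gammaNNN k₁ k₂ := by linarith
  have := LJ1r_strictMonoOn hk₁ hk₂ harg harg2 hlt2
  linarith

/-- Claim (2), inductive step. -/
lemma rho_ge_gam_step {r : ℕ → ℝ} (hr₂ : Memℓp r 2) (hmin : IsMin k₁ k₂ r) (i : ℕ)
    (hprev : gammaNNN k₁ k₂ ≤ gammaNNN k₁ k₂ + r i) :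
    gammaNNN k₁ k₂ ≤ gammaNNN k₁ k₂ + r (i+1) := by
  by_contra hlt
  push_neg at hlt
  have hg := gam_pos hk₁ hk₂
  have hhz := half_zs_lt_gam hk₁ hk₂
  have hzsA := rho_gt_half_zs hk₁ hk₂ hr₂ hmin i
  have hzsB := rho_gt_half_zs hk₁ hk₂ hr₂ hmin (i+1)
  have hd1A := rho_le_d1 hk₁ hk₂ hr₂ hmin i
  have hd1B := rho_le_d1 hk₁ hk₂ hr₂ hmin (i+1)
  set A := gammaNNN k₁ k₂ + r i with hA
  set B := gammaNNN k₁ k₂ + r (i+1) with hB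
  rcases eq_or_lt_of_le hprev with hAeq | hAgt
  · -- case `A = γ`, local-derivative argument at the inserted particle
    set L : ℝ → ℝ := fun t => LJ1r k₁ k₂ (gammaNNN k₁ k₂ + t)
      + LJ1r k₁ k₂ (A + (gammaNNN k₁ k₂ + t))
      + LJ1r k₁ k₂ ((gammaNNN k₁ k₂ + t) + B) with hL
    have hopen : IsOpen {t : ℝ | 0 < gammaNNN k₁ k₂ + t} :=
      isOpen_lt continuous_const (continuous_const.add continuous_id)
    have hmem : (0:ℝ) ∈ {t : ℝ | 0 < gammaNNN k₁ k₂ + t} := by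
      simp only [Set.mem_setOf_eq, add_zero]; exact hg
    have hL0 : L 0 = JCBGammaNNN k₁ k₂ + LJ1r k₁ k₂ (A + B) := by
      simp only [hL, add_zero]
      unfold JCBGammaNNN
      rw [← hAeq, two_mul]
    have hloc : IsLocalMin L 0 := by
      apply IsMinOn.isLocalMin _ (hopen.mem_nhds hmem)
      intro t htm
      rw [hL0]
      exact InsMid hk₁ hk₂ hr₂ hmin i t htm
    have hin : HasDerivAt (fun t : ℝ => gammaNNN k₁ k₂ + t) 1 (0:ℝ) := by
      simpa using (hasDerivAt_id (0:ℝ)).const_add (gammaNNN k₁ k₂)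
    have hin2 : HasDerivAt (fun t : ℝ => A + (gammaNNN k₁ k₂ + t)) 1 (0:ℝ) := by
      simpa using hin.const_add A
    have hin3 : HasDerivAt (fun t : ℝ => (gammaNNN k₁ k₂ + t) + B) 1 (0:ℝ) := by
      simpa using hin.add_const B
    have hd1' : HasDerivAt (fun t : ℝ => LJ1r k₁ k₂ (gammaNNN k₁ k₂ + t))
        (Jd k₁ k₂ (gammaNNN k₁ k₂ + 0) * 1) (0:ℝ) :=
      (hasDerivAt_LJ1r (by rw [add_zero]; exact ne_of_gt hg)).comp (0:ℝ) hin
    have hzs0 := zs_pos hk₁ hk₂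
    have hd2' : HasDerivAt (fun t : ℝ => LJ1r k₁ k₂ (A + (gammaNNN k₁ k₂ + t)))
        (Jd k₁ k₂ (A + (gammaNNN k₁ k₂ + 0)) * 1) (0:ℝ) :=
      by have := (hasDerivAt_LJ1r (k₁ := k₁) (k₂ := k₂) (ne_of_gt (show (0:ℝ) < A + (gammaNNN k₁ k₂ + 0) by
        rw [add_zero]; linarith))).comp (0:ℝ) hin2; exact this
    have hd3' : HasDerivAt (fun t : ℝ => LJ1r k₁ k₂ ((gammaNNN k₁ k₂ + t) + B))
        (Jd k₁ k₂ ((gammaNNN k₁ k₂ + 0) + B) * 1) (0:ℝ) :=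
      by have := (hasDerivAt_LJ1r (k₁ := k₁) (k₂ := k₂) (ne_of_gt (show (0:ℝ) < (gammaNNN k₁ k₂ + 0) + B by
        rw [add_zero]; linarith))).comp (0:ℝ) hin3; exact this
    have hder : HasDerivAt L _ (0:ℝ) := (hd1'.add hd2').add hd3'
    have h0 := hloc.deriv_eq_zero
    rw [hder.deriv] at h0
    simp only [add_zero, mul_one] at h0
    rw [← hAeq, ← two_mul] at h0
    have hjz := jcb_deriv_zero hk₁ hk₂
    have hJgB : Jd k₁ k₂ (gammaNNN k₁ k₂ + B) = Jd k₁ k₂ (2 * gammaNNN k₁ k₂) := by linarith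
    have hanti := Jd_strictAntiOn hk₁ hk₂
    have hzslt := zs_lt_2gam hk₁ hk₂
    have hm1 : gammaNNN k₁ k₂ + B ∈ Ici (zs k₁ k₂) := by
      simp only [Set.mem_Ici]; linarith
    have hm2 : (2:ℝ) * gammaNNN k₁ k₂ ∈ Ici (zs k₁ k₂) := by
      simp only [Set.mem_Ici]; linarith
    have hltarg : gammaNNN k₁ k₂ + B < 2 * gammaNNN k₁ k₂ := by linarith
    have := hanti hm1 hm2 hltarg
    linarith
  · -- case `A > γ`, four-point argument
    have hIns := InsMid hk₁ hk₂ hr₂ hmin i 0 (by linarith)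
    rw [add_zero] at hIns
    unfold JCBGammaNNN at hIns
    have hgJ : LJ1r k₁ k₂ (2 * gammaNNN k₁ k₂) + LJ1r k₁ k₂ (A + B)
        ≤ LJ1r k₁ k₂ (A + gammaNNN k₁ k₂) + LJ1r k₁ k₂ (gammaNNN k₁ k₂ + B) := by
      linarith
    have hzsle : zs k₁ k₂ ≤ gammaNNN k₁ k₂ + B := by linarith
    rcases le_total (2 * gammaNNN k₁ k₂) (A + B) with hc | hc
    · have hfp := fourpoint hk₁ hk₂ (a := gammaNNN k₁ k₂ + B) (b := 2 * gammaNNN k₁ k₂)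
        (c := A + B) (d := A + gammaNNN k₁ k₂) hzsle (by linarith) hc (by linarith) (by ring)
      linarith
    · have hfp := fourpoint hk₁ hk₂ (a := gammaNNN k₁ k₂ + B) (b := A + B)
        (c := 2 * gammaNNN k₁ k₂) (d := A + gammaNNN k₁ k₂) hzsle (by linarith) hc (by linarith)
        (by ring)
      linarith

/-- Claim (2): `γ ≤ ρ_i`. -/
lemma rho_ge_gam {r : ℕ → ℝ} (hr₂ : Memℓp r 2) (hmin : IsMin k₁ k₂ r) (i : ℕ) :
    gammaNNN k₁ k₂ ≤ gammaNNN k₁ k₂ + r i := by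
  induction i with
  | zero => exact rho0_ge_gam hk₁ hk₂ hr₂ hmin
  | succ n ih => exact rho_ge_gam_step hk₁ hk₂ hr₂ hmin n ih

lemma bond_ge {r : ℕ → ℝ} (hr₂ : Memℓp r 2) (hmin : IsMin k₁ k₂ r) (i : ℕ) :
    2 * gammaNNN k₁ k₂ ≤ bondB k₁ k₂ r i := by
  have h1 := rho_ge_gam hk₁ hk₂ hr₂ hmin i
  have h2 := rho_ge_gam hk₁ hk₂ hr₂ hmin (i+1)
  unfold bondB; linarith

lemma bond_le {r : ℕ → ℝ} (hr₂ : Memℓp r 2) (hmin : IsMin k₁ k₂ r) (i : ℕ) :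
    bondB k₁ k₂ r i ≤ 2 * delta1 k₁ k₂ := by
  have h1 := rho_le_d1 hk₁ hk₂ hr₂ hmin i
  have h2 := rho_le_d1 hk₁ hk₂ hr₂ hmin (i+1)
  unfold bondB; linarith

lemma bond_mem_Ici {r : ℕ → ℝ} (hr₂ : Memℓp r 2) (hmin : IsMin k₁ k₂ r) (i : ℕ) :
    bondB k₁ k₂ r i ∈ Ici (zs k₁ k₂) := by
  have h1 := bond_ge hk₁ hk₂ hr₂ hmin i
  have h2 := zs_lt_2gam hk₁ hk₂
  simp only [Set.mem_Ici]; linarith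

lemma twogam_mem_Ici : (2:ℝ) * gammaNNN k₁ k₂ ∈ Ici (zs k₁ k₂) := by
  have h2 := zs_lt_2gam hk₁ hk₂
  simp only [Set.mem_Ici]; linarith

lemma rho_mem_Ioc {r : ℕ → ℝ} (hr₂ : Memℓp r 2) (hmin : IsMin k₁ k₂ r) (i : ℕ) :
    gammaNNN k₁ k₂ + r i ∈ Ioc 0 (zs k₁ k₂) := by
  have h1 := rho_pos hk₁ hk₂ hmin i
  have h2 := rho_le_d1 hk₁ hk₂ hr₂ hmin i
  have h3 := d1_lt_zs hk₁ hk₂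
  exact ⟨h1, by linarith⟩

lemma gam_mem_Ioc : gammaNNN k₁ k₂ ∈ Ioc 0 (zs k₁ k₂) := by
  have h1 := gam_pos hk₁ hk₂
  have h2 := gam_lt_d1 hk₁ hk₂
  have h3 := d1_lt_zs hk₁ hk₂
  exact ⟨h1, by linarith⟩

lemma bond_tendsto {r : ℕ → ℝ} (hr₂ : Memℓp r 2) :
    Tendsto (bondB k₁ k₂ r) atTop (nhds (2 * gammaNNN k₁ k₂)) := by
  have h1 : Tendsto (fun i => r (i+1)) atTop (nhds 0) := by
    have := (r_tendsto hr₂).comp (tendsto_add_atTop_nat 1)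
    simpa [Function.comp_def] using this
  have h2 : Tendsto (fun i => (gammaNNN k₁ k₂ + r i) + (gammaNNN k₁ k₂ + r (i+1))) atTop
      (nhds ((gammaNNN k₁ k₂ + 0) + (gammaNNN k₁ k₂ + 0))) :=
    (tendsto_const_nhds.add (r_tendsto hr₂)).add (tendsto_const_nhds.add h1)
  have he : (gammaNNN k₁ k₂ + 0) + (gammaNNN k₁ k₂ + 0) = 2 * gammaNNN k₁ k₂ := by ring
  rw [he] at h2
  exact h2

/-- no interior bond-maximum above `2γ` -/
lemma claimM {r : ℕ → ℝ} (hr₂ : Memℓp r 2) (hmin : IsMin k₁ k₂ r) (k : ℕ)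
    (h1 : bondB k₁ k₂ r k ≤ bondB k₁ k₂ r (k+1))
    (h2 : bondB k₁ k₂ r (k+2) ≤ bondB k₁ k₂ r (k+1))
    (h3 : 2 * gammaNNN k₁ k₂ < bondB k₁ k₂ r (k+1)) : False := by
  have e1 := ELmid hk₁ hk₂ hr₂ hmin k
  have e2 := ELmid hk₁ hk₂ hr₂ hmin (k+1)
  have hanti := (Jd_strictAntiOn hk₁ hk₂ (k₁ := k₁)).antitoneOn
  have hm0 := bond_mem_Ici hk₁ hk₂ hr₂ hmin k
  have hm1 := bond_mem_Ici hk₁ hk₂ hr₂ hmin (k+1)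
  have hm2 := bond_mem_Ici hk₁ hk₂ hr₂ hmin (k+2)
  have hle1 : Jd k₁ k₂ (bondB k₁ k₂ r (k+1)) ≤ Jd k₁ k₂ (bondB k₁ k₂ r k) :=
    hanti hm0 hm1 h1
  have hle2 : Jd k₁ k₂ (bondB k₁ k₂ r (k+1)) ≤ Jd k₁ k₂ (bondB k₁ k₂ r (k+2)) :=
    hanti hm2 hm1 h2
  have hb1 : bondB k₁ k₂ r k = (gammaNNN k₁ k₂ + r k) + (gammaNNN k₁ k₂ + r (k+1)) := rfl
  have hb2 : bondB k₁ k₂ r (k+1) = (gammaNNN k₁ k₂ + r (k+1)) + (gammaNNN k₁ k₂ + r (k+2)) := rfl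
  have hb3 : bondB k₁ k₂ r (k+2) = (gammaNNN k₁ k₂ + r (k+2)) + (gammaNNN k₁ k₂ + r (k+3)) := rfl
  set B := bondB k₁ k₂ r (k+1) with hBdef
  have hs1 : Jd k₁ k₂ (gammaNNN k₁ k₂ + r (k+1)) ≤ -2 * Jd k₁ k₂ B := by
    rw [← hb1, ← hb2] at e1
    linarith
  have hs2 : Jd k₁ k₂ (gammaNNN k₁ k₂ + r (k+2)) ≤ -2 * Jd k₁ k₂ B := by
    have hb2' : (gammaNNN k₁ k₂ + r (k+1+1)) + (gammaNNN k₁ k₂ + r (k+1+2))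
        = bondB k₁ k₂ r (k+2) := rfl
    have hb1' : (gammaNNN k₁ k₂ + r (k+1)) + (gammaNNN k₁ k₂ + r (k+1+1)) = B := rfl
    rw [hb1', hb2'] at e2
    linarith
  set ζ := B / 2 with hζ
  have hζγ : gammaNNN k₁ k₂ < ζ := by rw [hζ]; linarith
  have hζd1 : ζ ≤ delta1 k₁ k₂ := by
    have := bond_le hk₁ hk₂ hr₂ hmin (k+1)
    rw [hζ]; rw [← hBdef] at this; linarith
  have hζmem : ζ ∈ Ioc 0 (zs k₁ k₂) := by
    have hg := gam_pos hk₁ hk₂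
    have := d1_lt_zs hk₁ hk₂
    exact ⟨by linarith, by linarith⟩
  have hmono := (Jd_strictMonoOn hk₁ hk₂ (k₁ := k₁)).monotoneOn
  have hjcb := jcb_deriv_pos hk₁ hk₂ hζγ
  have h2ζ : 2 * ζ = B := by rw [hζ]; ring
  rw [h2ζ] at hjcb
  have hsum : (gammaNNN k₁ k₂ + r (k+1)) + (gammaNNN k₁ k₂ + r (k+2)) = 2 * ζ := by
    rw [h2ζ, hBdef]; rfl
  rcases le_total (gammaNNN k₁ k₂ + r (k+1)) (gammaNNN k₁ k₂ + r (k+2)) with hc | hc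
  · have hge : ζ ≤ gammaNNN k₁ k₂ + r (k+2) := by linarith
    have := hmono hζmem (rho_mem_Ioc hk₁ hk₂ hr₂ hmin (k+2)) hge
    linarith
  · have hge : ζ ≤ gammaNNN k₁ k₂ + r (k+1) := by linarith
    have := hmono hζmem (rho_mem_Ioc hk₁ hk₂ hr₂ hmin (k+1)) hge
    linarith

/-- the bonds cannot be eventually constant `= 2γ` -/
lemma claimN {r : ℕ → ℝ} (hr₂ : Memℓp r 2) (hmin : IsMin k₁ k₂ r) (m : ℕ)
    (hc : ∀ i, m ≤ i → bondB k₁ k₂ r i = 2 * gammaNNN k₁ k₂) : False := by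
  have hjz := jcb_deriv_zero hk₁ hk₂
  have hmono := Jd_strictMonoOn hk₁ hk₂ (k₁ := k₁)
  have hanti := Jd_strictAntiOn hk₁ hk₂ (k₁ := k₁)
  set Q : ℕ → Prop := fun j => bondB k₁ k₂ r j = 2 * gammaNNN k₁ k₂
    ∧ gammaNNN k₁ k₂ + r (j+1) = gammaNNN k₁ k₂ with hQ
  have hQge : ∀ j, m ≤ j → Q j := by
    intro j hj
    refine ⟨hc j hj, ?_⟩
    have e := ELmid hk₁ hk₂ hr₂ hmin j
    have hb1 : (gammaNNN k₁ k₂ + r j) + (gammaNNN k₁ k₂ + r (j+1)) = 2 * gammaNNN k₁ k₂ :=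
      hc j hj
    have hb2 : (gammaNNN k₁ k₂ + r (j+1)) + (gammaNNN k₁ k₂ + r (j+2)) = 2 * gammaNNN k₁ k₂ :=
      hc (j+1) (by omega)
    rw [hb1, hb2] at e
    have hJeq : Jd k₁ k₂ (gammaNNN k₁ k₂ + r (j+1)) = Jd k₁ k₂ (gammaNNN k₁ k₂) := by linarith
    exact hmono.injOn (rho_mem_Ioc hk₁ hk₂ hr₂ hmin (j+1)) (gam_mem_Ioc hk₁ hk₂) hJeq
  have hdown : ∀ j, Q (j+1) → Q j := by
    intro j hQ1
    obtain ⟨hb1, hs2⟩ := hQ1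
    have hρ1 : gammaNNN k₁ k₂ + r (j+1) = gammaNNN k₁ k₂ := by
      have : (gammaNNN k₁ k₂ + r (j+1)) + (gammaNNN k₁ k₂ + r (j+2)) = 2 * gammaNNN k₁ k₂ := hb1
      linarith
    refine ⟨?_, hρ1⟩
    have e := ELmid hk₁ hk₂ hr₂ hmin j
    have hb2 : (gammaNNN k₁ k₂ + r (j+1)) + (gammaNNN k₁ k₂ + r (j+2)) = 2 * gammaNNN k₁ k₂ := hb1
    have hbB : (gammaNNN k₁ k₂ + r j) + (gammaNNN k₁ k₂ + r (j+1)) = bondB k₁ k₂ r j := rfl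
    rw [hb2, hbB, hρ1] at e
    have hJeq : Jd k₁ k₂ (bondB k₁ k₂ r j) = Jd k₁ k₂ (2 * gammaNNN k₁ k₂) := by linarith
    exact hanti.injOn (bond_mem_Ici hk₁ hk₂ hr₂ hmin j) (twogam_mem_Ici hk₁ hk₂) hJeq
  have hkey : ∀ d j, Q (j + d) → Q j := by
    intro d
    induction d with
    | zero => intro j h; simpa using h
    | succ n ih =>
      intro j h
      have h' : Q ((j+1) + n) := by
        have he : j + (n+1) = (j+1) + n := by omega
        rw [he] at h; exact h
      exact hdown j (ih (j+1) h')
  have hQ0 : Q 0 := hkey m 0 (hQge (0 + m) (by omega))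
  obtain ⟨hb0, hρ1⟩ := hQ0
  have hρ0 : gammaNNN k₁ k₂ + r 0 = gammaNNN k₁ k₂ := by
    have : (gammaNNN k₁ k₂ + r 0) + (gammaNNN k₁ k₂ + r 1) = 2 * gammaNNN k₁ k₂ := hb0
    linarith
  have e := EL0 hk₁ hk₂ hr₂ hmin
  have hb0' : (gammaNNN k₁ k₂ + r 0) + (gammaNNN k₁ k₂ + r 1) = 2 * gammaNNN k₁ k₂ := hb0
  rw [hb0', hρ0] at e
  have := Jd_pos hk₁ hk₂ (d1_lt_2gam hk₁ hk₂)
  linarith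

/-- strict decay of the bonds -/
lemma claimD {r : ℕ → ℝ} (hr₂ : Memℓp r 2) (hmin : IsMin k₁ k₂ r) (m j : ℕ) (hmj : m < j) :
    bondB k₁ k₂ r j < bondB k₁ k₂ r m := by
  by_contra hge
  push_neg at hge
  by_cases hall : ∀ i, m ≤ i → bondB k₁ k₂ r i = 2 * gammaNNN k₁ k₂
  · exact claimN hk₁ hk₂ hr₂ hmin m hall
  push_neg at hall
  obtain ⟨i₀, hi₀m, hi₀⟩ := hall
  have hc : 2 * gammaNNN k₁ k₂ < bondB k₁ k₂ r i₀ :=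
    lt_of_le_of_ne (bond_ge hk₁ hk₂ hr₂ hmin i₀) (Ne.symm hi₀)
  have hev : ∀ᶠ i in atTop, bondB k₁ k₂ r i < bondB k₁ k₂ r i₀ :=
    (bond_tendsto hk₁ hk₂ hr₂).eventually (gt_mem_nhds hc)
  obtain ⟨K, hK⟩ := Filter.eventually_atTop.mp hev
  set K₀ := max K (max j i₀) with hK₀
  have hne : (Finset.Icc m K₀).Nonempty := by
    refine ⟨m, Finset.mem_Icc.mpr ⟨le_refl m, ?_⟩⟩
    have : j ≤ K₀ := le_trans (le_max_left j i₀) (le_max_right K _)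
    omega
  obtain ⟨k, hkmem, hkmax⟩ := Finset.exists_max_image (Finset.Icc m K₀) (bondB k₁ k₂ r) hne
  rw [Finset.mem_Icc] at hkmem
  have hi₀K : i₀ ∈ Finset.Icc m K₀ := by
    rw [Finset.mem_Icc]
    exact ⟨hi₀m, le_trans (le_max_right j i₀) (le_max_right K _)⟩
  have hkc : 2 * gammaNNN k₁ k₂ < bondB k₁ k₂ r k :=
    lt_of_lt_of_le hc (hkmax i₀ hi₀K)
  have hglobal : ∀ i, m ≤ i → bondB k₁ k₂ r i ≤ bondB k₁ k₂ r k := by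
    intro i hi
    rcases le_or_gt i K₀ with h | h
    · exact hkmax i (Finset.mem_Icc.mpr ⟨hi, h⟩)
    · have hiK : K ≤ i := le_trans (le_max_left _ _) (le_of_lt h)
      exact le_trans (le_of_lt (hK i hiK)) (hkmax i₀ hi₀K)
  rcases Nat.eq_or_lt_of_le hkmem.1 with hkm | hkm
  · -- the max is at `m`; then `j` is also a max since `b j ≥ b m`
    have hbjk : bondB k₁ k₂ r j = bondB k₁ k₂ r k := by
      have h1 : bondB k₁ k₂ r j ≤ bondB k₁ k₂ r k := hglobal j (le_of_lt hmj)
      have h2 : bondB k₁ k₂ r k ≤ bondB k₁ k₂ r j := by rw [← hkm]; exact hge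
      linarith
    obtain ⟨j', hj'⟩ : ∃ j', j = j' + 1 := ⟨j - 1, by omega⟩
    apply claimM hk₁ hk₂ hr₂ hmin j'
    · rw [← hj']
      rw [hbjk]
      exact hglobal j' (by omega)
    · rw [← hj', hbjk, show j' + 2 = j + 1 from by omega]
      exact hglobal (j+1) (by omega)
    · rw [← hj', hbjk]
      exact hkc
  · -- the max is interior
    obtain ⟨k', hk'⟩ : ∃ k', k = k' + 1 := ⟨k - 1, by omega⟩
    apply claimM hk₁ hk₂ hr₂ hmin k'
    · rw [← hk']
      exact hglobal k' (by omega)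
    · rw [← hk', show k' + 2 = k + 1 from by omega]
      exact hglobal (k+1) (by omega)
    · rw [← hk']
      exact hkc

/-- Claim (1): monotonicity. -/
lemma r_mono {r : ℕ → ℝ} (hr₂ : Memℓp r 2) (hmin : IsMin k₁ k₂ r) (i : ℕ) :
    r (i+1) ≤ r i := by
  by_contra hlt
  push_neg at hlt
  have hmono := Jd_strictMonoOn hk₁ hk₂ (k₁ := k₁)
  cases i with
  | zero =>
    have e0 := EL0 hk₁ hk₂ hr₂ hmin
    have e1 := ELmid hk₁ hk₂ hr₂ hmin 0
    have hb1pos : 0 < Jd k₁ k₂ ((gammaNNN k₁ k₂ + r 1) + (gammaNNN k₁ k₂ + r 2)) := by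
      apply Jd_pos hk₁ hk₂
      have := bond_ge hk₁ hk₂ hr₂ hmin 1
      have := d1_lt_2gam hk₁ hk₂
      have hbb : bondB k₁ k₂ r 1 = (gammaNNN k₁ k₂ + r 1) + (gammaNNN k₁ k₂ + r 2) := rfl
      linarith [bond_ge hk₁ hk₂ hr₂ hmin 1]
    have hJlt : Jd k₁ k₂ (gammaNNN k₁ k₂ + r 0) < Jd k₁ k₂ (gammaNNN k₁ k₂ + r 1) :=
      hmono (rho_mem_Ioc hk₁ hk₂ hr₂ hmin 0) (rho_mem_Ioc hk₁ hk₂ hr₂ hmin 1)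
        (by linarith)
    linarith
  | succ n =>
    have e1 := ELmid hk₁ hk₂ hr₂ hmin n
    have e2 := ELmid hk₁ hk₂ hr₂ hmin (n+1)
    have hD := claimD hk₁ hk₂ hr₂ hmin n (n+2) (by omega)
    have hanti := Jd_strictAntiOn hk₁ hk₂ (k₁ := k₁)
    have hJb : Jd k₁ k₂ (bondB k₁ k₂ r n) < Jd k₁ k₂ (bondB k₁ k₂ r (n+2)) :=
      hanti (bond_mem_Ici hk₁ hk₂ hr₂ hmin (n+2)) (bond_mem_Ici hk₁ hk₂ hr₂ hmin n) hD
    have hb0 : bondB k₁ k₂ r n = (gammaNNN k₁ k₂ + r n) + (gammaNNN k₁ k₂ + r (n+1)) := rfl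
    have hb1 : bondB k₁ k₂ r (n+1) = (gammaNNN k₁ k₂ + r (n+1)) + (gammaNNN k₁ k₂ + r (n+2)) := rfl
    have hb2 : bondB k₁ k₂ r (n+2) = (gammaNNN k₁ k₂ + r (n+2)) + (gammaNNN k₁ k₂ + r (n+3)) := rfl
    have hJlt : Jd k₁ k₂ (gammaNNN k₁ k₂ + r (n+1)) < Jd k₁ k₂ (gammaNNN k₁ k₂ + r (n+2)) :=
      hmono (rho_mem_Ioc hk₁ hk₂ hr₂ hmin (n+1)) (rho_mem_Ioc hk₁ hk₂ hr₂ hmin (n+2))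
        (by linarith)
    rw [← hb0, ← hb1] at e1
    have e2' : Jd k₁ k₂ (gammaNNN k₁ k₂ + r (n+2)) + Jd k₁ k₂ (bondB k₁ k₂ r (n+1))
        + Jd k₁ k₂ (bondB k₁ k₂ r (n+2)) = 0 := by
      have := e2
      rw [show (gammaNNN k₁ k₂ + r (n+1)) + (gammaNNN k₁ k₂ + r (n+1+1)) = bondB k₁ k₂ r (n+1)
        from rfl, show (gammaNNN k₁ k₂ + r (n+1+1)) + (gammaNNN k₁ k₂ + r (n+1+2))
        = bondB k₁ k₂ r (n+2) from rfl] at this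
      exact this
    linarith

end Minimizer

end BL

/-- every minimizer `r ∈ ℓ²(ℕ)` of `B_γ` (over sequences tending to `0`)
is a nonincreasing nonnegative sequence with `z_c² < γ + r_i ≤ δ₁` for all `i`.
(Here `r i` plays the role of `r_{i+1}` of the paper.) -/
theorem boundary_layer_monotone (k₁ k₂ : ℝ) (hk₁ : 0 < k₁) (hk₂ : 0 < k₂)
    (r : ℕ → ℝ) (hr₂ : Memℓp r 2)
    (hmin : Bgam k₁ k₂ r = sInf {y : EReal | ∃ s : ℕ → ℝ,
      Filter.Tendsto s Filter.atTop (nhds 0) ∧ y = Bgam k₁ k₂ s}) :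
    ∀ i : ℕ, r (i + 1) ≤ r i ∧ 0 ≤ r i ∧
      zc2 k₁ k₂ < gammaNNN k₁ k₂ + r i ∧ gammaNNN k₁ k₂ + r i ≤ delta1 k₁ k₂ := by
  intro i
  have hmin' : BL.IsMin k₁ k₂ r := hmin
  refine ⟨BL.r_mono hk₁ hk₂ hr₂ hmin' i, ?_, ?_, BL.rho_le_d1 hk₁ hk₂ hr₂ hmin' i⟩
  · have := BL.rho_ge_gam hk₁ hk₂ hr₂ hmin' i
    linarith
  · have h := BL.rho_gt_half_zs hk₁ hk₂ hr₂ hmin' i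
    have he : zc2 k₁ k₂ = BL.zs k₁ k₂ / 2 := by
      unfold zc2 BL.zs
      ring
    rw [he]
    exact h
end
end
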